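/- arXiv:2109.06584 — 5 statements merged into one kernel-verified Lean document; each statement's English description precedes it below -/
import Mathlib

section
/- Characterization of unary unbiased variation operators: Let D be a probability distribution on [0..n] and let V_D be the unary variation operator which, for each x ∈ {0,1}^n, generates V_D(x) by first sampling a number k from D and then flipping k bits of x chosen uniformly at random (a uniformly random k-element subset of positions). Then V_D is a unary unbiased variation operator. Conversely, for every unary unbiased variation operator V on {0,1}^n there exists a probability distribution D_V on [0..n] such that V = V_{D_V}. -/
/-- A unary variation operator `V` (assigning to each bit string a distribution on
bit strings) is *unbiased* if it is invariant under XOR with any fixed string and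
under permutations of the bit positions. -/
def IsUnbiased {n : ℕ} (V : (Fin n → Bool) → PMF (Fin n → Bool)) : Prop :=
  (∀ x z y : Fin n → Bool,
      V x y = V (fun i => xor (x i) (z i)) (fun i => xor (y i) (z i))) ∧
  (∀ (x : Fin n → Bool) (σ : Equiv.Perm (Fin n)) (y : Fin n → Bool),
      V x y = V (x ∘ σ) (y ∘ σ))

/-- Flip the bits of `x` at the positions in the set `A`. -/
def flipSet {n : ℕ} (x : Fin n → Bool) (A : Finset (Fin n)) : Fin n → Bool :=
  fun i => if i ∈ A then !(x i) else x i

/-- The unary variation operator `V_D` associated with a distribution `D` on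
`[0..n]`: on input `x`, sample `k` from `D`, then flip the bits of `x` in a
uniformly random `k`-element set of positions. -/
noncomputable def VD {n : ℕ} (D : PMF (Fin (n + 1))) :
    (Fin n → Bool) → PMF (Fin n → Bool) :=
  fun x => D.bind fun k =>
    (PMF.uniformOfFinset ((Finset.univ : Finset (Fin n)).powersetCard (k : ℕ))
      (Finset.powersetCard_nonempty.mpr (by
        simpa [Finset.card_univ] using Fin.is_le k))).map (flipSet x)

namespace UnbiasedAux

variable {n : ℕ}

/-- The set of positions where `x` and `y` differ. -/
def diff (x y : Fin n → Bool) : Finset (Fin n) :=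
  Finset.univ.filter (fun i => x i ≠ y i)

lemma diff_card_le (x y : Fin n → Bool) : (diff x y).card ≤ n := by
  simpa [diff] using Finset.card_filter_le Finset.univ (fun i => x i ≠ y i)

lemma flipSet_eq_iff (x y : Fin n → Bool) (A : Finset (Fin n)) :
    flipSet x A = y ↔ A = diff x y := by
  constructor
  · rintro rfl
    ext i
    simp only [diff, Finset.mem_filter, Finset.mem_univ, true_and, flipSet]
    by_cases h : i ∈ A <;> simp [h]
  · rintro rfl
    funext i
    simp only [flipSet, diff, Finset.mem_filter, Finset.mem_univ, true_and]
    by_cases h : x i = y i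
    · simp [h]
    · rw [if_pos h]
      revert h
      cases x i <;> cases y i <;> simp
  
lemma VD_apply (D : PMF (Fin (n + 1))) (x y : Fin n → Bool) :
    VD D x y = D ⟨(diff x y).card, Nat.lt_succ_of_le (diff_card_le x y)⟩ *
      ((n.choose (diff x y).card : ENNReal))⁻¹ := by
  rw [VD, PMF.bind_apply]
  rw [tsum_eq_single (⟨(diff x y).card, Nat.lt_succ_of_le (diff_card_le x y)⟩ : Fin (n + 1))]
  · congr 1
    rw [PMF.map_apply]
    rw [tsum_eq_single (diff x y)]
    · rw [if_pos ((flipSet_eq_iff x y (diff x y)).mpr rfl).symm, PMF.uniformOfFinset_apply,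
        if_pos (Finset.mem_powersetCard_univ.mpr rfl), Finset.card_powersetCard,
        Finset.card_univ, Fintype.card_fin]
    · intro A hA
      rw [if_neg]
      intro h
      exact hA ((flipSet_eq_iff x y A).mp h.symm)
  · intro k hk
    rw [PMF.map_apply]
    apply mul_eq_zero_of_right
    rw [ENNReal.tsum_eq_zero]
    intro A
    by_cases h : y = flipSet x A
    · rw [if_pos h, PMF.uniformOfFinset_apply, if_neg]
      intro hm
      apply hk
      have hA : A = diff x y := (flipSet_eq_iff x y A).mp h.symm
      have : A.card = (k : ℕ) := Finset.mem_powersetCard_univ.mp hm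
      apply Fin.ext
      simp [← hA, this]
    · rw [if_neg h]

lemma VD_apply' (D : PMF (Fin (n + 1))) (x y : Fin n → Bool) (d : ℕ)
    (hd : (diff x y).card = d) (hdn : d ≤ n) :
    VD D x y = D ⟨d, Nat.lt_succ_of_le hdn⟩ * ((n.choose d : ENNReal))⁻¹ := by
  subst hd
  exact VD_apply D x y

lemma diff_xor (x z y : Fin n → Bool) :
    diff (fun i => xor (x i) (z i)) (fun i => xor (y i) (z i)) = diff x y := by
  ext i
  simp only [diff, Finset.mem_filter, Finset.mem_univ, true_and]
  cases x i <;> cases y i <;> cases z i <;> simp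

lemma diff_comp (x y : Fin n → Bool) (σ : Equiv.Perm (Fin n)) :
    diff (x ∘ σ) (y ∘ σ) = (diff x y).map σ.symm.toEmbedding := by
  ext i
  simp [diff, Finset.mem_map_equiv, Function.comp]

/-- An unbiased operator evaluated anywhere equals its value at the all-zero string. -/
lemma unbiased_shift {V : (Fin n → Bool) → PMF (Fin n → Bool)} (hV : IsUnbiased V)
    (x y : Fin n → Bool) :
    V x y = V (fun _ => false) (fun i => xor (x i) (y i)) := by
  have h := hV.1 x x y
  have h1 : (fun i => xor (x i) (x i)) = (fun _ : Fin n => false) := by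
    funext i; cases x i <;> rfl
  have h2 : (fun i => xor (y i) (x i)) = (fun i => xor (x i) (y i)) := by
    funext i; cases x i <;> cases y i <;> rfl
  rw [h1, h2] at h
  exact h

/-- For an unbiased operator, the value at the all-zero string depends only on the
Hamming weight of the target. -/
lemma unbiased_weight {V : (Fin n → Bool) → PMF (Fin n → Bool)} (hV : IsUnbiased V)
    (y y' : Fin n → Bool)
    (h : (Finset.univ.filter (fun i => y i = true)).card
        = (Finset.univ.filter (fun i => y' i = true)).card) :
    V (fun _ => false) y = V (fun _ => false) y' := by
  set s : Finset (Fin n) := Finset.univ.filter (fun i => y i = true) with hs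
  set t : Finset (Fin n) := Finset.univ.filter (fun i => y' i = true) with ht
  have hcard : t.card = s.card := h.symm
  have hcardc : tᶜ.card = sᶜ.card := by
    rw [Finset.card_compl, Finset.card_compl, hcard]
  have e1 : {i // i ∈ t} ≃ {i // i ∈ s} := Finset.equivOfCardEq hcard
  have e2 : {i // ¬ i ∈ t} ≃ {i // ¬ i ∈ s} :=
    (Equiv.subtypeEquivRight (fun i => (Finset.mem_compl).symm)).trans
      ((Finset.equivOfCardEq hcardc).trans
        (Equiv.subtypeEquivRight (fun i => Finset.mem_compl)))
  let σ : Equiv.Perm (Fin n) := Equiv.subtypeCongr e1 e2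
  have hσ : ∀ i, σ i = if hi : i ∈ t then (e1 ⟨i, hi⟩ : Fin n) else (e2 ⟨i, hi⟩ : Fin n) := by
    intro i
    by_cases hi : i ∈ t
    · rw [dif_pos hi]
      simp [σ, Equiv.subtypeCongr, Equiv.sumCompl_symm_apply_of_pos hi]
    · rw [dif_neg hi]
      simp [σ, Equiv.subtypeCongr, Equiv.sumCompl_symm_apply_of_neg hi]
  have hyy' : y ∘ σ = y' := by
    funext i
    by_cases hi : i ∈ t
    · have h1 : σ i ∈ s := by
        rw [hσ i, dif_pos hi]; exact (e1 ⟨i, hi⟩).2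
      have h2 : y (σ i) = true := by
        have := h1; rw [hs, Finset.mem_filter] at this; exact this.2
      have h3 : y' i = true := by
        have := hi; rw [ht, Finset.mem_filter] at this; exact this.2
      simp [Function.comp, h2, h3]
    · have h1 : σ i ∉ s := by
        rw [hσ i, dif_neg hi]; exact (e2 ⟨i, hi⟩).2
      have h2 : y (σ i) = false := by
        have : ¬ y (σ i) = true := by
          intro hc
          exact h1 (by rw [hs, Finset.mem_filter]; exact ⟨Finset.mem_univ _, hc⟩)
        simpa using this
      have h3 : y' i = false := by
        have : ¬ y' i = true := by
          intro hc
          exact hi (by rw [ht, Finset.mem_filter]; exact ⟨Finset.mem_univ _, hc⟩)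
        simpa using this
      simp [Function.comp, h2, h3]
  have h5 := hV.2 (fun _ => false) σ y
  rw [h5, hyy']
  rfl

/-- The number of bit strings of Hamming weight `k` is `n.choose k`. -/
lemma card_weight_fiber (k : ℕ) :
    (Finset.univ.filter (fun y : Fin n → Bool =>
        (Finset.univ.filter (fun i => y i = true)).card = k)).card = n.choose k := by
  have hrhs : n.choose k = ((Finset.univ : Finset (Fin n)).powersetCard k).card := by
    rw [Finset.card_powersetCard, Finset.card_univ, Fintype.card_fin]
  rw [hrhs]
  refine Finset.card_bij' (fun y _ => Finset.univ.filter (fun i => y i = true))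
    (fun A _ => fun i => decide (i ∈ A)) ?_ ?_ ?_ ?_
  · intro y hy
    rw [Finset.mem_powersetCard_univ]
    exact (Finset.mem_filter.mp hy).2
  · intro A hA
    simp only [Finset.mem_filter, Finset.mem_univ, true_and]
    have hAk : A.card = k := Finset.mem_powersetCard_univ.mp hA
    rw [← hAk]
    congr 1
    ext i
    simp
  · intro y hy
    funext i
    simp
  · intro A hA
    ext i
    simp

end UnbiasedAux

open UnbiasedAux in
/-- **Characterization of unary unbiased variation operators.**
For every distribution `D` on `[0..n]`, the operator `V_D` (sample `k ∼ D`, flip a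
uniformly random `k`-element set of bit positions) is unary unbiased; conversely,
every unary unbiased variation operator `V` on `{0,1}^n` is of the form `V_{D}`
for some distribution `D` on `[0..n]`. -/
theorem unary_unbiased_characterization (n : ℕ) :
    (∀ D : PMF (Fin (n + 1)), IsUnbiased (VD D)) ∧
    (∀ V : (Fin n → Bool) → PMF (Fin n → Bool), IsUnbiased V →
      ∃ D : PMF (Fin (n + 1)), V = VD D) := by
  constructor
  · intro D
    constructor
    · intro x z y
      rw [VD_apply' D x y _ rfl (diff_card_le x y),
        VD_apply' D _ _ _ (by rw [diff_xor]) (diff_card_le x y)]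
    · intro x σ y
      rw [VD_apply' D x y _ rfl (diff_card_le x y),
        VD_apply' D _ _ _ (by rw [diff_comp, Finset.card_map]) (diff_card_le x y)]
  · intro V hV
    -- weight function into `Fin (n+1)`
    have wle : ∀ y : Fin n → Bool, (Finset.univ.filter (fun i => y i = true)).card ≤ n := by
      intro y
      simpa using Finset.card_filter_le Finset.univ (fun i => y i = true)
    set w : (Fin n → Bool) → Fin (n + 1) :=
      fun y => ⟨(Finset.univ.filter (fun i => y i = true)).card, Nat.lt_succ_of_le (wle y)⟩
      with hw
    refine ⟨(V (fun _ => false)).map w, ?_⟩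
    ext x y
    rw [VD_apply]
    -- the difference set of `x` and `y` is the weight set of their xor
    set u : Fin n → Bool := fun i => xor (x i) (y i) with hu
    have hdiff : diff x y = Finset.univ.filter (fun i => u i = true) := by
      ext i
      simp only [diff, Finset.mem_filter, Finset.mem_univ, true_and, hu]
      cases x i <;> cases y i <;> simp
    have hwu : (w u : ℕ) = (diff x y).card := by
      rw [hw, hdiff]
    -- compute the pushforward distribution at the relevant weight
    have hD : ((V (fun _ => false)).map w)
        ⟨(diff x y).card, Nat.lt_succ_of_le (diff_card_le x y)⟩
        = (n.choose (diff x y).card : ENNReal) * V (fun _ => false) u := by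
      rw [PMF.map_apply, tsum_fintype]
      have : ∀ y' : Fin n → Bool,
          (@ite ENNReal
            ((⟨(diff x y).card, Nat.lt_succ_of_le (diff_card_le x y)⟩ : Fin (n+1)) = w y')
            (Classical.propDecidable _) (V (fun _ => false) y') 0)
          = (if (Finset.univ.filter (fun i => y' i = true)).card = (diff x y).card
            then V (fun _ => false) u else 0) := by
        intro y'
        by_cases hc : (Finset.univ.filter (fun i => y' i = true)).card = (diff x y).card
        · rw [if_pos hc, if_pos]
          · exact unbiased_weight hV y' u (by rw [← hwu] at hc; exact hc)
          · apply Fin.ext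
            simp [hw, hc]
        · rw [if_neg hc, if_neg]
          intro hc'
          apply hc
          have := congrArg (Fin.val) hc'
          simp [hw] at this
          exact this.symm
      refine Eq.trans (Finset.sum_congr rfl (fun y' _ => this y')) ?_
      rw [← Finset.sum_filter, Finset.sum_const, card_weight_fiber, nsmul_eq_mul]
    rw [hD]
    have hchoose : (n.choose (diff x y).card : ENNReal) ≠ 0 :=
      Nat.cast_ne_zero.mpr (Nat.choose_pos (diff_card_le x y)).ne'
    have hchoose' : (n.choose (diff x y).card : ENNReal) ≠ ⊤ := by
      simp
    rw [mul_right_comm, ENNReal.mul_inv_cancel hchoose hchoose', one_mul]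
    exact unbiased_shift hV x y
end

section
/- Let n be an even positive integer, m ∈ [0..n/2−1] an integer, and δ ∈ [0,2]. Let x be a random bit string in {0,1}^n such that x_i = 1 deterministically for all i ∈ [1..2m+2] and such that the bits x_i, i ∈ [2m+3..n], are independent and uniformly distributed in {0,1}. Then E[HLB_δ(x)] ≤ 2m + 4. -/
/-- Number of leading ones among positions `0, …, n-1` of `x : ℕ → Bool`. -/
def LOn (n : ℕ) (x : ℕ → Bool) : ℕ :=
  ((Finset.range n).filter (fun r => ∀ s ≤ r, x s = true)).card

/-- The DeceivingLeadingBlocks function (0-based encoding of bit positions):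
blocks are `(x (2ℓ), x (2ℓ+1))`; if `x` is not the all-ones string and `m` is the
index of the first non-`11` block, then the value is `2m+1` for a `00` critical
block, `2m` for a `01`/`10` critical block, and `n` for the all-ones string. -/
def DLBn (n : ℕ) (x : ℕ → Bool) : ℕ :=
  if ∀ i < n, x i = true then n
  else if x (2 * (LOn n x / 2)) = false ∧ x (2 * (LOn n x / 2) + 1) = false
    then 2 * (LOn n x / 2) + 1
    else 2 * (LOn n x / 2)

/-- The Honest Leading Blocks function with parameter `δ`:
`HLB_δ(x) = 2m` if `DLB(x) = 2m+1`, `HLB_δ(x) = 2m+2-δ` if `DLB(x) = 2m` (for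
`m ∈ [0..n/2-1]`), and `HLB_δ(x) = n` if `DLB(x) = n`. -/
noncomputable def HLBn (n : ℕ) (δ : ℝ) (x : ℕ → Bool) : ℝ :=
  if ∀ i < n, x i = true then (n : ℝ)
  else if x (2 * (LOn n x / 2)) = false ∧ x (2 * (LOn n x / 2) + 1) = false
    then (2 * (LOn n x / 2) : ℕ)
    else (2 * (LOn n x / 2) : ℕ) + 2 - δ

/-- Extend a bit string `x : Fin n → Bool` to all of `ℕ` (by `false` outside). -/
def toNatFun {n : ℕ} (x : Fin n → Bool) : ℕ → Bool :=
  fun i => if h : i < n then x ⟨i, h⟩ else false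

/-- The LeadingOnes value of a bit string of length `n`. -/
def LO {n : ℕ} (x : Fin n → Bool) : ℕ := LOn n (toNatFun x)

/-- The DeceivingLeadingBlocks value of a bit string of length `n`. -/
def DLB {n : ℕ} (x : Fin n → Bool) : ℕ := DLBn n (toNatFun x)

/-- The Honest Leading Blocks value (parameter `δ`) of a bit string of length `n`. -/
noncomputable def HLB {n : ℕ} (δ : ℝ) (x : Fin n → Bool) : ℝ := HLBn n δ (toNatFun x)

lemma LOn_eq (n a : ℕ) (y : ℕ → Bool) (ha : a < n) (h1 : ∀ i < a, y i = true)
    (h2 : y a = false) : LOn n y = a := by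
  have : ((Finset.range n).filter (fun r => ∀ s ≤ r, y s = true)) = Finset.range a := by
    ext r
    simp only [Finset.mem_filter, Finset.mem_range]
    constructor
    · rintro ⟨hr, hall⟩
      by_contra hra
      push_neg at hra
      have := hall a hra
      simp [h2] at this
    · intro hr
      exact ⟨hr.trans ha, fun s hs => h1 s (lt_of_le_of_lt hs hr)⟩
  rw [LOn, this, Finset.card_range]

lemma HLBn_false (n a : ℕ) (δ : ℝ) (y : ℕ → Bool) (ha : a < n) (hae : Even a)
    (h1 : ∀ i < a, y i = true) (h2 : y a = false) :
    HLBn n δ y = if y (a + 1) = false then (a : ℝ) else (a : ℝ) + 2 - δ := by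
  have hnot : ¬ ∀ i < n, y i = true := by
    intro h
    have := h a ha
    simp [h2] at this
  have hL : LOn n y = a := LOn_eq n a y ha h1 h2
  have h2a : 2 * (LOn n y / 2) = a := by
    rw [hL]; exact Nat.two_mul_div_two_of_even hae
  rw [HLBn, if_neg hnot, h2a]
  by_cases hy : y (a + 1) = false
  · rw [if_pos ⟨h2, hy⟩, if_pos hy]
  · rw [if_neg (by simp [hy]), if_neg hy]

lemma HLBn_true_false (n a : ℕ) (δ : ℝ) (y : ℕ → Bool) (ha : a + 1 < n) (hae : Even a)
    (h1 : ∀ i < a + 1, y i = true) (h2 : y (a + 1) = false) :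
    HLBn n δ y = (a : ℝ) + 2 - δ := by
  have hnot : ¬ ∀ i < n, y i = true := by
    intro h
    have := h (a + 1) ha
    simp [h2] at this
  have hL : LOn n y = a + 1 := LOn_eq n (a + 1) y ha h1 h2
  have h2a : 2 * (LOn n y / 2) = a := by
    rw [hL]
    obtain ⟨b, rfl⟩ := hae
    omega
  rw [HLBn, if_neg hnot, h2a, if_neg (by simp [h1 a (by omega)])]

lemma HLBn_all_true (n : ℕ) (δ : ℝ) (y : ℕ → Bool) (h : ∀ i < n, y i = true) :
    HLBn n δ y = n := by rw [HLBn, if_pos h]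

lemma sum_half {n : ℕ} (i : Fin n) (b : Bool) (g : (Fin n → Bool) → ℝ)
    (hg : ∀ u c, g (Function.update u i c) = g u)
    (s : Finset (Fin n → Bool))
    (hs : ∀ u c, Function.update u i c ∈ s ↔ u ∈ s) :
    ∑ u ∈ s, g u = 2 * ∑ u ∈ s.filter (fun u => u i = b), g u := by
  rw [← Finset.sum_filter_add_sum_filter_not s (fun u => u i = b), two_mul]
  congr 1
  apply Finset.sum_nbij' (fun u => Function.update u i b)
    (fun u => Function.update u i (!b))
  · intro u hu
    simp only [Finset.mem_filter] at hu ⊢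
    exact ⟨(hs u b).2 hu.1, by simp⟩
  · intro u hu
    simp only [Finset.mem_filter] at hu ⊢
    refine ⟨(hs u (!b)).2 hu.1, ?_⟩
    simp only [Function.update_self]
    cases b <;> simp
  · intro u hu
    simp only [Finset.mem_filter] at hu
    have h1 : u i = !b := by
      have := hu.2
      cases b <;> cases h : u i <;> simp_all
    rw [Function.update_idem, ← h1, Function.update_eq_self]
  · intro u hu
    simp only [Finset.mem_filter] at hu
    rw [Function.update_idem, ← hu.2, Function.update_eq_self]
  · intro u hu
    exact (hg u b).symm

lemma sum_quarter {n : ℕ} (i0 i1 : Fin n) (hne : i0 ≠ i1) (b0 b1 : Bool)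
    (g : (Fin n → Bool) → ℝ)
    (hg0 : ∀ u c, g (Function.update u i0 c) = g u)
    (hg1 : ∀ u c, g (Function.update u i1 c) = g u) :
    ∑ u : Fin n → Bool, g u
      = 4 * ∑ u ∈ Finset.univ.filter (fun u => u i0 = b0 ∧ u i1 = b1), g u := by
  rw [sum_half i0 b0 g hg0 Finset.univ (by simp),
      sum_half i1 b1 g hg1 (Finset.univ.filter (fun u => u i0 = b0))
        (by
          intro u c
          simp only [Finset.mem_filter, Finset.mem_univ, true_and]
          rw [Function.update_of_ne hne]),
      Finset.filter_filter]
  ring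

def fixf {n : ℕ} (a : ℕ) (u : Fin n → Bool) : Fin n → Bool :=
  fun i => if (i : ℕ) < a then true else u i

lemma fixf_update {n : ℕ} (a : ℕ) (u : Fin n → Bool) (j : Fin n) (hj : (j : ℕ) < a)
    (c : Bool) : fixf a (Function.update u j c) = fixf a u := by
  funext i
  unfold fixf
  by_cases h : (i : ℕ) < a
  · simp [h]
  · rw [if_neg h, if_neg h, Function.update_of_ne]
    intro he
    rw [he] at h
    exact h hj

lemma toNatFun_fixf_lt {n a : ℕ} (u : Fin n → Bool) (i : ℕ) (hi : i < a) (hin : i < n) :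
    toNatFun (fixf a u) i = true := by
  unfold toNatFun fixf
  rw [dif_pos hin]
  simp [hi]

lemma toNatFun_fixf_ge {n a : ℕ} (u : Fin n → Bool) (i : ℕ) (hi : ¬ i < a) (hin : i < n) :
    toNatFun (fixf a u) i = u ⟨i, hin⟩ := by
  unfold toNatFun fixf
  rw [dif_pos hin]
  simp [hi]

lemma main_bound {n : ℕ} (δ : ℝ) (hδ0 : 0 ≤ δ) :
    ∀ k a, a + 2 * k = n → Even a →
    ∑ u : Fin n → Bool, HLBn n δ (toNatFun (fixf a u))
      ≤ 2 ^ n * ((a : ℝ) + 2) - 2 ^ (a + 1) := by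
  intro k
  induction k with
  | zero =>
    intro a han hae
    simp only [Nat.mul_zero, Nat.add_zero] at han
    subst han
    have hall : ∀ u : Fin a → Bool, HLBn a δ (toNatFun (fixf a u)) = (a : ℝ) := by
      intro u
      apply HLBn_all_true
      intro i hi
      exact toNatFun_fixf_lt u i hi hi
    rw [Finset.sum_congr rfl (fun u _ => hall u), Finset.sum_const, Finset.card_univ,
      Fintype.card_fun]
    simp only [Fintype.card_bool, Fintype.card_fin, nsmul_eq_mul]
    push_cast
    have : (2 : ℝ) ^ (a + 1) = 2 ^ a * 2 := by ring
    nlinarith [pow_pos (by norm_num : (0:ℝ) < 2) a]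
  | succ k ih =>
    intro a han hae
    have ha1 : a + 1 < n := by omega
    have ha0 : a < n := by omega
    set i0 : Fin n := ⟨a, ha0⟩
    set i1 : Fin n := ⟨a + 1, ha1⟩
    have hne : i0 ≠ i1 := by
      intro h
      have := congrArg (fun x : Fin n => (x : ℕ)) h
      simp [i0, i1] at this
    set g : (Fin n → Bool) → ℝ := fun u => HLBn n δ (toNatFun (fixf (a + 2) u)) with hg_def
    have hg0 : ∀ u c, g (Function.update u i0 c) = g u := by
      intro u c
      simp only [hg_def]
      rw [fixf_update (a + 2) u i0 (by simp [i0]) c]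
    have hg1 : ∀ u c, g (Function.update u i1 c) = g u := by
      intro u c
      simp only [hg_def]
      rw [fixf_update (a + 2) u i1 (by simp [i1]) c]
    -- pointwise decomposition
    have hpt : ∀ u : Fin n → Bool,
        HLBn n δ (toNatFun (fixf a u))
          = (if u i0 = true ∧ u i1 = true then g u else 0)
            + (if u i0 = false ∧ u i1 = false then (a : ℝ) else 0)
            + (if u i0 = true ∧ u i1 = false then ((a : ℝ) + 2 - δ) else 0)
            + (if u i0 = false ∧ u i1 = true then ((a : ℝ) + 2 - δ) else 0) := by
      intro u
      have hlt : ∀ i < a, toNatFun (fixf a u) i = true :=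
        fun i hi => toNatFun_fixf_lt u i hi (by omega)
      have hya : toNatFun (fixf a u) a = u i0 :=
        toNatFun_fixf_ge u a (by omega) ha0
      have hya1 : toNatFun (fixf a u) (a + 1) = u i1 :=
        toNatFun_fixf_ge u (a + 1) (by omega) ha1
      cases h0 : u i0 <;> cases h1 : u i1
      · -- false false
        rw [HLBn_false n a δ _ ha0 hae hlt (by rw [hya, h0])]
        simp [hya1, h1]
      · -- false true
        rw [HLBn_false n a δ _ ha0 hae hlt (by rw [hya, h0])]
        simp [hya1, h1]
      · -- true false
        rw [HLBn_true_false n a δ _ ha1 hae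
          (by
            intro i hi
            rcases Nat.lt_or_ge i a with h | h
            · exact hlt i h
            · have : i = a := by omega
              rw [this, hya, h0])
          (by rw [hya1, h1])]
        simp
      · -- true true
        have hfix : fixf a u = fixf (a + 2) u := by
          funext i
          unfold fixf
          by_cases h : (i : ℕ) < a
          · rw [if_pos h, if_pos (show (i : ℕ) < a + 2 by omega)]
          · by_cases h2 : (i : ℕ) < a + 2
            · have : (i : ℕ) = a ∨ (i : ℕ) = a + 1 := by omega
              rcases this with h3 | h3
              · have : i = i0 := Fin.ext h3
                simp [h, h2, this, h0]
              · have : i = i1 := Fin.ext h3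
                simp [h, h2, this, h1]
            · simp [h, h2]
        rw [hfix]
        simp [hg_def]
    rw [Finset.sum_congr rfl (fun u _ => hpt u)]
    rw [Finset.sum_add_distrib, Finset.sum_add_distrib, Finset.sum_add_distrib]
    rw [← Finset.sum_filter, ← Finset.sum_filter, ← Finset.sum_filter, ← Finset.sum_filter]
    -- the constant-fiber sums
    have hcard : ∀ b0 b1 : Bool, ∀ c : ℝ,
        ∑ u ∈ Finset.univ.filter (fun u : Fin n → Bool => u i0 = b0 ∧ u i1 = b1), c
          = 2 ^ n * c / 4 := by
      intro b0 b1 c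
      have h4 := sum_quarter i0 i1 hne b0 b1 (fun _ => c) (fun _ _ => rfl) (fun _ _ => rfl)
      simp only [Finset.sum_const, nsmul_eq_mul, Finset.card_univ, Fintype.card_fun,
        Fintype.card_bool, Fintype.card_fin] at h4
      rw [Finset.sum_const, nsmul_eq_mul]
      push_cast at h4 ⊢
      linarith
    rw [hcard false false (a : ℝ), hcard true false _, hcard false true _]
    -- the g-fiber sum
    have hgsum : ∑ u ∈ Finset.univ.filter (fun u : Fin n → Bool => u i0 = true ∧ u i1 = true), g u
        = (∑ u : Fin n → Bool, g u) / 4 := by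
      rw [sum_quarter i0 i1 hne true true g hg0 hg1]
      ring
    rw [hgsum]
    have hih : ∑ u : Fin n → Bool, g u ≤ 2 ^ n * ((a : ℝ) + 2 + 2) - 2 ^ (a + 2 + 1) := by
      have := ih (a + 2) (by omega) (by exact hae.add (by norm_num))
      simp only [hg_def]
      push_cast at this ⊢
      linarith
    have hP : (0 : ℝ) < 2 ^ n := pow_pos (by norm_num) n
    have hA : (2 : ℝ) ^ (a + 2 + 1) = 4 * 2 ^ (a + 1) := by ring
    have hδP : 0 ≤ 2 ^ n * δ := mul_nonneg (le_of_lt hP) hδ0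
    nlinarith [hih]

/-- **Free-rider bound.** Let `n` be even and positive, `m ∈ [0..n/2-1]`, and
`δ ∈ [0,2]`. If `x` is a random bit string whose first `2m+2` bits are all `1`
and whose remaining bits are independent and uniformly distributed (here realized
as the image of a uniformly random string `u` under fixing the first `2m+2` bits
to `1`), then `E[HLB_δ(x)] ≤ 2m + 4`. -/
theorem expected_HLB_of_random_suffix_le (n m : ℕ) (hn : 0 < n) (he : Even n)
    (hm : 2 * m + 2 ≤ n) (δ : ℝ) (hδ0 : 0 ≤ δ) (hδ2 : δ ≤ 2) :
    ∑ u : Fin n → Bool, ((PMF.uniformOfFintype (Fin n → Bool)) u).toReal *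
        HLB δ (fun i => if (i : ℕ) < 2 * m + 2 then true else u i)
      ≤ 2 * (m : ℝ) + 4 := by
  have hP : (0 : ℝ) < 2 ^ n := pow_pos (by norm_num) n
  have hpmf : ∀ u : Fin n → Bool,
      ((PMF.uniformOfFintype (Fin n → Bool)) u).toReal = ((2 : ℝ) ^ n)⁻¹ := by
    intro u
    rw [PMF.uniformOfFintype_apply, ENNReal.toReal_inv]
    norm_num [Fintype.card_fun]
  have hrw : ∑ u : Fin n → Bool, ((PMF.uniformOfFintype (Fin n → Bool)) u).toReal *
        HLB δ (fun i => if (i : ℕ) < 2 * m + 2 then true else u i)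
      = ((2 : ℝ) ^ n)⁻¹ * ∑ u : Fin n → Bool, HLBn n δ (toNatFun (fixf (2 * m + 2) u)) := by
    rw [Finset.mul_sum]
    exact Finset.sum_congr rfl (fun u _ => by rw [hpmf u]; rfl)
  rw [hrw]
  obtain ⟨t, ht⟩ := he
  have hmain := main_bound (n := n) δ hδ0 (t - (m + 1)) (2 * m + 2) (by omega) ⟨m + 1, by ring⟩
  have hA : (0 : ℝ) < 2 ^ (2 * m + 2 + 1) := pow_pos (by norm_num) _
  have hcast : ((2 * m + 2 : ℕ) : ℝ) = 2 * (m : ℝ) + 2 := by push_cast; ring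
  rw [hcast] at hmain
  have hinv : ((2 : ℝ) ^ n)⁻¹ * 2 ^ n = 1 := inv_mul_cancel₀ (ne_of_gt hP)
  have hle : ((2 : ℝ) ^ n)⁻¹ * ∑ u : Fin n → Bool, HLBn n δ (toNatFun (fixf (2 * m + 2) u))
      ≤ ((2 : ℝ) ^ n)⁻¹ * (2 ^ n * (2 * (m : ℝ) + 2 + 2) - 2 ^ (2 * m + 2 + 1)) :=
    mul_le_mul_of_nonneg_left hmain (inv_nonneg.2 (le_of_lt hP))
  have hinvA : 0 ≤ ((2 : ℝ) ^ n)⁻¹ * 2 ^ (2 * m + 2 + 1) :=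
    mul_nonneg (inv_nonneg.2 (le_of_lt hP)) (le_of_lt hA)
  nlinarith [hle, hinv, hinvA]
end

section
/- Let n be an even positive integer and m an integer with n/4 ≤ m ≤ n/2 − 1, and let δ ∈ (0,2). Let x be a random bit string in {0,1}^n such that DLB(x) = 2m almost surely (that is, x_i = 1 for i ∈ [1..2m] and exactly one of x_{2m+1}, x_{2m+2} equals 1) and such that the bits x_i, i ∈ [2m+3..n], are independent, uniformly distributed in {0,1}, and independent of (x_{2m+1}, x_{2m+2}). Let y be a random bit string generated from x via an arbitrary unary unbiased variation operator V, and set Y := (HLB_δ(y) − HLB_δ(x))·1_{DLB(y) ≥ DLB(x)}. Then E[Y] ≤ 2δ/n. -/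
lemma LOn_eq_of {n c : ℕ} {x : ℕ → Bool} (h1 : ∀ s < c, x s = true)
    (h2 : x c = false) (hc : c < n) : LOn n x = c := by
  unfold LOn
  have : (Finset.range n).filter (fun r => ∀ s ≤ r, x s = true) = Finset.range c := by
    ext r
    simp only [Finset.mem_filter, Finset.mem_range]
    constructor
    · rintro ⟨hr, hall⟩
      by_contra hcr
      push_neg at hcr
      have := hall c hcr
      rw [h2] at this; exact Bool.false_ne_true this
    · intro hr
      exact ⟨hr.trans hc, fun s hs => h1 s (lt_of_le_of_lt hs hr)⟩
  rw [this, Finset.card_range]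

lemma LOn_eq_n {n : ℕ} {x : ℕ → Bool} (h : ∀ i < n, x i = true) : LOn n x = n := by
  unfold LOn
  have : (Finset.range n).filter (fun r => ∀ s ≤ r, x s = true) = Finset.range n := by
    ext r
    simp only [Finset.mem_filter, Finset.mem_range]
    exact ⟨fun h => h.1, fun hr => ⟨hr, fun s hs => h s (lt_of_le_of_lt hs hr)⟩⟩
  rw [this, Finset.card_range]

lemma LOn_ge {n L : ℕ} {x : ℕ → Bool} (hL : L ≤ n) (h : ∀ i < L, x i = true) :
    L ≤ LOn n x := by
  unfold LOn
  calc L = (Finset.range L).card := (Finset.card_range L).symm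
  _ ≤ _ := Finset.card_le_card (by
      intro r hr
      simp only [Finset.mem_range] at hr
      simp only [Finset.mem_filter, Finset.mem_range]
      exact ⟨lt_of_lt_of_le hr hL, fun s hs => h s (lt_of_le_of_lt hs hr)⟩)

lemma LOn_le_of_false {n c : ℕ} {x : ℕ → Bool} (h : x c = false) : LOn n x ≤ c := by
  unfold LOn
  calc ((Finset.range n).filter (fun r => ∀ s ≤ r, x s = true)).card
      ≤ (Finset.range c).card := Finset.card_le_card (by
        intro r hr
        simp only [Finset.mem_filter, Finset.mem_range] at hr
        simp only [Finset.mem_range]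
        by_contra hcr
        push_neg at hcr
        have := hr.2 c hcr
        rw [h] at this; exact Bool.false_ne_true this)
  _ = c := Finset.card_range c

section shapes
variable {n L : ℕ} {x : ℕ → Bool} {δ : ℝ}

lemma not_allones_of_false {c : ℕ} (h : x c = false) (hc : c < n) :
    ¬ ∀ i < n, x i = true := by
  intro hall
  have := hall c hc
  rw [h] at this; exact Bool.false_ne_true this

/-- mixed critical block at even position L : DLB = L, HLB = L + 2 - δ -/
lemma DLBn_HLBn_mixed (hL : Even L) (hLn : L + 2 ≤ n)
    (hones : ∀ i < L, x i = true) (hmix : x L = !x (L + 1)) :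
    DLBn n x = L ∧ HLBn n δ x = (L : ℝ) + 2 - δ := by
  obtain ⟨a, ha⟩ := hL
  have hLa : L = 2 * a := by omega
  cases hb : x L
  · -- x L = false, x (L+1) = true
    have hlon : LOn n x = L := LOn_eq_of hones hb (by omega)
    have hna : ¬ ∀ i < n, x i = true := not_allones_of_false hb (by omega)
    have hq : 2 * (LOn n x / 2) = L := by rw [hlon]; omega
    have htest : ¬ (x (2 * (LOn n x / 2)) = false ∧ x (2 * (LOn n x / 2) + 1) = false) := by
      rw [hq]
      rintro ⟨-, h2⟩
      rw [hb] at hmix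
      simp only [Bool.false_eq, Bool.not_eq_false'] at hmix
      rw [hmix] at h2
      simp at h2
    constructor
    · unfold DLBn; rw [if_neg hna, if_neg htest, hq]
    · unfold HLBn; rw [if_neg hna, if_neg htest, hq]
  · -- x L = true, x (L+1) = false
    have hb1 : x (L + 1) = false := by
      rw [hb] at hmix
      cases h : x (L + 1)
      · rfl
      · rw [h] at hmix; simp at hmix
    have hlon : LOn n x = L + 1 := by
      apply LOn_eq_of _ hb1 (by omega)
      intro s hs
      rcases Nat.lt_or_ge s L with h | h
      · exact hones s h
      · have : s = L := by omega
        rw [this, hb]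
    have hna : ¬ ∀ i < n, x i = true := not_allones_of_false hb1 (by omega)
    have hq : 2 * (LOn n x / 2) = L := by rw [hlon]; omega
    have htest : ¬ (x (2 * (LOn n x / 2)) = false ∧ x (2 * (LOn n x / 2) + 1) = false) := by
      rw [hq]
      rintro ⟨h1, -⟩
      rw [hb] at h1; simp at h1
    constructor
    · unfold DLBn; rw [if_neg hna, if_neg htest, hq]
    · unfold HLBn; rw [if_neg hna, if_neg htest, hq]

/-- 00 critical block at even position L : DLB = L + 1, HLB = L -/
lemma DLBn_HLBn_00 (hL : Even L) (hLn : L + 2 ≤ n)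
    (hones : ∀ i < L, x i = true) (h0 : x L = false) (h1 : x (L + 1) = false) :
    DLBn n x = L + 1 ∧ HLBn n δ x = (L : ℝ) := by
  obtain ⟨a, ha⟩ := hL
  have hlon : LOn n x = L := LOn_eq_of hones h0 (by omega)
  have hna : ¬ ∀ i < n, x i = true := not_allones_of_false h0 (by omega)
  have hq : 2 * (LOn n x / 2) = L := by rw [hlon]; omega
  have htest : x (2 * (LOn n x / 2)) = false ∧ x (2 * (LOn n x / 2) + 1) = false := by
    rw [hq]; exact ⟨h0, h1⟩
  constructor
  · unfold DLBn; rw [if_neg hna, if_pos htest, hq]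
  · unfold HLBn; rw [if_neg hna, if_pos htest, hq]

/-- first L ones (L even) : DLB ≥ L -/
lemma DLBn_ge (hL : Even L) (hLn : L ≤ n) (hones : ∀ i < L, x i = true) :
    L ≤ DLBn n x := by
  unfold DLBn
  split
  · exact hLn
  · have hlon : L ≤ LOn n x := LOn_ge hLn hones
    obtain ⟨a, ha⟩ := hL
    have : a ≤ LOn n x / 2 := by omega
    split <;> omega

/-- a false bit below 2m forces DLB < 2m -/
lemma DLBn_lt {c M : ℕ} (hc : x c = false) (hcM : c < M) (hM : M ≤ n)
    (hMe : Even M) : DLBn n x < M := by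
  obtain ⟨a, ha⟩ := hMe
  have hlon : LOn n x ≤ c := LOn_le_of_false hc
  have hna : ¬ ∀ i < n, x i = true := not_allones_of_false hc (by omega)
  unfold DLBn
  rw [if_neg hna]
  have : 2 * (LOn n x / 2) ≤ LOn n x := by omega
  split <;> omega

lemma DLBn_HLBn_allones (h : ∀ i < n, x i = true) :
    DLBn n x = n ∧ HLBn n δ x = (n : ℝ) := by
  constructor
  · unfold DLBn; rw [if_pos h]
  · unfold HLBn; rw [if_pos h]

end shapes

section flips
variable {n : ℕ}

def flipF (a : Fin n) (u : Fin n → Bool) : Fin n → Bool :=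
  Function.update u a (!u a)

lemma flipF_invol (a : Fin n) : Function.Involutive (flipF a) := by
  intro u
  funext i
  unfold flipF
  rcases eq_or_ne i a with rfl | h
  · simp [Function.update_self]
  · simp [Function.update_of_ne h]

def flipE (a : Fin n) : (Fin n → Bool) ≃ (Fin n → Bool) :=
  (flipF_invol a).toPerm _

lemma flipF_apply_self (a : Fin n) (u : Fin n → Bool) : flipF a u a = !u a := by
  simp [flipF]

lemma flipF_apply_ne (a : Fin n) {i : Fin n} (h : i ≠ a) (u : Fin n → Bool) :
    flipF a u i = u i := by
  simp [flipF, Function.update_of_ne h]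

lemma sum_flip_eq (a : Fin n) (g : (Fin n → Bool) → ℝ)
    (hg : ∀ u, g (flipF a u) = g u) :
    ∑ u : Fin n → Bool, (if u a = true then g u else 0)
      = ∑ u : Fin n → Bool, (if u a = true then 0 else g u) := by
  have := Fintype.sum_equiv (flipE a)
    (fun u => if u a = true then (0:ℝ) else g u)
    (fun u => if u a = true then g u else 0)
    (fun u => by
      show (if u a = true then (0:ℝ) else g u) = if (flipF a u) a = true then g (flipF a u) else 0
      rw [flipF_apply_self, hg]
      cases h : u a <;> simp [h])
  -- `this : ∑ u, ite (u a) 0 (g u) = ∑ u, ite (u a) (g u) 0` but with reindexing...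
  exact this.symm

lemma sum_ite_half (a : Fin n) (g : (Fin n → Bool) → ℝ)
    (hg : ∀ u, g (flipF a u) = g u) :
    ∑ u : Fin n → Bool, (if u a = true then g u else 0)
      = (∑ u : Fin n → Bool, g u) / 2 := by
  have hsplit : ∑ u : Fin n → Bool, g u
      = ∑ u : Fin n → Bool, (if u a = true then g u else 0)
        + ∑ u : Fin n → Bool, (if u a = true then 0 else g u) := by
    rw [← Finset.sum_add_distrib]
    apply Finset.sum_congr rfl
    intro u _
    cases h : u a <;> simp [h]
  rw [← sum_flip_eq a g hg] at hsplit
  linarith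

lemma sum_ite_half' (a : Fin n) (g : (Fin n → Bool) → ℝ)
    (hg : ∀ u, g (flipF a u) = g u) :
    ∑ u : Fin n → Bool, (if u a = true then 0 else g u)
      = (∑ u : Fin n → Bool, g u) / 2 := by
  rw [← sum_flip_eq a g hg, sum_ite_half a g hg]

end flips


def padF (n L : ℕ) (u : Fin n → Bool) : Fin n → Bool :=
  fun i => if (i : ℕ) < L then true else u i

lemma toNatFun_lt {n : ℕ} (x : Fin n → Bool) {i : ℕ} (h : i < n) :
    toNatFun x i = x ⟨i, h⟩ := dif_pos h

lemma tail_sum (n : ℕ) (hnE : Even n) (δ : ℝ) (hδ : 0 ≤ δ) :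
    ∀ (j L : ℕ), Even L → n ≤ L + 2 * j → L ≤ n →
    ∑ u : Fin n → Bool, HLB δ (padF n L u) ≤ 2 ^ n * ((L : ℝ) + 2) := by
  intro j
  induction j with
  | zero =>
    intro L hLe hnL hLn
    have hL : L = n := by omega
    have hval : ∀ u : Fin n → Bool, HLB δ (padF n L u) = (n : ℝ) := by
      intro u
      exact (DLBn_HLBn_allones (fun i hi => by
        rw [toNatFun_lt _ hi]
        simp only [padF, Fin.val_mk]
        rw [if_pos (by omega)])).2
    calc ∑ u : Fin n → Bool, HLB δ (padF n L u) = ∑ u : Fin n → Bool, (n:ℝ) :=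
          Finset.sum_congr rfl (fun u _ => hval u)
    _ = 2 ^ n * (n : ℝ) := by
        rw [Finset.sum_const]
        simp [Fintype.card_fun]
    _ ≤ 2 ^ n * ((L : ℝ) + 2) := by
        have h2 : (0:ℝ) < 2 ^ n := by positivity
        rw [hL]
        nlinarith
  | succ j ih =>
    intro L hLe hnL hLn
    rcases le_or_gt n (L + 2 * j) with h | h
    · exact ih L hLe h hLn
    -- here L + 2 ≤ n
    have hL2 : L + 2 ≤ n := by
      rcases hLe with ⟨a, ha⟩
      rcases hnE with ⟨w, hw⟩
      omega
    have haL : L < n := by omega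
    have haL1 : L + 1 < n := by omega
    set a : Fin n := ⟨L, haL⟩ with ha_def
    set a' : Fin n := ⟨L + 1, haL1⟩ with ha'_def
    have hvala : (a : ℕ) = L := by simp only [ha_def, Fin.val_mk]
    have hvala' : (a' : ℕ) = L + 1 := by simp only [ha'_def, Fin.val_mk]
    have hne : a' ≠ a := by
      intro hc
      rw [hc] at hvala'
      omega
    have hone_lt : ∀ (u : Fin n → Bool) (i : ℕ), i < L → toNatFun (padF n L u) i = true := by
      intro u i hi
      rw [toNatFun_lt _ (by omega)]
      simp only [padF, Fin.val_mk]
      rw [if_pos hi]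
    have hvL : ∀ u : Fin n → Bool, toNatFun (padF n L u) L = u a := by
      intro u
      rw [toNatFun_lt _ haL]
      simp only [padF, Fin.val_mk]
      rw [if_neg (by omega)]
    have hvL1 : ∀ u : Fin n → Bool, toNatFun (padF n L u) (L + 1) = u a' := by
      intro u
      rw [toNatFun_lt _ haL1]
      simp only [padF, Fin.val_mk]
      rw [if_neg (by omega)]
    have hXflip : ∀ (b : Fin n), (b : ℕ) < L + 2 →
        ∀ u, padF n (L + 2) (flipF b u) = padF n (L + 2) u := by
      intro b hb u
      funext i
      simp only [padF]
      split
      · rfl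
      · next hi =>
        exact flipF_apply_ne b (fun hc => hi (by rw [hc]; exact hb)) u
    have hpoint : ∀ u : Fin n → Bool, HLB δ (padF n L u) =
        if u a = true then
          (if u a' = true then HLB δ (padF n (L + 2) u) else ((L : ℝ) + 2 - δ))
        else
          (if u a' = true then ((L : ℝ) + 2 - δ) else (L : ℝ)) := by
      intro u
      cases h1 : u a <;> cases h2 : u a' <;>
        simp only [Bool.false_eq_true, if_false, if_true]
      · -- 00 block
        exact (DLBn_HLBn_00 hLe hL2 (hone_lt u) (by rw [hvL, h1]) (by rw [hvL1, h2])).2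
      · -- (false, true) : mixed
        exact (DLBn_HLBn_mixed hLe hL2 (hone_lt u) (by rw [hvL, hvL1, h1, h2]; rfl)).2
      · -- (true, false) : mixed
        exact (DLBn_HLBn_mixed hLe hL2 (hone_lt u) (by rw [hvL, hvL1, h1, h2]; rfl)).2
      · -- (true, true): continue
        have heq : padF n L u = padF n (L + 2) u := by
          funext i
          simp only [padF]
          rcases Nat.lt_or_ge (i : ℕ) L with hi | hi
          · rw [if_pos hi, if_pos (by omega)]
          · rw [if_neg (by omega)]
            rcases Nat.lt_or_ge (i : ℕ) (L + 2) with hi2 | hi2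
            · rw [if_pos hi2]
              have : i = a ∨ i = a' := by
                rcases Nat.lt_or_ge (i : ℕ) (L + 1) with h3 | h3
                · left; exact Fin.ext (by rw [hvala]; omega)
                · right; exact Fin.ext (by rw [hvala']; omega)
              rcases this with rfl | rfl
              · exact h1
              · exact h2
            · rw [if_neg (by omega)]
        rw [heq]
    set X : (Fin n → Bool) → ℝ := fun u => HLB δ (padF n (L + 2) u) with hX
    have hXfa : ∀ u, X (flipF a u) = X u := by
      intro u; simp only [hX]; rw [hXflip a (by omega) u]
    have hXfa' : ∀ u, X (flipF a' u) = X u := by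
      intro u; simp only [hX]; rw [hXflip a' (by omega) u]
    set c : ℝ := (L : ℝ) + 2 - δ with hc
    set G1 : (Fin n → Bool) → ℝ := fun u => if u a' = true then X u else c with hG1
    set G2 : (Fin n → Bool) → ℝ := fun u => if u a' = true then c else (L : ℝ) with hG2
    have hG1f : ∀ u, G1 (flipF a u) = G1 u := by
      intro u
      simp only [hG1]
      rw [flipF_apply_ne a hne, hXfa]
    have hG2f : ∀ u, G2 (flipF a u) = G2 u := by
      intro u
      simp only [hG2]
      rw [flipF_apply_ne a hne]
    have hstep1 : ∑ u : Fin n → Bool, HLB δ (padF n L u)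
        = (∑ u : Fin n → Bool, G1 u) / 2 + (∑ u : Fin n → Bool, G2 u) / 2 := by
      calc ∑ u : Fin n → Bool, HLB δ (padF n L u)
          = ∑ u : Fin n → Bool, ((if u a = true then G1 u else 0)
              + (if u a = true then 0 else G2 u)) := by
            apply Finset.sum_congr rfl
            intro u _
            rw [hpoint u]
            cases h1 : u a <;> simp [hG1, hG2, hX]
      _ = ∑ u : Fin n → Bool, (if u a = true then G1 u else 0)
          + ∑ u : Fin n → Bool, (if u a = true then 0 else G2 u) :=
            Finset.sum_add_distrib
      _ = _ := by rw [sum_ite_half a G1 hG1f, sum_ite_half' a G2 hG2f]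
    have hSG1 : ∑ u : Fin n → Bool, G1 u
        = (∑ u : Fin n → Bool, X u) / 2 + 2 ^ n * c / 2 := by
      calc ∑ u : Fin n → Bool, G1 u
          = ∑ u : Fin n → Bool, ((if u a' = true then X u else 0)
            + (if u a' = true then 0 else c)) := by
            apply Finset.sum_congr rfl
            intro u _
            simp only [hG1]
            cases h2 : u a' <;> simp
      _ = ∑ u : Fin n → Bool, (if u a' = true then X u else 0)
          + ∑ u : Fin n → Bool, (if u a' = true then 0 else c) :=
            Finset.sum_add_distrib
      _ = _ := by
          rw [sum_ite_half a' X hXfa', sum_ite_half' a' (fun _ => c) (fun _ => rfl)]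
          rw [Finset.sum_const]
          simp [Fintype.card_fun]
    have hSG2 : ∑ u : Fin n → Bool, G2 u
        = 2 ^ n * c / 2 + 2 ^ n * (L:ℝ) / 2 := by
      calc ∑ u : Fin n → Bool, G2 u
          = ∑ u : Fin n → Bool, ((if u a' = true then c else 0)
            + (if u a' = true then 0 else (L:ℝ))) := by
            apply Finset.sum_congr rfl
            intro u _
            simp only [hG2]
            cases h2 : u a' <;> simp
      _ = ∑ u : Fin n → Bool, (if u a' = true then c else 0)
          + ∑ u : Fin n → Bool, (if u a' = true then 0 else (L:ℝ)) :=
            Finset.sum_add_distrib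
      _ = _ := by
          rw [sum_ite_half a' (fun _ => c) (fun _ => rfl),
            sum_ite_half' a' (fun _ => (L:ℝ)) (fun _ => rfl)]
          rw [Finset.sum_const, Finset.sum_const]
          simp [Fintype.card_fun]
    have hXbound : ∑ u : Fin n → Bool, X u ≤ 2 ^ n * ((L : ℝ) + 2 + 2) := by
      have := ih (L + 2) (by rcases hLe with ⟨w, hw⟩; exact ⟨w+1, by omega⟩) (by omega) hL2
      simp only [hX]
      convert this using 2
      push_cast
      ring
    have hpow : (0:ℝ) < 2 ^ n := by positivity
    rw [hstep1, hSG1, hSG2]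
    simp only [hc]
    nlinarith [hδ, hpow]

lemma mod_cases_two {n a : ℕ} (hn : 0 < n) (h : a < 2 * n) :
    a % n = a ∨ (a % n + n = a) := by
  rcases Nat.lt_or_ge a n with h1 | h1
  · left; exact Nat.mod_eq_of_lt h1
  · right
    rw [Nat.mod_eq_sub_mod h1, Nat.mod_eq_of_lt (by omega)]
    omega

lemma unique_shift (n m : ℕ) (hn : 0 < n) (hm1 : n ≤ 4 * m) (hm2 : 2 * m + 2 ≤ n)
    (p : Fin n) (hp1 : 2 * m ≤ (p : ℕ)) (hp2 : (p : ℕ) < 2 * m + 2)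
    (f : Fin n → Bool) (t t' : Fin n)
    (ht : ∀ i : Fin n, (i : ℕ) < 2 * m + 2 → i ≠ p → f (i + t) = false)
    (htp : f (p + t) = true)
    (ht' : ∀ i : Fin n, (i : ℕ) < 2 * m + 2 → i ≠ p → f (i + t') = false)
    (htp' : f (p + t') = true) : t = t' := by
  haveI : NeZero n := ⟨hn.ne'⟩
  by_contra hne
  set d : Fin n := t - t' with hd_def
  have hd0 : d ≠ 0 := sub_ne_zero.mpr hne
  have hdv0 : (d : ℕ) ≠ 0 := fun hc => hd0 (by
    apply Fin.ext
    simpa using hc)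
  have hdlt : (d : ℕ) < n := d.is_lt
  -- first constrained index
  have key1 : 2 * m + 2 ≤ ((p + d : Fin n) : ℕ) := by
    by_contra hlt
    push_neg at hlt
    have heq : (p + d) + t' = p + t := by
      rw [hd_def]; abel
    have : f ((p + d) + t') = true := by rw [heq]; exact htp
    rcases eq_or_ne (p + d) p with he | he
    · exact hd0 (by
        have h2 : p + d = p + 0 := by rw [add_zero]; exact he
        exact add_left_cancel h2)
    · rw [ht' _ hlt he] at this
      exact Bool.false_ne_true this
  have key2 : 2 * m + 2 ≤ ((p - d : Fin n) : ℕ) := by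
    by_contra hlt
    push_neg at hlt
    have heq : (p - d) + t = p + t' := by
      rw [hd_def]; abel
    have : f ((p - d) + t) = true := by rw [heq]; exact htp'
    rcases eq_or_ne (p - d) p with he | he
    · exact hd0 (by
        have h2 : p - d = p - 0 := by rw [sub_zero]; exact he
        have h3 : p - d + d = p - 0 + d := by rw [h2]
        rw [sub_add_cancel, sub_zero] at h3
        have h4 : p + d = p + 0 := by rw [add_zero]; exact h3.symm
        exact add_left_cancel h4)
    · rw [ht _ hlt he] at this
      exact Bool.false_ne_true this
  have hv1 : ((p + d : Fin n) : ℕ) = ((p : ℕ) + (d : ℕ)) % n := by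
    rw [Fin.add_def]
  have hv2 : ((p - d : Fin n) : ℕ) = ((n - (d : ℕ)) + (p : ℕ)) % n := by
    rw [Fin.sub_def]
  have hc1 := mod_cases_two hn (a := (p : ℕ) + (d : ℕ)) (by omega)
  have hc2 := mod_cases_two hn (a := (n - (d : ℕ)) + (p : ℕ)) (by omega)
  have hl1 : ((p + d : Fin n) : ℕ) < n := (p + d).is_lt
  have hl2 : ((p - d : Fin n) : ℕ) < n := (p - d).is_lt
  rw [hv1] at key1 hl1
  rw [hv2] at key2 hl2
  omega


section main
variable {n : ℕ}

def xorF (e u : Fin n → Bool) : Fin n → Bool := fun i => xor (u i) (e i)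

lemma xorF_invol (e : Fin n → Bool) : Function.Involutive (xorF e) := by
  intro u
  funext i
  simp [xorF]

def xorE (e : Fin n → Bool) : (Fin n → Bool) ≃ (Fin n → Bool) :=
  (xorF_invol e).toPerm _

def Xstr (n m : ℕ) (b : Bool) (u : Fin n → Bool) : Fin n → Bool := fun i =>
  if (i : ℕ) < 2 * m then true
  else if (i : ℕ) = 2 * m then b
  else if (i : ℕ) = 2 * m + 1 then !b
  else u i

noncomputable def Wf (n : ℕ) (δ : ℝ) (x y : Fin n → Bool) : ℝ :=
  if DLB x ≤ DLB y then HLB δ y - HLB δ x else 0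

noncomputable def Gam (n m : ℕ) (δ : ℝ) : ℝ :=
  ((2:ℝ) ^ n)⁻¹ * (∑ u : Fin n → Bool, HLB δ (padF n (2 * m + 2) u))
    - ((2 * m + 2 : ℝ) - δ)

noncomputable def Rval (n m : ℕ) (δ : ℝ) (b : Bool) (i0 i1 : Fin n)
    (e : Fin n → Bool) : ℝ :=
  if (∀ i : Fin n, (i : ℕ) < 2 * m → e i = false) ∧
      e (if b then i1 else i0) = true ∧ e (if b then i0 else i1) = false
    then Gam n m δ
  else if (∀ i : Fin n, (i : ℕ) < 2 * m → e i = false) ∧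
      e (if b then i0 else i1) = true ∧ e (if b then i1 else i0) = false
    then δ - 2
  else 0

lemma R_formula (n m : ℕ) (hm2 : 2 * m + 2 ≤ n)
    (δ : ℝ) (b : Bool) (i0 i1 : Fin n) (hi0 : (i0 : ℕ) = 2 * m)
    (hi1 : (i1 : ℕ) = 2 * m + 1) (e : Fin n → Bool) :
    ∑ u : Fin n → Bool,
      ((2:ℝ) ^ n)⁻¹ * Wf n δ (Xstr n m b u) (xorF e (Xstr n m b u))
    = Rval n m δ b i0 i1 e := by
  classical
  have h2m : 2 * m < n := by omega
  have h2m1 : 2 * m + 1 < n := by omega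
  have hcard : (Finset.univ : Finset (Fin n → Bool)).card = 2 ^ n := by
    simp [Fintype.card_fun]
  have hpow : (0:ℝ) < 2 ^ n := by positivity
  -- values of x
  have hx_lt : ∀ (u : Fin n → Bool) (i : Fin n), (i : ℕ) < 2 * m → Xstr n m b u i = true := by
    intro u i hi
    simp only [Xstr]
    rw [if_pos hi]
  have hxi0 : ∀ u, Xstr n m b u i0 = b := by
    intro u
    simp only [Xstr]
    rw [hi0, if_neg (by omega), if_pos rfl]
  have hxi1 : ∀ u, Xstr n m b u i1 = !b := by
    intro u
    simp only [Xstr]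
    rw [hi1, if_neg (by omega), if_neg (by omega), if_pos rfl]
  have hx_ge : ∀ (u : Fin n → Bool) (i : Fin n), 2 * m + 2 ≤ (i : ℕ) → Xstr n m b u i = u i := by
    intro u i hi
    simp only [Xstr]
    rw [if_neg (by omega), if_neg (by omega), if_neg (by omega)]
  -- DLB/HLB of x
  have hxDH : ∀ u, DLBn n (toNatFun (Xstr n m b u)) = 2 * m ∧
      HLBn n δ (toNatFun (Xstr n m b u)) = ((2 * m : ℕ) : ℝ) + 2 - δ := by
    intro u
    exact DLBn_HLBn_mixed (even_two_mul m) hm2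
      (fun i hi => by
        rw [toNatFun_lt _ (by omega)]
        exact hx_lt u ⟨i, by omega⟩ (by simpa using hi))
      (by
        rw [toNatFun_lt _ h2m, toNatFun_lt _ h2m1]
        have e0 : (⟨2 * m, h2m⟩ : Fin n) = i0 := Fin.ext (by simp [hi0])
        have e1 : (⟨2 * m + 1, h2m1⟩ : Fin n) = i1 := Fin.ext (by simp [hi1])
        rw [e0, e1, hxi0, hxi1]
        simp)
  -- y as a function of u
  set y : (Fin n → Bool) → (Fin n → Bool) := fun u => xorF e (Xstr n m b u) with hy_def
  have hy_app : ∀ u i, y u i = xor (Xstr n m b u i) (e i) := by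
    intro u i; rfl
  by_cases hA : ∀ i : Fin n, (i : ℕ) < 2 * m → e i = false
  · -- avoid case
    have hy_ones : ∀ (u : Fin n → Bool) (i : ℕ), i < 2 * m → toNatFun (y u) i = true := by
      intro u i hi
      rw [toNatFun_lt _ (by omega)]
      rw [hy_app, hx_lt u _ (by simpa using hi), hA _ (by simpa using hi)]
      rfl
    have hyn0 : ∀ u, toNatFun (y u) (2 * m) = xor b (e i0) := by
      intro u
      rw [toNatFun_lt _ h2m]
      have e0 : (⟨2 * m, h2m⟩ : Fin n) = i0 := Fin.ext (by simp [hi0])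
      rw [e0, hy_app, hxi0]
    have hyn1 : ∀ u, toNatFun (y u) (2 * m + 1) = xor (!b) (e i1) := by
      intro u
      rw [toNatFun_lt _ h2m1]
      have e1 : (⟨2 * m + 1, h2m1⟩ : Fin n) = i1 := Fin.ext (by simp [hi1])
      rw [e1, hy_app, hxi1]
    -- three computation helpers
    have Hmixed : (xor b (e i0)) = !(xor (!b) (e i1)) →
        ∑ u : Fin n → Bool, ((2:ℝ) ^ n)⁻¹ * Wf n δ (Xstr n m b u) (y u) = 0 := by
      intro hmix
      have : ∀ u : Fin n → Bool, Wf n δ (Xstr n m b u) (y u) = 0 := by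
        intro u
        have hyDH := DLBn_HLBn_mixed (n := n) (x := toNatFun (y u)) (δ := δ)
          (even_two_mul m) hm2 (fun i hi => hy_ones u i hi)
          (by rw [hyn0, hyn1, hmix])
        unfold Wf DLB HLB
        rw [(hxDH u).1, (hxDH u).2, hyDH.1, hyDH.2, if_pos le_rfl]
        ring
      calc ∑ u : Fin n → Bool, ((2:ℝ) ^ n)⁻¹ * Wf n δ (Xstr n m b u) (y u)
          = ∑ u : Fin n → Bool, (0:ℝ) := by
            apply Finset.sum_congr rfl
            intro u _
            rw [this u, mul_zero]
      _ = 0 := Finset.sum_const_zero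
    have H00 : (xor b (e i0)) = false → (xor (!b) (e i1)) = false →
        ∑ u : Fin n → Bool, ((2:ℝ) ^ n)⁻¹ * Wf n δ (Xstr n m b u) (y u) = δ - 2 := by
      intro h0 h1
      have : ∀ u : Fin n → Bool, Wf n δ (Xstr n m b u) (y u) = δ - 2 := by
        intro u
        have hyDH := DLBn_HLBn_00 (n := n) (x := toNatFun (y u)) (δ := δ)
          (even_two_mul m) hm2 (fun i hi => hy_ones u i hi)
          (by rw [hyn0, h0]) (by rw [hyn1, h1])
        unfold Wf DLB HLB
        rw [(hxDH u).1, (hxDH u).2, hyDH.1, hyDH.2, if_pos (by omega)]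
        push_cast
        ring
      calc ∑ u : Fin n → Bool, ((2:ℝ) ^ n)⁻¹ * Wf n δ (Xstr n m b u) (y u)
          = ∑ u : Fin n → Bool, ((2:ℝ) ^ n)⁻¹ * (δ - 2) := by
            apply Finset.sum_congr rfl
            intro u _
            rw [this u]
      _ = δ - 2 := by
          rw [Finset.sum_const, hcard, nsmul_eq_mul]
          push_cast
          field_simp
    have H11 : (xor b (e i0)) = true → (xor (!b) (e i1)) = true →
        ∑ u : Fin n → Bool, ((2:ℝ) ^ n)⁻¹ * Wf n δ (Xstr n m b u) (y u) = Gam n m δ := by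
      intro h0 h1
      -- y u = padF n (2m+2) (xorF e u)
      have hypad : ∀ u, y u = padF n (2 * m + 2) (xorF e u) := by
        intro u
        funext i
        simp only [padF, xorF]
        rcases Nat.lt_or_ge (i : ℕ) (2 * m + 2) with hi | hi
        · rw [if_pos hi]
          rcases Nat.lt_or_ge (i : ℕ) (2 * m) with hi2 | hi2
          · rw [hy_app, hx_lt u i hi2, hA i hi2]
            rfl
          · rcases Nat.lt_or_ge (i : ℕ) (2 * m + 1) with hi3 | hi3
            · have hieq : i = i0 := Fin.ext (by omega)
              rw [hieq, hy_app, hxi0]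
              exact h0
            · have hieq : i = i1 := Fin.ext (by omega)
              rw [hieq, hy_app, hxi1]
              exact h1
        · rw [if_neg (by omega), hy_app, hx_ge u i hi]
      have hyW : ∀ u : Fin n → Bool, Wf n δ (Xstr n m b u) (y u)
          = HLB δ (padF n (2 * m + 2) (xorF e u)) - (((2 * m : ℕ) : ℝ) + 2 - δ) := by
        intro u
        have hge : 2 * m + 2 ≤ DLBn n (toNatFun (y u)) := by
          apply DLBn_ge (by exact ⟨m + 1, by ring⟩) hm2
          intro i hi
          rw [hypad u, toNatFun_lt _ (by omega)]
          simp only [padF, Fin.val_mk]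
          rw [if_pos hi]
        unfold Wf DLB HLB
        rw [(hxDH u).1, (hxDH u).2, if_pos (by omega), hypad u]
      calc ∑ u : Fin n → Bool, ((2:ℝ) ^ n)⁻¹ * Wf n δ (Xstr n m b u) (y u)
          = ∑ u : Fin n → Bool,
            ((2:ℝ) ^ n)⁻¹ * (HLB δ (padF n (2 * m + 2) (xorF e u)) - (((2 * m : ℕ) : ℝ) + 2 - δ)) := by
            apply Finset.sum_congr rfl
            intro u _
            rw [hyW u]
      _ = ∑ u : Fin n → Bool,
            ((2:ℝ) ^ n)⁻¹ * (HLB δ (padF n (2 * m + 2) u) - (((2 * m : ℕ) : ℝ) + 2 - δ)) := by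
            exact Fintype.sum_equiv (xorE e) _ _ (fun u => by
              simp only [xorE, Function.Involutive.coe_toPerm])
      _ = Gam n m δ := by
          unfold Gam
          have hone : ((2:ℝ) ^ n)⁻¹ * ((2:ℝ) ^ n) = 1 := inv_mul_cancel₀ hpow.ne'
          rw [← Finset.mul_sum, Finset.sum_sub_distrib, Finset.sum_const, hcard,
            nsmul_eq_mul]
          push_cast
          rw [mul_sub, ← mul_assoc, hone, one_mul]
    -- final dispatch over b and the two block bits of e
    unfold Rval
    cases b
    · have e1 : (if (false : Bool) then i1 else i0) = i0 := rfl
      have e2 : (if (false : Bool) then i0 else i1) = i1 := rfl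
      rw [e1, e2]
      cases hz : e i0 <;> cases ho : e i1
      · rw [if_neg (by simp), if_neg (by simp)]
        exact Hmixed (by simp [hz, ho])
      · rw [if_neg (by simp), if_pos ⟨hA, rfl, rfl⟩]
        exact H00 (by simp [hz]) (by simp [ho])
      · rw [if_pos ⟨hA, rfl, rfl⟩]
        exact H11 (by simp [hz]) (by simp [ho])
      · rw [if_neg (by simp), if_neg (by simp)]
        exact Hmixed (by simp [hz, ho])
    · have e1 : (if (true : Bool) then i1 else i0) = i1 := rfl
      have e2 : (if (true : Bool) then i0 else i1) = i0 := rfl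
      rw [e1, e2]
      cases hz : e i0 <;> cases ho : e i1
      · rw [if_neg (by simp), if_neg (by simp)]
        exact Hmixed (by simp [hz, ho])
      · rw [if_pos ⟨hA, rfl, rfl⟩]
        exact H11 (by simp [hz]) (by simp [ho])
      · rw [if_neg (by simp), if_pos ⟨hA, rfl, rfl⟩]
        exact H00 (by simp [hz]) (by simp [ho])
      · rw [if_neg (by simp), if_neg (by simp)]
        exact Hmixed (by simp [hz, ho])
  · -- not avoid : some position below 2m is flipped
    push_neg at hA
    obtain ⟨i, hi, hei⟩ := hA
    have hei' : e i = true := by simpa using hei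
    have hzero : ∀ u : Fin n → Bool, Wf n δ (Xstr n m b u) (y u) = 0 := by
      intro u
      have hyfalse : toNatFun (y u) (i : ℕ) = false := by
        rw [toNatFun_lt _ i.is_lt]
        have heta : y u ⟨(i : ℕ), i.is_lt⟩ = y u i := rfl
        rw [heta, hy_app, hx_lt u i hi, hei']
        rfl
      have hlt : DLBn n (toNatFun (y u)) < 2 * m :=
        DLBn_lt hyfalse hi (by omega) (even_two_mul m)
      unfold Wf DLB
      rw [(hxDH u).1, if_neg (by omega)]
    have hleft : ∑ u : Fin n → Bool, ((2:ℝ) ^ n)⁻¹ * Wf n δ (Xstr n m b u) (y u) = 0 := by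
      calc _ = ∑ u : Fin n → Bool, (0:ℝ) := by
            apply Finset.sum_congr rfl
            intro u _
            rw [hzero u, mul_zero]
      _ = 0 := Finset.sum_const_zero
    unfold Rval
    rw [if_neg (fun hc => hei (hc.1 i hi)), if_neg (fun hc => hei (hc.1 i hi))]
    exact hleft

end main


lemma Gam_le (n m : ℕ) (hnE : Even n) (hm2 : 2 * m + 2 ≤ n) (δ : ℝ) (hδ : 0 ≤ δ) :
    Gam n m δ ≤ 2 + δ := by
  have hts := tail_sum n hnE δ hδ n (2 * m + 2) ⟨m + 1, by ring⟩ (by omega) hm2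
  unfold Gam
  have hpow : (0:ℝ) < 2 ^ n := by positivity
  have h1 : ((2:ℝ) ^ n)⁻¹ * (∑ u : Fin n → Bool, HLB δ (padF n (2 * m + 2) u))
      ≤ ((2:ℝ) ^ n)⁻¹ * (2 ^ n * (((2 * m + 2 : ℕ) : ℝ) + 2)) :=
    mul_le_mul_of_nonneg_left hts (by positivity)
  have h2 : ((2:ℝ) ^ n)⁻¹ * (2 ^ n * (((2 * m + 2 : ℕ) : ℝ) + 2))
      = ((2 * m + 2 : ℕ) : ℝ) + 2 := by
    rw [← mul_assoc, inv_mul_cancel₀ hpow.ne', one_mul]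
  rw [h2] at h1
  push_cast at h1 ⊢
  linarith

lemma ind_sum_le_one (n m : ℕ) (hn : 0 < n) (hm1 : n ≤ 4 * m) (hm2 : 2 * m + 2 ≤ n)
    [NeZero n] (p q : Fin n) (hpv : (p : ℕ) = 2 * m ∨ (p : ℕ) = 2 * m + 1)
    (hqv : (q : ℕ) = 2 * m ∨ (q : ℕ) = 2 * m + 1) (hpq : p ≠ q) (f : Fin n → Bool) :
    ∑ t : Fin n, (if (∀ i : Fin n, (i : ℕ) < 2 * m → (f ∘ ⇑(Equiv.addRight t)) i = false) ∧
        (f ∘ ⇑(Equiv.addRight t)) p = true ∧ (f ∘ ⇑(Equiv.addRight t)) q = false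
      then (1:ℝ) else 0) ≤ 1 := by
  classical
  have hvne : (p : ℕ) ≠ (q : ℕ) := fun hc => hpq (Fin.ext hc)
  have hcard : (Finset.univ.filter (fun t : Fin n =>
      (∀ i : Fin n, (i : ℕ) < 2 * m → (f ∘ ⇑(Equiv.addRight t)) i = false) ∧
        (f ∘ ⇑(Equiv.addRight t)) p = true ∧ (f ∘ ⇑(Equiv.addRight t)) q = false)).card ≤ 1 := by
    rw [Finset.card_le_one]
    intro t ht t' ht'
    rw [Finset.mem_filter] at ht ht'
    obtain ⟨-, ha, hp, hq⟩ := ht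
    obtain ⟨-, ha', hp', hq'⟩ := ht'
    have hside : ∀ (s : Fin n), (∀ i : Fin n, (i : ℕ) < 2 * m → (f ∘ ⇑(Equiv.addRight s)) i = false) →
        (f ∘ ⇑(Equiv.addRight s)) q = false →
        ∀ i : Fin n, (i : ℕ) < 2 * m + 2 → i ≠ p → f (i + s) = false := by
      intro s has hqs i hi hip
      rcases Nat.lt_or_ge (i : ℕ) (2 * m) with h | h
      · exact has i h
      · have hiq : i = q := by
          apply Fin.ext
          rcases hpv with h1 | h1 <;> rcases hqv with h2 | h2 <;> omega
        rw [hiq]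
        exact hqs
    exact unique_shift n m hn hm1 hm2 p (by omega) (by omega) f t t'
      (hside t ha hq) hp (hside t' ha' hq') hp'
  calc ∑ t : Fin n, (if (∀ i : Fin n, (i : ℕ) < 2 * m → (f ∘ ⇑(Equiv.addRight t)) i = false) ∧
        (f ∘ ⇑(Equiv.addRight t)) p = true ∧ (f ∘ ⇑(Equiv.addRight t)) q = false
      then (1:ℝ) else 0)
      = ((Finset.univ.filter (fun t : Fin n =>
      (∀ i : Fin n, (i : ℕ) < 2 * m → (f ∘ ⇑(Equiv.addRight t)) i = false) ∧
        (f ∘ ⇑(Equiv.addRight t)) p = true ∧ (f ∘ ⇑(Equiv.addRight t)) q = false)).card : ℝ) := by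
        rw [Finset.sum_boole]
  _ ≤ 1 := by exact_mod_cast hcard


lemma per_b_bound (n m : ℕ) (hn : 0 < n) (hnE : Even n) (hm1 : n ≤ 4 * m)
    (hm2 : 2 * m + 2 ≤ n) [NeZero n]
    (δ : ℝ) (hδ0 : 0 < δ) (hδ2 : δ < 2) (b : Bool)
    (i0 i1 : Fin n) (hi0 : (i0 : ℕ) = 2 * m) (hi1 : (i1 : ℕ) = 2 * m + 1)
    (f : Fin n → Bool) :
    ∑ t : Fin n, (Rval n m δ b i0 i1 (f ∘ ⇑(Equiv.addRight t))
      + Rval n m δ b i0 i1 (f ∘ ⇑((Equiv.swap i0 i1).trans (Equiv.addRight t))))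
    ≤ 4 * δ := by
  classical
  have hne01 : i0 ≠ i1 := fun hc => by rw [hc] at hi0; omega
  set τ : Equiv.Perm (Fin n) := Equiv.swap i0 i1 with hτ
  set j0 : Fin n := if b then i1 else i0 with hj0
  set j1 : Fin n := if b then i0 else i1 with hj1
  have hτi0 : τ i0 = i1 := Equiv.swap_apply_left _ _
  have hτi1 : τ i1 = i0 := Equiv.swap_apply_right _ _
  have hτj0 : τ j0 = j1 := by
    rw [hj0, hj1]; cases b
    · simpa using hτi0
    · simpa using hτi1
  have hτj1 : τ j1 = j0 := by
    rw [hj0, hj1]; cases b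
    · simpa using hτi1
    · simpa using hτi0
  have hτlt : ∀ i : Fin n, (i : ℕ) < 2 * m → τ i = i := by
    intro i hi
    rw [hτ]
    apply Equiv.swap_apply_of_ne_of_ne
    · intro hc; rw [hc] at hi; omega
    · intro hc; rw [hc] at hi; omega
  -- equivalence of conditions under τ
  have hiff1 : ∀ e : Fin n → Bool,
      ((∀ i : Fin n, (i : ℕ) < 2 * m → (e ∘ ⇑τ) i = false) ∧
        (e ∘ ⇑τ) j0 = true ∧ (e ∘ ⇑τ) j1 = false)
      ↔ ((∀ i : Fin n, (i : ℕ) < 2 * m → e i = false) ∧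
        e j1 = true ∧ e j0 = false) := by
    intro e
    constructor
    · rintro ⟨ha, h1, h2⟩
      refine ⟨fun i hi => ?_, ?_, ?_⟩
      · have := ha i hi
        rwa [show (e ∘ ⇑τ) i = e (τ i) from rfl, hτlt i hi] at this
      · rwa [show (e ∘ ⇑τ) j0 = e (τ j0) from rfl, hτj0] at h1
      · rwa [show (e ∘ ⇑τ) j1 = e (τ j1) from rfl, hτj1] at h2
    · rintro ⟨ha, h1, h2⟩
      refine ⟨fun i hi => ?_, ?_, ?_⟩
      · rw [show (e ∘ ⇑τ) i = e (τ i) from rfl, hτlt i hi]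
        exact ha i hi
      · rw [show (e ∘ ⇑τ) j0 = e (τ j0) from rfl, hτj0]
        exact h1
      · rw [show (e ∘ ⇑τ) j1 = e (τ j1) from rfl, hτj1]
        exact h2
  have hiff2 : ∀ e : Fin n → Bool,
      ((∀ i : Fin n, (i : ℕ) < 2 * m → (e ∘ ⇑τ) i = false) ∧
        (e ∘ ⇑τ) j1 = true ∧ (e ∘ ⇑τ) j0 = false)
      ↔ ((∀ i : Fin n, (i : ℕ) < 2 * m → e i = false) ∧
        e j0 = true ∧ e j1 = false) := by
    intro e
    constructor
    · rintro ⟨ha, h1, h2⟩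
      refine ⟨fun i hi => ?_, ?_, ?_⟩
      · have := ha i hi
        rwa [show (e ∘ ⇑τ) i = e (τ i) from rfl, hτlt i hi] at this
      · rwa [show (e ∘ ⇑τ) j1 = e (τ j1) from rfl, hτj1] at h1
      · rwa [show (e ∘ ⇑τ) j0 = e (τ j0) from rfl, hτj0] at h2
    · rintro ⟨ha, h1, h2⟩
      refine ⟨fun i hi => ?_, ?_, ?_⟩
      · rw [show (e ∘ ⇑τ) i = e (τ i) from rfl, hτlt i hi]
        exact ha i hi
      · rw [show (e ∘ ⇑τ) j1 = e (τ j1) from rfl, hτj1]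
        exact h1
      · rw [show (e ∘ ⇑τ) j0 = e (τ j0) from rfl, hτj0]
        exact h2
  -- pairing identity
  have hRpair : ∀ e : Fin n → Bool,
      Rval n m δ b i0 i1 e + Rval n m δ b i0 i1 (e ∘ ⇑τ)
      = ((if (∀ i : Fin n, (i : ℕ) < 2 * m → e i = false) ∧
            e j0 = true ∧ e j1 = false then (1:ℝ) else 0)
        + (if (∀ i : Fin n, (i : ℕ) < 2 * m → e i = false) ∧
            e j1 = true ∧ e j0 = false then (1:ℝ) else 0))
        * (Gam n m δ + (δ - 2)) := by
    intro e
    unfold Rval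
    rw [← hj0, ← hj1]
    by_cases hc1 : (∀ i : Fin n, (i : ℕ) < 2 * m → e i = false) ∧ e j0 = true ∧ e j1 = false
    · have hnc2 : ¬ ((∀ i : Fin n, (i : ℕ) < 2 * m → e i = false) ∧
          e j1 = true ∧ e j0 = false) := by
        rintro ⟨-, -, h2⟩
        rw [hc1.2.1] at h2
        simp at h2
      rw [if_pos hc1, if_neg (fun hc => hnc2 ((hiff1 e).mp hc)),
        if_pos ((hiff2 e).mpr hc1), if_pos hc1, if_neg hnc2]
      ring
    · by_cases hc2 : (∀ i : Fin n, (i : ℕ) < 2 * m → e i = false) ∧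
          e j1 = true ∧ e j0 = false
      · rw [if_neg hc1, if_pos hc2, if_pos ((hiff1 e).mpr hc2), if_neg hc1, if_pos hc2]
        ring
      · rw [if_neg hc1, if_neg hc2, if_neg (fun hc => hc2 ((hiff1 e).mp hc)),
          if_neg (fun hc => hc1 ((hiff2 e).mp hc)), if_neg hc1, if_neg hc2]
        ring
  -- rewrite the sum using the pairing
  have hstep : ∑ t : Fin n, (Rval n m δ b i0 i1 (f ∘ ⇑(Equiv.addRight t))
      + Rval n m δ b i0 i1 (f ∘ ⇑(τ.trans (Equiv.addRight t))))
      = ((∑ t : Fin n, (if (∀ i : Fin n, (i : ℕ) < 2 * m →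
            (f ∘ ⇑(Equiv.addRight t)) i = false) ∧
            (f ∘ ⇑(Equiv.addRight t)) j0 = true ∧ (f ∘ ⇑(Equiv.addRight t)) j1 = false
            then (1:ℝ) else 0))
        + (∑ t : Fin n, (if (∀ i : Fin n, (i : ℕ) < 2 * m →
            (f ∘ ⇑(Equiv.addRight t)) i = false) ∧
            (f ∘ ⇑(Equiv.addRight t)) j1 = true ∧ (f ∘ ⇑(Equiv.addRight t)) j0 = false
            then (1:ℝ) else 0)))
        * (Gam n m δ + (δ - 2)) := by
    rw [← Finset.sum_add_distrib, Finset.sum_mul]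
    apply Finset.sum_congr rfl
    intro t _
    have hcomp : f ∘ ⇑(τ.trans (Equiv.addRight t)) = (f ∘ ⇑(Equiv.addRight t)) ∘ ⇑τ := rfl
    rw [hcomp]
    exact hRpair (f ∘ ⇑(Equiv.addRight t))
  rw [hstep]
  -- bound
  have hS1 := ind_sum_le_one n m hn hm1 hm2 j0 j1
    (by cases b
        · rw [hj0]; left; simpa using hi0
        · rw [hj0]; right; simpa using hi1)
    (by cases b
        · rw [hj1]; right; simpa using hi1
        · rw [hj1]; left; simpa using hi0)
    (by cases b
        · rw [hj0, hj1]; simpa using hne01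
        · rw [hj0, hj1]; simpa using hne01.symm) f
  have hS2 := ind_sum_le_one n m hn hm1 hm2 j1 j0
    (by cases b
        · rw [hj1]; right; simpa using hi1
        · rw [hj1]; left; simpa using hi0)
    (by cases b
        · rw [hj0]; left; simpa using hi0
        · rw [hj0]; right; simpa using hi1)
    (by cases b
        · rw [hj0, hj1]; simpa using hne01.symm
        · rw [hj0, hj1]; simpa using hne01) f
  have hS1n : (0:ℝ) ≤ ∑ t : Fin n, (if (∀ i : Fin n, (i : ℕ) < 2 * m →
      (f ∘ ⇑(Equiv.addRight t)) i = false) ∧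
      (f ∘ ⇑(Equiv.addRight t)) j0 = true ∧ (f ∘ ⇑(Equiv.addRight t)) j1 = false
      then (1:ℝ) else 0) :=
    Finset.sum_nonneg (fun t _ => by positivity)
  have hS2n : (0:ℝ) ≤ ∑ t : Fin n, (if (∀ i : Fin n, (i : ℕ) < 2 * m →
      (f ∘ ⇑(Equiv.addRight t)) i = false) ∧
      (f ∘ ⇑(Equiv.addRight t)) j1 = true ∧ (f ∘ ⇑(Equiv.addRight t)) j0 = false
      then (1:ℝ) else 0) :=
    Finset.sum_nonneg (fun t _ => by positivity)
  have hGam : Gam n m δ + (δ - 2) ≤ 2 * δ := by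
    have := Gam_le n m hnE hm2 δ hδ0.le
    linarith
  have final : ∀ A B K : ℝ, A ≤ 1 → B ≤ 1 → 0 ≤ A → 0 ≤ B → K ≤ 2 * δ →
      (A + B) * K ≤ 4 * δ := by
    intro A B K h1 h2 h3 h4 h5
    rcases le_or_gt 0 K with hK | hK
    · have h6 := mul_le_mul_of_nonneg_right (add_le_add h1 h2) hK
      nlinarith
    · have h6 := mul_nonpos_of_nonneg_of_nonpos (by linarith : (0:ℝ) ≤ A + B) hK.le
      nlinarith
  exact final _ _ _ hS1 hS2 hS1n hS2n hGam


def compE {n : ℕ} (σ : Equiv.Perm (Fin n)) : (Fin n → Bool) ≃ (Fin n → Bool) where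
  toFun g := g ∘ ⇑σ
  invFun g := g ∘ ⇑σ.symm
  left_inv g := by funext i; simp
  right_inv g := by funext i; simp

lemma triple_swap {α β γ : Type*} [Fintype α] [Fintype β] [Fintype γ]
    (p : α → ℝ) (a : ℝ) (w : α → β → γ → ℝ) (qq : γ → ℝ) :
    ∑ x : α, p x * ∑ y : β, a * (∑ g : γ, qq g * w x y g)
      = ∑ g : γ, qq g * ∑ x : α, p x * ∑ y : β, a * w x y g := by
  have step1 : ∑ x : α, p x * ∑ y : β, a * (∑ g : γ, qq g * w x y g)
      = ∑ x : α, ∑ y : β, ∑ g : γ, p x * (a * (qq g * w x y g)) := by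
    simp only [Finset.mul_sum]
  have step2 : ∑ g : γ, qq g * ∑ x : α, p x * ∑ y : β, a * w x y g
      = ∑ g : γ, ∑ x : α, ∑ y : β, p x * (a * (qq g * w x y g)) := by
    simp only [Finset.mul_sum]
    apply Finset.sum_congr rfl; intro g _
    apply Finset.sum_congr rfl; intro x _
    apply Finset.sum_congr rfl; intro y _
    ring
  rw [step1, step2]
  calc ∑ x : α, ∑ y : β, ∑ g : γ, p x * (a * (qq g * w x y g))
      = ∑ x : α, ∑ g : γ, ∑ y : β, p x * (a * (qq g * w x y g)) :=
        Finset.sum_congr rfl (fun x _ => Finset.sum_comm)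
    _ = ∑ g : γ, ∑ x : α, ∑ y : β, p x * (a * (qq g * w x y g)) := Finset.sum_comm


/-- **One-step progress bound from an even DLB value.** Let `n` be even and
positive, `m` an integer with `n/4 ≤ m ≤ n/2 - 1`, and `δ ∈ (0,2)`. Let `x` be a
random bit string with `DLB(x) = 2m` almost surely: its first `2m` bits are `1`,
its critical block is `(b, ¬b)` for a `Bool` `b` with an arbitrary distribution
`β`, and its remaining bits are independent, uniform, and independent of the
critical block (realized via a uniformly random string `u`). Let `y` be obtained
from `x` by an arbitrary unary unbiased variation operator `V`, and let
`Y := (HLB_δ(y) - HLB_δ(x)) · 1_{DLB(y) ≥ DLB(x)}`. Then `E[Y] ≤ 2δ/n`. -/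
theorem drift_from_even_DLB_value (n m : ℕ) (hn : 0 < n) (he : Even n)
    (hm1 : n ≤ 4 * m) (hm2 : 2 * m + 2 ≤ n)
    (δ : ℝ) (hδ0 : 0 < δ) (hδ2 : δ < 2)
    (β : PMF Bool)
    (V : (Fin n → Bool) → PMF (Fin n → Bool)) (hV : IsUnbiased V) :
    (∑ b : Bool, (β b).toReal *
      ∑ u : Fin n → Bool, ((PMF.uniformOfFintype (Fin n → Bool)) u).toReal *
        (let x : Fin n → Bool := fun i =>
          if (i : ℕ) < 2 * m then true
          else if (i : ℕ) = 2 * m then b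
          else if (i : ℕ) = 2 * m + 1 then !b
          else u i
        ∑ y : Fin n → Bool, ((V x) y).toReal *
          (if DLB x ≤ DLB y then HLB δ y - HLB δ x else 0)))
      ≤ 2 * δ / n := by
  classical
  haveI : NeZero n := ⟨hn.ne'⟩
  have h2m : 2 * m < n := by omega
  have h2m1 : 2 * m + 1 < n := by omega
  set i0 : Fin n := ⟨2 * m, h2m⟩ with hi0_def
  set i1 : Fin n := ⟨2 * m + 1, h2m1⟩ with hi1_def
  have hi0 : (i0 : ℕ) = 2 * m := rfl
  have hi1 : (i1 : ℕ) = 2 * m + 1 := rfl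
  set c0 : Fin n → Bool := fun _ => false with hc0
  set q : (Fin n → Bool) → ℝ := fun g => ((V c0) g).toReal with hq_def
  have hq0 : ∀ g, 0 ≤ q g := fun g => ENNReal.toReal_nonneg
  have hqsum : ∑ g : Fin n → Bool, q g = 1 := by
    have h1 : ∑ g : Fin n → Bool, (V c0) g = 1 := by
      rw [← tsum_fintype (L := SummationFilter.unconditional _)]; exact (V c0).tsum_coe
    have h2 : (∑ g : Fin n → Bool, (V c0) g).toReal
        = ∑ g : Fin n → Bool, ((V c0) g).toReal :=
      ENNReal.toReal_sum (fun a _ => PMF.apply_ne_top _ _)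
    simp only [hq_def]
    rw [← h2, h1, ENNReal.toReal_one]
  have hβ0 : ∀ bb : Bool, 0 ≤ (β bb).toReal := fun _ => ENNReal.toReal_nonneg
  have hβsum : ∑ bb : Bool, (β bb).toReal = 1 := by
    have h1 : ∑ bb : Bool, β bb = 1 := by
      rw [← tsum_fintype (L := SummationFilter.unconditional _)]; exact β.tsum_coe
    have h2 : (∑ bb : Bool, β bb).toReal = ∑ bb : Bool, (β bb).toReal :=
      ENNReal.toReal_sum (fun a _ => PMF.apply_ne_top _ _)
    rw [← h2, h1, ENNReal.toReal_one]
  have hVq : ∀ x g : Fin n → Bool, ((V x) g).toReal = q (xorF x g) := by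
    intro x g
    have h1 := hV.1 x x g
    have h2 : (fun i => xor (x i) (x i)) = c0 := by funext i; simp [hc0]
    rw [h2] at h1
    simp only [hq_def]
    rw [h1]
    rfl
  have hqperm : ∀ (σ : Equiv.Perm (Fin n)) (g : Fin n → Bool), q (g ∘ ⇑σ) = q g := by
    intro σ g
    have h1 := hV.2 c0 σ g
    have h2 : c0 ∘ ⇑σ = c0 := rfl
    rw [h2] at h1
    simp only [hq_def]
    rw [h1]
  have hU : ∀ u : Fin n → Bool,
      ((PMF.uniformOfFintype (Fin n → Bool)) u).toReal = ((2:ℝ) ^ n)⁻¹ := by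
    intro u
    rw [PMF.uniformOfFintype_apply, ENNReal.toReal_inv]
    norm_num [Fintype.card_fun]
  -- inner sum rewriting
  have hinner : ∀ (bb : Bool) (u : Fin n → Bool),
      (∑ y : Fin n → Bool, ((V (Xstr n m bb u)) y).toReal *
        (if DLB (Xstr n m bb u) ≤ DLB y then HLB δ y - HLB δ (Xstr n m bb u) else 0))
      = ∑ g : Fin n → Bool, q g * Wf n δ (Xstr n m bb u) (xorF g (Xstr n m bb u)) := by
    intro bb u
    have h1 : ∀ y, ((V (Xstr n m bb u)) y).toReal *
        (if DLB (Xstr n m bb u) ≤ DLB y then HLB δ y - HLB δ (Xstr n m bb u) else 0)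
        = q (xorF (Xstr n m bb u) y) * Wf n δ (Xstr n m bb u) y := fun y => by
      rw [hVq (Xstr n m bb u) y]; rfl
    calc (∑ y : Fin n → Bool, ((V (Xstr n m bb u)) y).toReal *
        (if DLB (Xstr n m bb u) ≤ DLB y then HLB δ y - HLB δ (Xstr n m bb u) else 0))
        = ∑ y : Fin n → Bool, q (xorF (Xstr n m bb u) y) * Wf n δ (Xstr n m bb u) y :=
          Finset.sum_congr rfl (fun y _ => h1 y)
      _ = ∑ g : Fin n → Bool, q (xorF (Xstr n m bb u) (xorF (Xstr n m bb u) g))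
            * Wf n δ (Xstr n m bb u) (xorF (Xstr n m bb u) g) :=
          (Equiv.sum_comp (xorE (Xstr n m bb u))
            (fun y => q (xorF (Xstr n m bb u) y) * Wf n δ (Xstr n m bb u) y)).symm
      _ = ∑ g : Fin n → Bool, q g * Wf n δ (Xstr n m bb u) (xorF g (Xstr n m bb u)) := by
          apply Finset.sum_congr rfl
          intro g _
          rw [xorF_invol (Xstr n m bb u) g]
          have e3 : xorF (Xstr n m bb u) g = xorF g (Xstr n m bb u) := by
            funext i; simp [xorF, Bool.xor_comm]
          rw [e3]
  -- big rewriting of the goal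
  set T : (Fin n → Bool) → ℝ :=
    fun g => ∑ bb : Bool, (β bb).toReal * Rval n m δ bb i0 i1 g with hT
  have hbig : (∑ b : Bool, (β b).toReal *
      ∑ u : Fin n → Bool, ((PMF.uniformOfFintype (Fin n → Bool)) u).toReal *
        (∑ y : Fin n → Bool, ((V (Xstr n m b u)) y).toReal *
          (if DLB (Xstr n m b u) ≤ DLB y then HLB δ y - HLB δ (Xstr n m b u) else 0)))
      = ∑ g : Fin n → Bool, q g * T g := by
    calc (∑ b : Bool, (β b).toReal *
      ∑ u : Fin n → Bool, ((PMF.uniformOfFintype (Fin n → Bool)) u).toReal *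
        (∑ y : Fin n → Bool, ((V (Xstr n m b u)) y).toReal *
          (if DLB (Xstr n m b u) ≤ DLB y then HLB δ y - HLB δ (Xstr n m b u) else 0)))
        = ∑ b : Bool, (β b).toReal *
            ∑ u : Fin n → Bool, ((2:ℝ) ^ n)⁻¹ *
              (∑ g : Fin n → Bool, q g * Wf n δ (Xstr n m b u) (xorF g (Xstr n m b u))) := by
          apply Finset.sum_congr rfl
          intro bb _
          congr 1
          apply Finset.sum_congr rfl
          intro u _
          rw [hU u, hinner bb u]
      _ = ∑ g : Fin n → Bool, q g *
            ∑ bb : Bool, (β bb).toReal *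
              ∑ u : Fin n → Bool, ((2:ℝ) ^ n)⁻¹ * Wf n δ (Xstr n m bb u) (xorF g (Xstr n m bb u)) :=
          triple_swap (fun bb => (β bb).toReal) (((2:ℝ) ^ n)⁻¹)
            (fun bb u g => Wf n δ (Xstr n m bb u) (xorF g (Xstr n m bb u))) q
      _ = ∑ g : Fin n → Bool, q g * T g := by
          apply Finset.sum_congr rfl
          intro g _
          congr 1
          apply Finset.sum_congr rfl
          intro bb _
          rw [R_formula n m hm2 δ bb i0 i1 hi0 hi1 g]
  -- invariance under permutations
  have hTinv : ∀ (σ : Equiv.Perm (Fin n)),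
      ∑ g : Fin n → Bool, q g * T (g ∘ ⇑σ) = ∑ g : Fin n → Bool, q g * T g := by
    intro σ
    have h1 := Equiv.sum_comp (compE σ) (fun g => q g * T g)
    calc ∑ g : Fin n → Bool, q g * T (g ∘ ⇑σ)
        = ∑ g : Fin n → Bool, q (g ∘ ⇑σ) * T (g ∘ ⇑σ) :=
          Finset.sum_congr rfl (fun g _ => by rw [hqperm σ g])
      _ = ∑ g : Fin n → Bool, q g * T g := h1
  -- core bound for each g
  have hcore : ∀ g : Fin n → Bool,
      ∑ t : Fin n, (T (g ∘ ⇑(Equiv.addRight t))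
        + T (g ∘ ⇑((Equiv.swap i0 i1).trans (Equiv.addRight t)))) ≤ 4 * δ := by
    intro g
    have h1 : ∀ t : Fin n, T (g ∘ ⇑(Equiv.addRight t))
        + T (g ∘ ⇑((Equiv.swap i0 i1).trans (Equiv.addRight t)))
        = ∑ bb : Bool, (β bb).toReal *
            (Rval n m δ bb i0 i1 (g ∘ ⇑(Equiv.addRight t))
              + Rval n m δ bb i0 i1 (g ∘ ⇑((Equiv.swap i0 i1).trans (Equiv.addRight t)))) := by
      intro t
      simp only [hT]
      rw [← Finset.sum_add_distrib]
      apply Finset.sum_congr rfl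
      intro bb _
      ring
    calc ∑ t : Fin n, (T (g ∘ ⇑(Equiv.addRight t))
        + T (g ∘ ⇑((Equiv.swap i0 i1).trans (Equiv.addRight t))))
        = ∑ t : Fin n, ∑ bb : Bool, (β bb).toReal *
            (Rval n m δ bb i0 i1 (g ∘ ⇑(Equiv.addRight t))
              + Rval n m δ bb i0 i1 (g ∘ ⇑((Equiv.swap i0 i1).trans (Equiv.addRight t)))) :=
          Finset.sum_congr rfl (fun t _ => h1 t)
      _ = ∑ bb : Bool, ∑ t : Fin n, (β bb).toReal *
            (Rval n m δ bb i0 i1 (g ∘ ⇑(Equiv.addRight t))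
              + Rval n m δ bb i0 i1 (g ∘ ⇑((Equiv.swap i0 i1).trans (Equiv.addRight t)))) :=
          Finset.sum_comm
      _ = ∑ bb : Bool, (β bb).toReal *
            ∑ t : Fin n, (Rval n m δ bb i0 i1 (g ∘ ⇑(Equiv.addRight t))
              + Rval n m δ bb i0 i1 (g ∘ ⇑((Equiv.swap i0 i1).trans (Equiv.addRight t)))) :=
          Finset.sum_congr rfl (fun bb _ => by rw [Finset.mul_sum])
      _ ≤ ∑ bb : Bool, (β bb).toReal * (4 * δ) := by
          apply Finset.sum_le_sum
          intro bb _
          exact mul_le_mul_of_nonneg_left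
            (per_b_bound n m hn he hm1 hm2 δ hδ0 hδ2 bb i0 i1 hi0 hi1 g) (hβ0 bb)
      _ = 4 * δ := by rw [← Finset.sum_mul, hβsum, one_mul]
  -- averaging over the 2n permutations
  have hkey : (2 * (n:ℝ)) * (∑ g : Fin n → Bool, q g * T g) ≤ 4 * δ := by
    calc (2 * (n:ℝ)) * (∑ g : Fin n → Bool, q g * T g)
        = ∑ t : Fin n, ((∑ g : Fin n → Bool, q g * T (g ∘ ⇑(Equiv.addRight t)))
            + (∑ g : Fin n → Bool, q g * T (g ∘ ⇑((Equiv.swap i0 i1).trans (Equiv.addRight t))))) := by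
          have h1 : ∀ t : Fin n, (∑ g : Fin n → Bool, q g * T (g ∘ ⇑(Equiv.addRight t)))
              + (∑ g : Fin n → Bool, q g * T (g ∘ ⇑((Equiv.swap i0 i1).trans (Equiv.addRight t))))
              = 2 * (∑ g : Fin n → Bool, q g * T g) := fun t => by
            rw [hTinv (Equiv.addRight t), hTinv ((Equiv.swap i0 i1).trans (Equiv.addRight t))]
            ring
          rw [Finset.sum_congr rfl (fun t _ => h1 t), Finset.sum_const, Finset.card_univ,
            Fintype.card_fin, nsmul_eq_mul]
          ring
      _ = ∑ g : Fin n → Bool, q g * (∑ t : Fin n, (T (g ∘ ⇑(Equiv.addRight t))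
            + T (g ∘ ⇑((Equiv.swap i0 i1).trans (Equiv.addRight t))))) := by
          calc ∑ t : Fin n, ((∑ g : Fin n → Bool, q g * T (g ∘ ⇑(Equiv.addRight t)))
              + (∑ g : Fin n → Bool, q g * T (g ∘ ⇑((Equiv.swap i0 i1).trans (Equiv.addRight t)))))
              = ∑ t : Fin n, ∑ g : Fin n → Bool, (q g * T (g ∘ ⇑(Equiv.addRight t))
                + q g * T (g ∘ ⇑((Equiv.swap i0 i1).trans (Equiv.addRight t)))) :=
              Finset.sum_congr rfl (fun t _ => by rw [← Finset.sum_add_distrib])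
            _ = ∑ g : Fin n → Bool, ∑ t : Fin n, (q g * T (g ∘ ⇑(Equiv.addRight t))
                + q g * T (g ∘ ⇑((Equiv.swap i0 i1).trans (Equiv.addRight t)))) :=
              Finset.sum_comm
            _ = ∑ g : Fin n → Bool, q g * (∑ t : Fin n, (T (g ∘ ⇑(Equiv.addRight t))
                + T (g ∘ ⇑((Equiv.swap i0 i1).trans (Equiv.addRight t))))) := by
              apply Finset.sum_congr rfl
              intro g _
              rw [Finset.mul_sum]
              apply Finset.sum_congr rfl
              intro t _
              ring
      _ ≤ ∑ g : Fin n → Bool, q g * (4 * δ) := by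
          apply Finset.sum_le_sum
          intro g _
          exact mul_le_mul_of_nonneg_left (hcore g) (hq0 g)
      _ = 4 * δ := by rw [← Finset.sum_mul, hqsum, one_mul]
  -- conclusion
  have hnR : (0:ℝ) < (n:ℝ) := by exact_mod_cast hn
  have hfinal : ∑ g : Fin n → Bool, q g * T g ≤ 2 * δ / n := by
    rw [le_div_iff₀ hnR]
    nlinarith [hkey]
  calc (∑ b : Bool, (β b).toReal *
      ∑ u : Fin n → Bool, ((PMF.uniformOfFintype (Fin n → Bool)) u).toReal *
        (∑ y : Fin n → Bool, ((V (Xstr n m b u)) y).toReal *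
          (if DLB (Xstr n m b u) ≤ DLB y then HLB δ y - HLB δ (Xstr n m b u) else 0)))
      = ∑ g : Fin n → Bool, q g * T g := hbig
    _ ≤ 2 * δ / n := hfinal
end

section
/- One-step drift of the Metropolis algorithm on DLB: Let n be an even positive integer and α > √2 + 1. For every x ∈ {0,1}^n with x ≠ (1,…,1), consider one step of the Metropolis algorithm with parameter α maximizing DLB started at x, i.e., the random state x' obtained as follows: choose i ∈ [1..n] uniformly at random, let y be x with bit i flipped, set x' = y with probability min(1, α^{DLB(y)−DLB(x)}) and x' = x otherwise. Then E[HLB_{3/2}(x') − HLB_{3/2}(x)] ≥ C(α)/n, where C(α) = (α⁴ − 6α² + 1)/(α(α² − 1)²). -/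
noncomputable def metroStep (n : ℕ) [NeZero n] (α : ℝ) (x : Fin n → Bool) :
    PMF (Fin n → Bool) :=
  (PMF.uniformOfFintype (Fin n)).bind fun i =>
    (PMF.bernoulli
        (Real.toNNReal (min 1
          (α ^ ((DLB (Function.update x i (!(x i))) : ℤ) - (DLB x : ℤ)))))
        (Real.toNNReal_le_one.mpr (min_le_left _ _))).bind fun b =>
      PMF.pure (if b then Function.update x i (!(x i)) else x)

/-! ### Auxiliary lemmas -/

lemma LOn_eq_s7 (n ℓ : ℕ) (z : ℕ → Bool) (hℓ : ℓ < n)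
    (hpre : ∀ s < ℓ, z s = true) (hz : z ℓ = false) : LOn n z = ℓ := by
  unfold LOn
  have : (Finset.range n).filter (fun r => ∀ s ≤ r, z s = true) = Finset.range ℓ := by
    ext r
    simp only [Finset.mem_filter, Finset.mem_range]
    constructor
    · rintro ⟨hrn, hall⟩
      by_contra h
      push_neg at h
      have := hall ℓ h
      rw [hz] at this; exact Bool.false_ne_true this
    · intro hr
      exact ⟨hr.trans hℓ, fun s hs => hpre s (lt_of_le_of_lt hs hr)⟩
  rw [this, Finset.card_range]

lemma exists_least_false {n : ℕ} (z : ℕ → Bool) (h : ¬ ∀ i < n, z i = true) :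
    ∃ ℓ, ℓ < n ∧ (∀ s < ℓ, z s = true) ∧ z ℓ = false := by
  push_neg at h
  obtain ⟨i, hi, hzi⟩ := h
  have hex : ∃ k, z k = false := ⟨i, Bool.not_eq_true _ ▸ hzi⟩
  classical
  refine ⟨Nat.find hex, lt_of_le_of_lt (Nat.find_le (Bool.not_eq_true _ ▸ hzi)) hi, ?_,
    Nat.find_spec hex⟩
  intro s hs
  have := Nat.find_min hex hs
  exact Bool.not_eq_false _ ▸ this

section eval
variable {n ℓ : ℕ} {z : ℕ → Bool} {δ : ℝ}

lemma not_all (hℓ : ℓ < n) (hz : z ℓ = false) : ¬ ∀ i < n, z i = true := by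
  intro h; rw [h ℓ hℓ] at hz; exact Bool.true_eq_false ▸ (by simp at hz)

lemma eval_even_00 (hℓ : ℓ < n) (hpre : ∀ s < ℓ, z s = true) (hz : z ℓ = false)
    (hev : ℓ % 2 = 0) (hz1 : z (ℓ + 1) = false) :
    DLBn n z = ℓ + 1 ∧ HLBn n δ z = ℓ := by
  have hna : ¬ ∀ i < n, z i = true := not_all hℓ hz
  have hL : LOn n z = ℓ := LOn_eq_s7 n ℓ z hℓ hpre hz
  have h2 : 2 * (LOn n z / 2) = ℓ := by omega
  constructor
  · rw [DLBn, if_neg hna, h2, if_pos ⟨hz, hz1⟩]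
  · rw [HLBn, if_neg hna, h2, if_pos ⟨hz, hz1⟩]

lemma eval_even_01 (hℓ : ℓ < n) (hpre : ∀ s < ℓ, z s = true) (hz : z ℓ = false)
    (hev : ℓ % 2 = 0) (hz1 : z (ℓ + 1) = true) :
    DLBn n z = ℓ ∧ HLBn n (3/2) z = (ℓ : ℝ) + 1/2 := by
  have hna : ¬ ∀ i < n, z i = true := not_all hℓ hz
  have hL : LOn n z = ℓ := LOn_eq_s7 n ℓ z hℓ hpre hz
  have h2 : 2 * (LOn n z / 2) = ℓ := by omega
  have hnb : ¬ (z (2 * (LOn n z / 2)) = false ∧ z (2 * (LOn n z / 2) + 1) = false) := by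
    rw [h2, hz1]; simp
  constructor
  · rw [DLBn, if_neg hna, if_neg hnb, h2]
  · rw [HLBn, if_neg hna, if_neg hnb, h2]; ring

lemma eval_odd (hℓ : ℓ < n) (hpre : ∀ s < ℓ, z s = true) (hz : z ℓ = false)
    (hodd : ℓ % 2 = 1) :
    DLBn n z = ℓ - 1 ∧ HLBn n (3/2) z = (ℓ : ℝ) - 1/2 := by
  have hna : ¬ ∀ i < n, z i = true := not_all hℓ hz
  have hL : LOn n z = ℓ := LOn_eq_s7 n ℓ z hℓ hpre hz
  have h2 : 2 * (LOn n z / 2) = ℓ - 1 := by omega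
  have hztrue : z (ℓ - 1) = true := hpre _ (by omega)
  have hnb : ¬ (z (2 * (LOn n z / 2)) = false ∧ z (2 * (LOn n z / 2) + 1) = false) := by
    rw [h2, hztrue]; simp
  refine ⟨by rw [DLBn, if_neg hna, if_neg hnb, h2], ?_⟩
  rw [HLBn, if_neg hna, if_neg hnb, h2]
  have h3 : ((ℓ - 1 : ℕ) : ℝ) = (ℓ : ℝ) - 1 := by
    have : 1 ≤ ℓ := by omega
    push_cast [this]; ring
  rw [h3]; ring

lemma eval_all (h : ∀ i < n, z i = true) : DLBn n z = n ∧ HLBn n δ z = n := by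
  constructor
  · rw [DLBn, if_pos h]
  · rw [HLBn, if_pos h]

lemma eval_ge {L : ℕ} (hL : ∀ s < L, z s = true) (hLn : L ≤ n) (hLe : L % 2 = 0) :
    L ≤ DLBn n z ∧ (L : ℝ) ≤ HLBn n (3/2) z := by
  by_cases hall : ∀ i < n, z i = true
  · obtain ⟨h1, h2⟩ := eval_all (δ := 3/2) hall
    rw [h1, h2]
    exact ⟨hLn, Nat.cast_le.mpr hLn⟩
  · obtain ⟨ℓ', hℓn, hpre, hz⟩ := exists_least_false z hall
    have hLle : L ≤ ℓ' := by
      by_contra h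
      push_neg at h
      rw [hL ℓ' h] at hz; simp at hz
    have h2 : L ≤ 2 * (LOn n z / 2) := by
      have := LOn_eq_s7 n ℓ' z hℓn hpre hz
      omega
    have hna := not_all hℓn hz
    constructor
    · rw [DLBn, if_neg hna]
      split <;> omega
    · rw [HLBn, if_neg hna]
      have : (L : ℝ) ≤ ((2 * (LOn n z / 2) : ℕ) : ℝ) := Nat.cast_le.mpr h2
      split
      · exact this
      · nlinarith [this]

end eval

section flips
variable {n ℓ : ℕ} {z : ℕ → Bool}

lemma flip_even (hℓ : ℓ < n) (hpre : ∀ s < ℓ, z s = true) (hz : z ℓ = false)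
    {v : ℕ} (hv : v + 1 < ℓ) (hve : v % 2 = 0) :
    DLBn n (Function.update z v (!z v)) = v ∧
      HLBn n (3/2) (Function.update z v (!z v)) = (v : ℝ) + 1/2 := by
  have hzv : z v = true := hpre v (by omega)
  apply eval_even_01 (by omega)
  · intro s hs
    rw [Function.update_of_ne (by omega)]
    exact hpre s (by omega)
  · rw [Function.update_self, hzv]; rfl
  · exact hve
  · rw [Function.update_of_ne (by omega)]
    exact hpre (v+1) hv

lemma flip_odd (hℓ : ℓ < n) (hpre : ∀ s < ℓ, z s = true) (hz : z ℓ = false)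
    {v : ℕ} (hv : v < ℓ) (hvo : v % 2 = 1) :
    DLBn n (Function.update z v (!z v)) = v - 1 ∧
      HLBn n (3/2) (Function.update z v (!z v)) = (v : ℝ) - 1/2 := by
  have hzv : z v = true := hpre v hv
  apply eval_odd (by omega)
  · intro s hs
    rw [Function.update_of_ne (by omega)]
    exact hpre s (by omega)
  · rw [Function.update_self, hzv]; rfl
  · exact hvo

lemma flip_far (hℓ : ℓ < n) (hpre : ∀ s < ℓ, z s = true) (hz : z ℓ = false)
    {v : ℕ} (hv : 2 * (ℓ / 2) + 1 < v) :
    HLBn n (3/2) (Function.update z v (!z v)) = HLBn n (3/2) z := by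
  set Y := Function.update z v (!z v) with hY
  have hYs : ∀ s, s < v → Y s = z s := fun s hs =>
    Function.update_of_ne (by omega) _ _
  have hpreY : ∀ s < ℓ, Y s = true := fun s hs => by
    rw [hYs s (by omega)]; exact hpre s hs
  have hzY : Y ℓ = false := by rw [hYs ℓ (by omega)]; exact hz
  have hLY : LOn n Y = ℓ := LOn_eq_s7 n ℓ Y hℓ hpreY hzY
  have hLz : LOn n z = ℓ := LOn_eq_s7 n ℓ z hℓ hpre hz
  have hnaY : ¬ ∀ i < n, Y i = true := not_all hℓ hzY
  have hnaz : ¬ ∀ i < n, z i = true := not_all hℓ hz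
  have h0 : Y (2*(ℓ/2)) = z (2*(ℓ/2)) := hYs _ (by omega)
  have h1 : Y (2*(ℓ/2)+1) = z (2*(ℓ/2)+1) := hYs _ (by omega)
  rw [HLBn, HLBn, if_neg hnaY, if_neg hnaz, hLY, hLz, h0, h1]

end flips

/-! ### Drift term bounds -/

lemma drift_term_any (α : ℝ) (hα0 : 0 < α) (d : ℤ) (u c : ℝ) (hu : c ≤ u) (hc : u ≤ 0) :
    c ≤ min 1 (α ^ d) * u := by
  have h1 : min 1 (α ^ d) ≤ 1 := min_le_left _ _
  have h0 : (0:ℝ) ≤ min 1 (α ^ d) := le_min zero_le_one (zpow_pos hα0 d).le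
  nlinarith

lemma drift_term_bound_neg (α : ℝ) (hα1 : 1 < α) (dY dX : ℕ) (hd : dY ≤ dX)
    (u c : ℝ) (hu : c ≤ u) (hc : u ≤ 0) :
    (α⁻¹)^(dX - dY) * c ≤ min 1 (α ^ ((dY : ℤ) - (dX : ℤ))) * u := by
  have hα0 : (0:ℝ) < α := by linarith
  have he : ((dY : ℤ) - (dX : ℤ)) = -((dX - dY : ℕ) : ℤ) := by omega
  have hpow : α ^ ((dY : ℤ) - (dX : ℤ)) = (α⁻¹)^(dX - dY) := by
    rw [he, zpow_neg, zpow_natCast, ← inv_pow]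
  have hple : min 1 (α ^ ((dY : ℤ) - (dX : ℤ))) ≤ (α⁻¹)^(dX - dY) := by
    rw [hpow]
    exact min_le_right _ _
  have hp : (0:ℝ) ≤ (α⁻¹)^(dX - dY) := by positivity
  calc (α⁻¹)^(dX - dY) * c ≤ (α⁻¹)^(dX - dY) * u := mul_le_mul_of_nonneg_left hu hp
    _ ≤ min 1 (α ^ ((dY : ℤ) - (dX : ℤ))) * u := mul_le_mul_of_nonpos_right hple hc

lemma drift_term_bound_pos (α : ℝ) (hα1 : 1 < α) (dY dX : ℕ) (hd : dX ≤ dY)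
    (u c : ℝ) (hu : c ≤ u) (hc : 0 ≤ c) :
    c ≤ min 1 (α ^ ((dY : ℤ) - (dX : ℤ))) * u := by
  have he : ((dY : ℤ) - (dX : ℤ)) = ((dY - dX : ℕ) : ℤ) := by omega
  have h1 : (1:ℝ) ≤ α ^ ((dY : ℤ) - (dX : ℤ)) := by
    rw [he, zpow_natCast]
    exact one_le_pow₀ hα1.le
  rw [min_eq_left h1]
  nlinarith

lemma drift_term_bound_half (α : ℝ) (hα1 : 1 < α) (dY dX : ℕ) (hd : dX = dY + 1)
    (u c : ℝ) (hu : c ≤ u) (hc : 0 ≤ c) :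
    α⁻¹ * c ≤ min 1 (α ^ ((dY : ℤ) - (dX : ℤ))) * u := by
  have hα0 : (0:ℝ) < α := by linarith
  have he : α ^ ((dY : ℤ) - (dX : ℤ)) = α⁻¹ := by
    have h2 : ((dY : ℤ) - (dX : ℤ)) = -1 := by omega
    rw [h2, zpow_neg_one]
  rw [he, min_eq_right (by rw [inv_le_one_iff₀]; right; linarith)]
  have h3 : (0:ℝ) ≤ α⁻¹ := by positivity
  exact mul_le_mul_of_nonneg_left hu h3

/-! ### Series bounds -/

lemma geom_id (t : ℝ) (m : ℕ) :
    (1 - t)^2 * ∑ k ∈ Finset.range m, ((k:ℝ)+1) * t^(k+1)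
      = t * (1 - ((m:ℝ)+1) * t^m + (m:ℝ) * t^(m+1)) - t * (1 - 1) := by
  induction m with
  | zero => simp
  | succ m ih =>
    rw [Finset.sum_range_succ, mul_add, ih]
    push_cast
    ring

lemma geom_bound (t : ℝ) (h0 : 0 ≤ t) (h1 : t ≤ 1) (m : ℕ) :
    (1 - t)^2 * ∑ k ∈ Finset.range m, ((k:ℝ)+1) * t^(k+1) ≤ t := by
  rw [geom_id]
  have h2 : (m:ℝ) * t^(m+1) ≤ ((m:ℝ)+1) * t^m := by
    have h3 : t^(m+1) ≤ t^m := pow_le_pow_of_le_one h0 h1 (by omega)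
    have h4 : (0:ℝ) ≤ (m:ℝ) := Nat.cast_nonneg m
    nlinarith [pow_nonneg h0 m]
  nlinarith

lemma sqrt_facts (α : ℝ) (hα : Real.sqrt 2 + 1 < α) :
    1 < α ∧ 0 < α ^ 2 - 2*α - 1 ∧ 0 ≤ α^4 - 6*α^2 + 1 := by
  have h2 : (Real.sqrt 2)^2 = 2 := Real.sq_sqrt (by norm_num)
  have h0 : 0 ≤ Real.sqrt 2 := Real.sqrt_nonneg 2
  have hα1 : 1 < α := by nlinarith
  have key : 0 < α ^ 2 - 2*α - 1 := by nlinarith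
  exact ⟨hα1, key, by nlinarith⟩

lemma key_bound (α : ℝ) (hα : Real.sqrt 2 + 1 < α) (β : ℝ) (hβ : 1 ≤ β * α)
    (hβ0 : 0 < β) (m : ℕ) :
    (α ^ 4 - 6 * α ^ 2 + 1) / (α * (α ^ 2 - 1) ^ 2) ≤
      β * (1 - 4 * ∑ j ∈ Finset.range m, ((m - j : ℕ) : ℝ) * ((α⁻¹)^2) ^ (m - j)) := by
  obtain ⟨hα1, hkey, hC0⟩ := sqrt_facts α hα
  have hα0 : 0 < α := by linarith
  set t : ℝ := (α⁻¹)^2 with ht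
  have ht0 : 0 ≤ t := by positivity
  have ht1 : t ≤ 1 := by
    rw [ht]
    have : α⁻¹ ≤ 1 := by
      rw [inv_le_one_iff₀]; right; linarith
    nlinarith [inv_nonneg.mpr hα0.le]
  have hre : ∑ j ∈ Finset.range m, ((m - j : ℕ) : ℝ) * t ^ (m - j)
      = ∑ k ∈ Finset.range m, ((k:ℝ)+1) * t^(k+1) := by
    rw [← Finset.sum_range_reflect]
    refine Finset.sum_congr rfl fun j hj => ?_
    rw [Finset.mem_range] at hj
    have h1 : m - (m - 1 - j) = j + 1 := by omega
    rw [h1]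
    push_cast
    ring
  rw [hre]
  set S := ∑ k ∈ Finset.range m, ((k:ℝ)+1) * t^(k+1) with hS
  have hSb : (1 - t)^2 * S ≤ t := geom_bound t ht0 ht1 m
  have hS0 : 0 ≤ S := by
    apply Finset.sum_nonneg
    intro k _
    positivity
  have hA1 : 0 < α^2 - 1 := by nlinarith
  have h1t : 1 - t = (α^2 - 1) / α^2 := by
    rw [ht]
    field_simp
  have hSb2 : (α^2 - 1)^2 * S ≤ α^2 := by
    rw [h1t] at hSb
    rw [div_pow, div_mul_eq_mul_div, div_le_iff₀ (by positivity : (0:ℝ) < (α^2)^2)] at hSb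
    have ht2 : t * (α ^ 2) ^ 2 = α ^ 2 := by
      rw [ht, inv_pow]
      field_simp
    linarith [hSb, ht2.le, ht2.ge]
  rw [div_le_iff₀ (by positivity : (0:ℝ) < α * (α^2-1)^2)]
  nlinarith [mul_nonneg (sub_nonneg.mpr hβ) hC0,
    mul_nonneg (mul_nonneg hβ0.le hα0.le) (sub_nonneg.mpr hSb2)]

/-! ### PMF computation -/

lemma metro_sum (n : ℕ) [NeZero n] (α : ℝ) (hα : 0 < α) (x : Fin n → Bool)
    (f : (Fin n → Bool) → ℝ) (hfx : f x = 0) :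
    ∑ x' : Fin n → Bool, ((metroStep n α x) x').toReal * f x' =
      (n : ℝ)⁻¹ * ∑ i : Fin n,
        min 1 (α ^ ((DLB (Function.update x i (!(x i))) : ℤ) - (DLB x : ℤ))) *
          f (Function.update x i (!(x i))) := by
  classical
  set y : Fin n → (Fin n → Bool) := fun i => Function.update x i (!(x i)) with hy
  set p : Fin n → ℝ := fun i => min 1 (α ^ ((DLB (y i) : ℤ) - (DLB x : ℤ))) with hp
  have hp0 : ∀ i, 0 ≤ p i := fun i => le_min zero_le_one (zpow_pos hα _).le
  have hp1 : ∀ i, p i ≤ 1 := fun i => min_le_left _ _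
  have happ : ∀ x', (metroStep n α x) x' =
      ∑ i : Fin n, (n : ENNReal)⁻¹ *
        (ENNReal.ofReal (p i) * (if x' = y i then 1 else 0) +
         (1 - ENNReal.ofReal (p i)) * (if x' = x then 1 else 0)) := by
    intro x'
    rw [metroStep]
    rw [PMF.bind_apply, tsum_fintype]
    congr 1
    ext i
    rw [PMF.uniformOfFintype_apply, PMF.bind_apply, tsum_bool]
    simp only [PMF.bernoulli_apply, PMF.pure_apply, Fintype.card_fin]
    simp only [cond_false, cond_true, if_true, if_false, Bool.false_eq_true]
    simp only [ENNReal.coe_sub, ENNReal.coe_one, ENNReal.ofReal]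
    ring
  have hfin : ∀ x' i, ((n : ENNReal)⁻¹ *
        (ENNReal.ofReal (p i) * (if x' = y i then 1 else 0) +
         (1 - ENNReal.ofReal (p i)) * (if x' = x then 1 else 0))) ≠ ⊤ := by
    intro x' i
    apply ENNReal.mul_ne_top
    · exact ENNReal.inv_ne_top.mpr (by simp [NeZero.ne n])
    · apply ENNReal.add_ne_top.mpr
      constructor
      · exact ENNReal.mul_ne_top ENNReal.ofReal_ne_top (by split <;> simp)
      · exact ENNReal.mul_ne_top
          (ne_top_of_le_ne_top ENNReal.one_ne_top tsub_le_self) (by split <;> simp)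
  have htr : ∀ x', ((metroStep n α x) x').toReal =
      ∑ i : Fin n, (n : ℝ)⁻¹ *
        (p i * (if x' = y i then 1 else 0) +
         (1 - p i) * (if x' = x then 1 else 0)) := by
    intro x'
    rw [happ, ENNReal.toReal_sum (fun i _ => hfin x' i)]
    congr 1
    ext i
    rw [ENNReal.toReal_mul, ENNReal.toReal_add, ENNReal.toReal_mul, ENNReal.toReal_mul]
    · congr 1
      · simp
      · congr 1
        · congr 1
          · exact ENNReal.toReal_ofReal (hp0 i)
          · split <;> simp
        · congr 1
          · rw [ENNReal.toReal_sub_of_le (ENNReal.ofReal_le_one.mpr (hp1 i)) ENNReal.one_ne_top]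
            simp [ENNReal.toReal_ofReal (hp0 i)]
          · split <;> simp
    · exact ENNReal.mul_ne_top ENNReal.ofReal_ne_top (by split <;> simp)
    · exact ENNReal.mul_ne_top
        (ne_top_of_le_ne_top ENNReal.one_ne_top tsub_le_self) (by split <;> simp)
  calc ∑ x' : Fin n → Bool, ((metroStep n α x) x').toReal * f x'
      = ∑ x' : Fin n → Bool, ∑ i : Fin n, (n : ℝ)⁻¹ *
          ((p i * (if x' = y i then 1 else 0) +
            (1 - p i) * (if x' = x then 1 else 0)) * f x') := by
        refine Finset.sum_congr rfl fun x' _ => ?_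
        rw [htr, Finset.sum_mul]
        exact Finset.sum_congr rfl fun i _ => by ring
    _ = ∑ i : Fin n, ∑ x' : Fin n → Bool, (n : ℝ)⁻¹ *
          ((p i * (if x' = y i then 1 else 0) +
            (1 - p i) * (if x' = x then 1 else 0)) * f x') := Finset.sum_comm
    _ = ∑ i : Fin n, (n : ℝ)⁻¹ * (p i * f (y i)) := by
        refine Finset.sum_congr rfl fun i _ => ?_
        rw [← Finset.mul_sum]
        congr 1
        have h4 : ∀ x', (p i * (if x' = y i then 1 else 0) +
            (1 - p i) * (if x' = x then 1 else 0)) * f x' =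
            (if x' = y i then p i * f x' else 0) + (if x' = x then (1 - p i) * f x' else 0) := by
          intro x'; split <;> split <;> ring
        rw [Finset.sum_congr rfl fun x' _ => h4 x']
        rw [Finset.sum_add_distrib, Finset.sum_ite_eq' Finset.univ (y i),
          Finset.sum_ite_eq' Finset.univ x]
        simp [hfx]
    _ = (n : ℝ)⁻¹ * ∑ i : Fin n, p i * f (y i) := by rw [Finset.mul_sum]

lemma toNatFun_update {n : ℕ} (x : Fin n → Bool) (i : Fin n) (b : Bool) :
    toNatFun (Function.update x i b) = Function.update (toNatFun x) i.val b := by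
  funext j
  by_cases h : j < n
  · by_cases hji : j = i.val
    · subst hji
      simp [toNatFun, Function.update_apply, h, Fin.ext_iff]
    · rw [Function.update_of_ne hji]
      simp only [toNatFun, dif_pos h]
      rw [Function.update_of_ne (by simp [Fin.ext_iff, hji])]
  · have hji : j ≠ i.val := by have := i.isLt; omega
    rw [Function.update_of_ne hji]
    simp only [toNatFun, dif_neg h]

/-! ### Per-pair bound -/

noncomputable def Gfun (n : ℕ) (α : ℝ) (X : ℕ → Bool) (v : ℕ) : ℝ :=
  min 1 (α ^ ((DLBn n (Function.update X v (!(X v))) : ℤ) - (DLBn n X : ℤ))) *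
    (HLBn n (3/2) (Function.update X v (!(X v))) - HLBn n (3/2) X)


lemma sum_range_pair (f : ℕ → ℝ) (m : ℕ) :
    ∑ v ∈ Finset.range (2*m), f v = ∑ j ∈ Finset.range m, (f (2*j) + f (2*j+1)) := by
  induction m with
  | zero => simp
  | succ m ih =>
    have h22 : 2*(m+1) = (2*m+1)+1 := by ring
    rw [h22, Finset.sum_range_succ, Finset.sum_range_succ, ih, Finset.sum_range_succ]
    ring

lemma pair_bound (n ℓ m e : ℕ) (α : ℝ) (hα1 : 1 < α) (X : ℕ → Bool)
    (hℓn : ℓ < n) (hpre : ∀ s < ℓ, X s = true) (hz : X ℓ = false)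
    (hlb : 2*m ≤ ℓ) (he : ℝ)
    (hDX : DLBn n X = 2*m + e) (hHX : HLBn n (3/2) X = ((2*m : ℕ) : ℝ) + he)
    (he0 : 0 ≤ he) (he1 : he ≤ 1/2) (j : ℕ) (hj : j < m) :
    (α⁻¹)^e * (-4 * ((m - j : ℕ) : ℝ) * ((α⁻¹)^2)^(m-j))
      ≤ Gfun n α X (2*j) + Gfun n α X (2*j+1) := by
  have hα0 : (0:ℝ) < α := by linarith
  have hK : ((m - j : ℕ) : ℝ) = (m : ℝ) - (j : ℝ) := by
    rw [Nat.cast_sub hj.le]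
  have hjm : (j:ℝ) + 1 ≤ (m:ℝ) := by exact_mod_cast hj
  obtain ⟨hD1, hH1⟩ := flip_even hℓn hpre hz (v := 2*j) (by omega) (by omega)
  obtain ⟨hD2, hH2⟩ := flip_odd hℓn hpre hz (v := 2*j+1) (by omega) (by omega)
  have hb1 : (α⁻¹)^(2*m + e - 2*j) * (-2*((m - j : ℕ) : ℝ)) ≤ Gfun n α X (2*j) := by
    simp only [Gfun]
    rw [hD1, hH1, hDX, hHX]
    apply drift_term_bound_neg α hα1
    · omega
    · rw [hK]; push_cast; linarith
    · push_cast; linarith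
  have hb2 : (α⁻¹)^(2*m + e - (2*j+1-1)) * (-2*((m - j : ℕ) : ℝ)) ≤ Gfun n α X (2*j+1) := by
    simp only [Gfun]
    rw [hD2, hH2, hDX, hHX]
    apply drift_term_bound_neg α hα1
    · omega
    · rw [hK]; push_cast; linarith
    · push_cast; linarith
  have hee : 2*m + e - (2*j+1-1) = 2*m + e - 2*j := by omega
  rw [hee] at hb2
  have hsplitpow : (α⁻¹:ℝ)^(2*m + e - 2*j) = (α⁻¹)^e * ((α⁻¹)^2)^(m-j) := by
    rw [← pow_mul, ← pow_add]
    congr 1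
    omega
  have hEq : (α⁻¹:ℝ)^e * (-4 * ((m - j : ℕ) : ℝ) * ((α⁻¹)^2)^(m-j))
      = (α⁻¹)^(2*m + e - 2*j) * (-2*((m - j : ℕ) : ℝ))
        + (α⁻¹)^(2*m + e - 2*j) * (-2*((m - j : ℕ) : ℝ)) := by
    rw [hsplitpow]; ring
  linarith

lemma assemble (n ℓ m e : ℕ) (α : ℝ) (hα : Real.sqrt 2 + 1 < α) (X : ℕ → Bool)
    (hℓn : ℓ < n) (hpre : ∀ s < ℓ, X s = true) (hz : X ℓ = false)
    (hlb : 2*m ≤ ℓ) (hub : ℓ ≤ 2*m+1) (hm2 : 2*m+2 ≤ n)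
    (he01 : e = 0 ∨ e = 1) (he : ℝ)
    (hDX : DLBn n X = 2*m + e) (hHX : HLBn n (3/2) X = ((2*m : ℕ) : ℝ) + he)
    (he0 : 0 ≤ he) (he1 : he ≤ 1/2)
    (hcrit : (α⁻¹)^e ≤ Gfun n α X (2*m) + Gfun n α X (2*m+1)) :
    (α ^ 4 - 6 * α ^ 2 + 1) / (α * (α ^ 2 - 1) ^ 2) ≤ ∑ v ∈ Finset.range n, Gfun n α X v := by
  obtain ⟨hα1, -, -⟩ := sqrt_facts α hα
  have hα0 : (0:ℝ) < α := by linarith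
  have hβ0 : (0:ℝ) < (α⁻¹)^e := by positivity
  have hβα : 1 ≤ (α⁻¹)^e * α := by
    rcases he01 with h | h <;> subst h
    · simpa using hα1.le
    · rw [pow_one, inv_mul_cancel₀ (by linarith)]
  have hfarsum : ∑ v ∈ Finset.Ico (2*m+2) n, Gfun n α X v = 0 := by
    apply Finset.sum_eq_zero
    intro v hv
    rw [Finset.mem_Ico] at hv
    have hH := flip_far hℓn hpre hz (v := v) (by omega)
    simp only [Gfun]
    rw [hH, sub_self, mul_zero]
  have h22 : 2*m+2 = (2*m+1)+1 := by ring
  have hGrw : ∑ v ∈ Finset.range n, Gfun n α X v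
      = (∑ j ∈ Finset.range m, (Gfun n α X (2*j) + Gfun n α X (2*j+1)))
        + (Gfun n α X (2*m) + Gfun n α X (2*m+1)) := by
    rw [← Finset.sum_range_add_sum_Ico _ hm2, hfarsum, add_zero, h22,
      Finset.sum_range_succ, Finset.sum_range_succ, sum_range_pair]
    ring
  rw [hGrw]
  have hpair : ∀ j ∈ Finset.range m,
      (α⁻¹)^e * (-4 * ((m - j : ℕ) : ℝ) * ((α⁻¹)^2)^(m-j))
        ≤ Gfun n α X (2*j) + Gfun n α X (2*j+1) := by
    intro j hj
    rw [Finset.mem_range] at hj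
    exact pair_bound n ℓ m e α hα1 X hℓn hpre hz hlb he hDX hHX he0 he1 j hj
  have hX1 : ∑ j ∈ Finset.range m, (α⁻¹:ℝ)^e * (-4 * ((m - j : ℕ) : ℝ) * ((α⁻¹)^2)^(m-j))
      = (-(4*(α⁻¹)^e)) * ∑ j ∈ Finset.range m, ((m - j : ℕ) : ℝ) * ((α⁻¹)^2)^(m-j) := by
    rw [Finset.mul_sum]
    exact Finset.sum_congr rfl fun j _ => by ring
  calc (α ^ 4 - 6 * α ^ 2 + 1) / (α * (α ^ 2 - 1) ^ 2)
      ≤ (α⁻¹)^e * (1 - 4 * ∑ j ∈ Finset.range m, ((m - j : ℕ) : ℝ) * ((α⁻¹)^2)^(m-j)) :=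
        key_bound α hα _ hβα hβ0 m
    _ = (∑ j ∈ Finset.range m, (α⁻¹:ℝ)^e * (-4 * ((m - j : ℕ) : ℝ) * ((α⁻¹)^2)^(m-j)))
        + (α⁻¹)^e := by rw [hX1]; ring
    _ ≤ _ := add_le_add (Finset.sum_le_sum hpair) hcrit

/-- **One-step drift of the Metropolis algorithm on DLB.** Let `n` be an even
positive integer and `α > √2 + 1`. For every non-optimal `x ∈ {0,1}^n`, the
expected one-step gain in `HLB_{3/2}` of the Metropolis algorithm with parameter
`α` on `DLB` started at `x` is at least `C(α)/n`, where
`C(α) = (α⁴ - 6α² + 1)/(α(α² - 1)²)`. -/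
theorem metropolis_one_step_drift (n : ℕ) [NeZero n] (he : Even n)
    (α : ℝ) (hα : Real.sqrt 2 + 1 < α)
    (x : Fin n → Bool) (hx : x ≠ fun _ => true) :
    (α ^ 4 - 6 * α ^ 2 + 1) / (α * (α ^ 2 - 1) ^ 2) / n ≤
      ∑ x' : Fin n → Bool, ((metroStep n α x) x').toReal *
        (HLB (3 / 2) x' - HLB (3 / 2) x) := by
  classical
  obtain ⟨hα1, hkey, hC0⟩ := sqrt_facts α hα
  have hα0 : (0:ℝ) < α := by linarith
  have hnotall : ¬ ∀ i < n, toNatFun x i = true := by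
    intro h
    apply hx
    funext j
    have h2 := h j.val j.isLt
    simpa [toNatFun] using h2
  obtain ⟨ℓ, hℓn, hpre, hz⟩ := exists_least_false (toNatFun x) hnotall
  set X : ℕ → Bool := toNatFun x with hX
  set m := ℓ / 2 with hm
  have hn2 : n % 2 = 0 := Nat.even_iff.mp he
  have hm2 : 2 * m + 2 ≤ n := by omega
  rw [metro_sum n α hα0 x (fun x' => HLB (3 / 2) x' - HLB (3 / 2) x) (sub_self _)]
  have hsum : ∑ i : Fin n,
      min 1 (α ^ ((DLB (Function.update x i (!(x i))) : ℤ) - (DLB x : ℤ))) *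
        (HLB (3 / 2) (Function.update x i (!(x i))) - HLB (3 / 2) x)
      = ∑ v ∈ Finset.range n, Gfun n α X v := by
    rw [← Fin.sum_univ_eq_sum_range (fun v => Gfun n α X v) n]
    refine Finset.sum_congr rfl fun i _ => ?_
    have hxX : X i.val = x i := by simp [hX, toNatFun]
    simp only [Gfun, DLB, HLB, toNatFun_update, ← hX, hxX]
  rw [hsum]
  have hcore : (α ^ 4 - 6 * α ^ 2 + 1) / (α * (α ^ 2 - 1) ^ 2)
      ≤ ∑ v ∈ Finset.range n, Gfun n α X v := by
    rcases Nat.mod_two_eq_zero_or_one ℓ with hpar | hpar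
    · -- ℓ even
      have hℓm : ℓ = 2*m := by omega
      rw [hℓm] at hpre hz hℓn
      cases hb : X (2*m+1) with
      | false =>
        -- Case A : critical block 00
        obtain ⟨hDX, hHX⟩ := eval_even_00 (δ := 3/2) hℓn hpre hz (by omega) hb
        have hc1 : α⁻¹ * (1/2) ≤ Gfun n α X (2*m) := by
          have hY1 : ∀ s < 2*m+1, Function.update X (2*m) (!(X (2*m))) s = true := by
            intro s hs
            rcases Nat.lt_or_ge s (2*m) with h | h
            · rw [Function.update_of_ne (by omega)]; exact hpre s h
            · have hs2 : s = 2*m := by omega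
              subst hs2
              rw [Function.update_self, hz]
              rfl
          have hY2 : Function.update X (2*m) (!(X (2*m))) (2*m+1) = false := by
            rw [Function.update_of_ne (by omega)]; exact hb
          obtain ⟨hD, hH⟩ := eval_odd (show 2*m+1 < n by omega) hY1 hY2 (by omega)
          simp only [Gfun]
          rw [hD, hH, hDX, hHX]
          apply drift_term_bound_half α hα1
          · omega
          · push_cast; linarith
          · norm_num
        have hc2 : α⁻¹ * (1/2) ≤ Gfun n α X (2*m+1) := by
          have hY1 : ∀ s < 2*m, Function.update X (2*m+1) (!(X (2*m+1))) s = true := by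
            intro s hs
            rw [Function.update_of_ne (by omega)]; exact hpre s hs
          have hY2 : Function.update X (2*m+1) (!(X (2*m+1))) (2*m) = false := by
            rw [Function.update_of_ne (by omega)]; exact hz
          have hY3 : Function.update X (2*m+1) (!(X (2*m+1))) (2*m+1) = true := by
            rw [Function.update_self, hb]
            rfl
          obtain ⟨hD, hH⟩ := eval_even_01 (show 2*m < n by omega) hY1 hY2 (by omega) hY3
          simp only [Gfun]
          rw [hD, hH, hDX, hHX]
          apply drift_term_bound_half α hα1
          · omega
          · push_cast; linarith
          · norm_num
        have hcrit : (α⁻¹:ℝ)^1 ≤ Gfun n α X (2*m) + Gfun n α X (2*m+1) := by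
          rw [pow_one]; linarith
        exact assemble n (2*m) m 1 α hα X hℓn hpre hz le_rfl (by omega) hm2 (Or.inr rfl)
          0 hDX (by rw [hHX]; ring) le_rfl (by norm_num) hcrit
      | true =>
        -- Case B2 : critical block 01
        obtain ⟨hDX, hHX⟩ := eval_even_01 hℓn hpre hz (by omega) hb
        have hc1 : (3:ℝ)/2 ≤ Gfun n α X (2*m) := by
          have hY1 : ∀ s < 2*m+2, Function.update X (2*m) (!(X (2*m))) s = true := by
            intro s hs
            rcases Nat.lt_or_ge s (2*m) with h | h
            · rw [Function.update_of_ne (by omega)]; exact hpre s h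
            · rcases Nat.lt_or_ge s (2*m+1) with h' | h'
              · have hs2 : s = 2*m := by omega
                subst hs2
                rw [Function.update_self, hz]
                rfl
              · have hs2 : s = 2*m+1 := by omega
                subst hs2
                rw [Function.update_of_ne (by omega)]; exact hb
          obtain ⟨hD, hH⟩ := eval_ge hY1 hm2 (by omega)
          simp only [Gfun]
          apply drift_term_bound_pos α hα1
          · omega
          · rw [hHX]
            push_cast at hH ⊢
            linarith
          · norm_num
        have hc2 : (-1:ℝ)/2 ≤ Gfun n α X (2*m+1) := by
          have hY1 : ∀ s < 2*m, Function.update X (2*m+1) (!(X (2*m+1))) s = true := by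
            intro s hs
            rw [Function.update_of_ne (by omega)]; exact hpre s hs
          have hY2 : Function.update X (2*m+1) (!(X (2*m+1))) (2*m) = false := by
            rw [Function.update_of_ne (by omega)]; exact hz
          have hY3 : Function.update X (2*m+1) (!(X (2*m+1))) (2*m+1) = false := by
            rw [Function.update_self, hb]
            rfl
          obtain ⟨hD, hH⟩ := eval_even_00 (δ := 3/2) (show 2*m < n by omega) hY1 hY2 (by omega) hY3
          simp only [Gfun]
          rw [hD, hH, hDX, hHX]
          apply drift_term_any α hα0
          · push_cast; linarith
          · push_cast; linarith
        have hcrit : (α⁻¹:ℝ)^0 ≤ Gfun n α X (2*m) + Gfun n α X (2*m+1) := by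
          rw [pow_zero]; linarith
        exact assemble n (2*m) m 0 α hα X hℓn hpre hz le_rfl (by omega) hm2 (Or.inl rfl)
          (1/2) (by omega) hHX (by norm_num) le_rfl hcrit
    · -- ℓ odd : Case B1, critical block 10
      have hℓm : ℓ = 2*m+1 := by omega
      rw [hℓm] at hpre hz hℓn
      obtain ⟨hDX0, hHX0⟩ := eval_odd hℓn hpre hz (by omega)
      have hDX : DLBn n X = 2*m := by omega
      have hHX : HLBn n (3/2) X = ((2*m : ℕ) : ℝ) + 1/2 := by
        rw [hHX0]; push_cast; ring
      have hc1 : (-1:ℝ)/2 ≤ Gfun n α X (2*m) := by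
        have hY1 : ∀ s < 2*m, Function.update X (2*m) (!(X (2*m))) s = true := by
          intro s hs
          rw [Function.update_of_ne (by omega)]; exact hpre s (by omega)
        have hY2 : Function.update X (2*m) (!(X (2*m))) (2*m) = false := by
          rw [Function.update_self, hpre (2*m) (by omega)]
          rfl
        have hY3 : Function.update X (2*m) (!(X (2*m))) (2*m+1) = false := by
          rw [Function.update_of_ne (by omega)]; exact hz
        obtain ⟨hD, hH⟩ := eval_even_00 (δ := 3/2) (show 2*m < n by omega) hY1 hY2 (by omega) hY3
        simp only [Gfun]
        rw [hD, hH, hDX, hHX]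
        apply drift_term_any α hα0
        · push_cast; linarith
        · push_cast; linarith
      have hc2 : (3:ℝ)/2 ≤ Gfun n α X (2*m+1) := by
        have hY1 : ∀ s < 2*m+2, Function.update X (2*m+1) (!(X (2*m+1))) s = true := by
          intro s hs
          rcases Nat.lt_or_ge s (2*m+1) with h | h
          · rw [Function.update_of_ne (by omega)]; exact hpre s h
          · have hs2 : s = 2*m+1 := by omega
            subst hs2
            rw [Function.update_self, hz]
            rfl
        obtain ⟨hD, hH⟩ := eval_ge hY1 hm2 (by omega)
        simp only [Gfun]
        apply drift_term_bound_pos α hα1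
        · omega
        · rw [hHX]
          push_cast at hH ⊢
          linarith
        · norm_num
      have hcrit : (α⁻¹:ℝ)^0 ≤ Gfun n α X (2*m) + Gfun n α X (2*m+1) := by
        rw [pow_zero]; linarith
      exact assemble n (2*m+1) m 0 α hα X hℓn hpre hz (by omega) (by omega) hm2 (Or.inl rfl)
        (1/2) (by omega) hHX (by norm_num) le_rfl hcrit
  calc (α ^ 4 - 6 * α ^ 2 + 1) / (α * (α ^ 2 - 1) ^ 2) / n
      = (n:ℝ)⁻¹ * ((α ^ 4 - 6 * α ^ 2 + 1) / (α * (α ^ 2 - 1) ^ 2)) := by ring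
    _ ≤ (n:ℝ)⁻¹ * ∑ v ∈ Finset.range n, Gfun n α X v :=
        mul_le_mul_of_nonneg_left hcore (by positivity)
end

section
/- Runtime of the Metropolis algorithm on DLB: Let n be an even positive integer and α > √2 + 1. Consider the Metropolis algorithm with parameter α maximizing DLB, i.e., the Markov chain on {0,1}^n whose one-step transition from a state x is: choose i ∈ [1..n] uniformly at random, let y be x with bit i flipped, move to y with probability min(1, α^{DLB(y)−DLB(x)}) and stay at x otherwise. Then, from any initial state, the expected number of steps until the chain first reaches the optimum (1,…,1) is at most n²/C(α), where C(α) = (α⁴ − 6α² + 1)/(α(α² − 1)²) > 0. -/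
/-- `t`-fold iteration of a Markov transition rule `step`, started at `x`. -/
noncomputable def iterStep {S : Type*} (step : S → PMF S) : ℕ → S → PMF S
  | 0, x => PMF.pure x
  | t + 1, x => (iterStep step t x).bind step

namespace MetroDLB

lemma not_allOnes {n k : ℕ} {x : ℕ → Bool} (hk : k < n) (h2 : x k = false) :
    ¬ ∀ i < n, x i = true := by
  intro h
  rw [h k hk] at h2
  simp at h2

lemma LOn_eq (n k : ℕ) (x : ℕ → Bool) (hkn : k ≤ n)
    (h1 : ∀ s, s < k → x s = true) (h2 : x k = false) : LOn n x = k := by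
  unfold LOn
  have hfe : (Finset.range n).filter (fun r => ∀ s ≤ r, x s = true) = Finset.range k := by
    ext r
    simp only [Finset.mem_filter, Finset.mem_range]
    constructor
    · rintro ⟨hrn, hr⟩
      by_contra hcon
      push_neg at hcon
      have := hr k hcon
      rw [h2] at this
      simp at this
    · intro hrk
      exact ⟨lt_of_lt_of_le hrk hkn, fun s hs => h1 s (lt_of_le_of_lt hs hrk)⟩
  rw [hfe, Finset.card_range]

lemma DLBn_char (n k : ℕ) (x : ℕ → Bool) (hk : k < n)
    (h1 : ∀ s, s < k → x s = true) (h2 : x k = false) :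
    DLBn n x = if x (2 * (k / 2)) = false ∧ x (2 * (k / 2) + 1) = false
      then 2 * (k / 2) + 1 else 2 * (k / 2) := by
  unfold DLBn
  rw [if_neg (not_allOnes hk h2), LOn_eq n k x hk.le h1 h2]

lemma HLBn_char (n k : ℕ) (δ : ℝ) (x : ℕ → Bool) (hk : k < n)
    (h1 : ∀ s, s < k → x s = true) (h2 : x k = false) :
    HLBn n δ x = if x (2 * (k / 2)) = false ∧ x (2 * (k / 2) + 1) = false
      then ((2 * (k / 2) : ℕ) : ℝ) else ((2 * (k / 2) : ℕ) : ℝ) + 2 - δ := by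
  unfold HLBn
  rw [if_neg (not_allOnes hk h2), LOn_eq n k x hk.le h1 h2]

lemma eval_00 (n m : ℕ) (δ : ℝ) (x : ℕ → Bool) (hn : 2 * m + 1 < n)
    (h1 : ∀ s, s < 2 * m → x s = true) (ha : x (2 * m) = false)
    (hb : x (2 * m + 1) = false) :
    DLBn n x = 2 * m + 1 ∧ HLBn n δ x = ((2 * m : ℕ) : ℝ) := by
  have hk : 2 * m < n := by omega
  have hd : (2 * m) / 2 = m := by omega
  constructor
  · rw [DLBn_char n (2 * m) x hk h1 ha, hd, if_pos ⟨ha, hb⟩]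
  · rw [HLBn_char n (2 * m) δ x hk h1 ha, hd, if_pos ⟨ha, hb⟩]

lemma eval_01 (n m : ℕ) (δ : ℝ) (x : ℕ → Bool) (hn : 2 * m + 1 < n)
    (h1 : ∀ s, s < 2 * m → x s = true) (ha : x (2 * m) = false)
    (hb : x (2 * m + 1) = true) :
    DLBn n x = 2 * m ∧ HLBn n δ x = (2 * m : ℕ) + 2 - δ := by
  have hk : 2 * m < n := by omega
  have hd : (2 * m) / 2 = m := by omega
  have hcond : ¬(x (2 * m) = false ∧ x (2 * m + 1) = false) := by
    rintro ⟨-, h⟩; rw [hb] at h; simp at h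
  constructor
  · rw [DLBn_char n (2 * m) x hk h1 ha, hd, if_neg hcond]
  · rw [HLBn_char n (2 * m) δ x hk h1 ha, hd, if_neg hcond]

lemma eval_10 (n m : ℕ) (δ : ℝ) (x : ℕ → Bool) (hn : 2 * m + 1 < n)
    (h1 : ∀ s, s < 2 * m → x s = true) (ha : x (2 * m) = true)
    (hb : x (2 * m + 1) = false) :
    DLBn n x = 2 * m ∧ HLBn n δ x = (2 * m : ℕ) + 2 - δ := by
  have h1' : ∀ s, s < 2 * m + 1 → x s = true := by
    intro s hs
    rcases Nat.lt_or_ge s (2 * m) with h | h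
    · exact h1 s h
    · have : s = 2 * m := by omega
      rw [this]; exact ha
  have hd : (2 * m + 1) / 2 = m := by omega
  have hcond : ¬(x (2 * m) = false ∧ x (2 * m + 1) = false) := by
    rintro ⟨h, -⟩; rw [ha] at h; simp at h
  constructor
  · rw [DLBn_char n (2 * m + 1) x hn h1' hb, hd, if_neg hcond]
  · rw [HLBn_char n (2 * m + 1) δ x hn h1' hb, hd, if_neg hcond]

lemma eval_ge (n m : ℕ) (δ : ℝ) (x : ℕ → Bool) (hn : 2 * m + 2 ≤ n) (hδ : δ ≤ 2)
    (h1 : ∀ s, s < 2 * m + 2 → x s = true) :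
    2 * m + 2 ≤ DLBn n x ∧ ((2 * m : ℝ) + 2) ≤ HLBn n δ x := by
  by_cases hall : ∀ i < n, x i = true
  · unfold DLBn HLBn
    rw [if_pos hall, if_pos hall]
    refine ⟨hn, ?_⟩
    have : ((2 * m + 2 : ℕ) : ℝ) ≤ (n : ℝ) := Nat.cast_le.mpr hn
    push_cast at this
    linarith
  · push_neg at hall
    obtain ⟨i, hin, hxi⟩ := hall
    have hxi' : x i = false := by
      cases h : x i
      · rfl
      · exact absurd h hxi
    have hex : ∃ j, x j = false := ⟨i, hxi'⟩
    classical
    set k := Nat.find hex with hkdef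
    have hkf : x k = false := Nat.find_spec hex
    have hkmin : ∀ s, s < k → x s = true := by
      intro s hs
      have := Nat.find_min hex hs
      cases h : x s
      · exact absurd h this
      · rfl
    have hkn : k < n := by
      by_contra hge
      push_neg at hge
      rw [hkmin i (lt_of_lt_of_le hin hge)] at hxi'
      simp at hxi'
    have hkge : 2 * m + 2 ≤ k := by
      by_contra hlt
      push_neg at hlt
      rw [h1 k hlt] at hkf
      simp at hkf
    have hmge : m + 1 ≤ k / 2 := by omega
    constructor
    · rw [DLBn_char n k x hkn hkmin hkf]
      split <;> omega
    · rw [HLBn_char n k δ x hkn hkmin hkf]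
      have hc : ((2 * (m + 1) : ℕ) : ℝ) ≤ ((2 * (k / 2) : ℕ) : ℝ) :=
        Nat.cast_le.mpr (by omega)
      push_cast at hc
      split
      · push_cast; linarith
      · push_cast; linarith


lemma HLBn_bounds (n : ℕ) (δ : ℝ) (x : ℕ → Bool) (hδ0 : 0 ≤ δ) (hδ2 : δ ≤ 2)
    (he : Even n) : 0 ≤ HLBn n δ x ∧ HLBn n δ x ≤ n := by
  classical
  by_cases hall : ∀ i < n, x i = true
  · unfold HLBn; rw [if_pos hall]
    exact ⟨Nat.cast_nonneg n, le_refl _⟩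
  · push_neg at hall
    obtain ⟨i, hin, hxi⟩ := hall
    have hxi' : x i = false := by
      cases h : x i
      · rfl
      · exact absurd h hxi
    have hex : ∃ j, x j = false := ⟨i, hxi'⟩
    set k := Nat.find hex with hkdef
    have hkf : x k = false := Nat.find_spec hex
    have hkmin : ∀ s, s < k → x s = true := by
      intro s hs
      have := Nat.find_min hex hs
      cases h : x s
      · exact absurd h this
      · rfl
    have hkn : k < n := by
      by_contra hge
      push_neg at hge
      rw [hkmin i (lt_of_lt_of_le hin hge)] at hxi'
      simp at hxi'
    obtain ⟨c, hc⟩ := he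
    have hb1 : 2 * (k / 2) ≤ n := by omega
    have hb2 : 2 * (k / 2) + 2 ≤ n := by omega
    rw [HLBn_char n k δ x hkn hkmin hkf]
    have c1 : ((2 * (k / 2) : ℕ) : ℝ) ≤ (n : ℝ) := Nat.cast_le.mpr hb1
    have c2 : ((2 * (k / 2) : ℕ) : ℝ) + 2 ≤ (n : ℝ) := by
      have := Nat.cast_le (α := ℝ).mpr hb2
      push_cast at this ⊢
      linarith
    have c0 : (0 : ℝ) ≤ ((2 * (k / 2) : ℕ) : ℝ) := Nat.cast_nonneg _
    split
    · exact ⟨c0, c1⟩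
    · constructor <;> linarith

section FinLevel

variable {n : ℕ}

lemma tnf_update_ne (x : Fin n → Bool) (i : Fin n) (b : Bool) {j : ℕ}
    (hj : j ≠ (i : ℕ)) : toNatFun (Function.update x i b) j = toNatFun x j := by
  unfold toNatFun
  by_cases h : j < n
  · rw [dif_pos h, dif_pos h, Function.update_apply]
    rw [if_neg]
    intro hji
    exact hj (by simpa [Fin.ext_iff] using hji)
  · rw [dif_neg h, dif_neg h]

lemma tnf_update_self (x : Fin n → Bool) (i : Fin n) (b : Bool) :
    toNatFun (Function.update x i b) (i : ℕ) = b := by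
  unfold toNatFun
  rw [dif_pos i.isLt]
  simp [Function.update_apply]

lemma tnf_eq_true (x : Fin n → Bool) (i : Fin n) :
    toNatFun x (i : ℕ) = x i := by
  unfold toNatFun
  rw [dif_pos i.isLt]

lemma ne_opt_exists (x : Fin n → Bool) (hx : x ≠ fun _ => true) :
    ∃ L, L < n ∧ (∀ s, s < L → toNatFun x s = true) ∧ toNatFun x L = false := by
  classical
  have : ∃ i : Fin n, x i = false := by
    by_contra hco
    push_neg at hco
    apply hx
    funext j
    cases h : x j
    · exact absurd h (hco j)
    · rfl
  obtain ⟨i, hi⟩ := this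
  have hex : ∃ j, toNatFun x j = false := ⟨i, by rw [tnf_eq_true]; exact hi⟩
  refine ⟨Nat.find hex, ?_, ?_, Nat.find_spec hex⟩
  · by_contra hge
    push_neg at hge
    have : toNatFun x (i : ℕ) = true := by
      have hlt : (i : ℕ) < Nat.find hex := lt_of_lt_of_le i.isLt hge
      have := Nat.find_min hex hlt
      cases h : toNatFun x (i : ℕ)
      · exact absurd h this
      · rfl
    rw [tnf_eq_true] at this
    rw [hi] at this
    simp at this
  · intro s hs
    have := Nat.find_min hex hs
    cases h : toNatFun x s
    · exact absurd h this
    · rfl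


lemma flip_lead (δ : ℝ) (x : Fin n → Bool) {L : ℕ} (hL : L < n)
    (hLt : ∀ s, s < L → toNatFun x s = true) (i : Fin n)
    (hij : (i : ℕ) < 2 * (L / 2)) :
    DLB (Function.update x i (!(x i))) = 2 * ((i : ℕ) / 2) ∧
    HLB δ (Function.update x i (!(x i))) = ((2 * ((i : ℕ) / 2) : ℕ) : ℝ) + 2 - δ := by
  have hxi : x i = true := by
    have := hLt (i : ℕ) (by omega)
    rwa [tnf_eq_true] at this
  set y := Function.update x i (!(x i)) with hy
  have hyi : toNatFun y (i : ℕ) = false := by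
    rw [hy, tnf_update_self, hxi]
    rfl
  have hyne : ∀ s : ℕ, s ≠ (i : ℕ) → toNatFun y s = toNatFun x s :=
    fun s hs => tnf_update_ne x i _ hs
  rcases Nat.even_or_odd (i : ℕ) with he | ho
  · -- i even : block (0,1) at m' = i/2
    obtain ⟨c, hc⟩ := he
    have hieq : (i : ℕ) = 2 * ((i : ℕ) / 2) := by omega
    have hn' : 2 * ((i : ℕ) / 2) + 1 < n := by omega
    have h1 : ∀ s, s < 2 * ((i : ℕ) / 2) → toNatFun y s = true := by
      intro s hs
      rw [hyne s (by omega)]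
      exact hLt s (by omega)
    have ha : toNatFun y (2 * ((i : ℕ) / 2)) = false := by rw [← hieq]; exact hyi
    have hb : toNatFun y (2 * ((i : ℕ) / 2) + 1) = true := by
      rw [hyne _ (by omega)]
      exact hLt _ (by omega)
    exact eval_01 n ((i : ℕ) / 2) δ (toNatFun y) hn' h1 ha hb
  · -- i odd : block (1,0) at m' = i/2
    have hieq : (i : ℕ) = 2 * ((i : ℕ) / 2) + 1 := by
      obtain ⟨c, hc⟩ := ho; omega
    have hn' : 2 * ((i : ℕ) / 2) + 1 < n := by omega
    have h1 : ∀ s, s < 2 * ((i : ℕ) / 2) → toNatFun y s = true := by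
      intro s hs
      rw [hyne s (by omega)]
      exact hLt s (by omega)
    have ha : toNatFun y (2 * ((i : ℕ) / 2)) = true := by
      rw [hyne _ (by omega)]
      exact hLt _ (by omega)
    have hb : toNatFun y (2 * ((i : ℕ) / 2) + 1) = false := by rw [← hieq]; exact hyi
    exact eval_10 n ((i : ℕ) / 2) δ (toNatFun y) hn' h1 ha hb

lemma flip_high (δ : ℝ) (x : Fin n → Bool) {L : ℕ} (hL : L < n)
    (hLt : ∀ s, s < L → toNatFun x s = true) (hLf : toNatFun x L = false)
    (i : Fin n) (hij : 2 * (L / 2) + 2 ≤ (i : ℕ)) :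
    DLB (Function.update x i (!(x i))) = DLB x ∧
    HLB δ (Function.update x i (!(x i))) = HLB δ x := by
  set y := Function.update x i (!(x i)) with hy
  have hyne : ∀ s : ℕ, s ≠ (i : ℕ) → toNatFun y s = toNatFun x s :=
    fun s hs => tnf_update_ne x i _ hs
  have hLle : L ≤ 2 * (L / 2) + 1 := by omega
  have h1 : ∀ s, s < L → toNatFun y s = true := by
    intro s hs
    rw [hyne s (by omega)]
    exact hLt s hs
  have hf : toNatFun y L = false := by
    rw [hyne L (by omega)]
    exact hLf
  have e1 : toNatFun y (2 * (L / 2)) = toNatFun x (2 * (L / 2)) := hyne _ (by omega)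
  have e2 : toNatFun y (2 * (L / 2) + 1) = toNatFun x (2 * (L / 2) + 1) :=
    hyne _ (by omega)
  constructor
  · show DLBn n (toNatFun y) = DLBn n (toNatFun x)
    rw [DLBn_char n L (toNatFun y) hL h1 hf, DLBn_char n L (toNatFun x) hL hLt hLf,
      e1, e2]
  · show HLBn n δ (toNatFun y) = HLBn n δ (toNatFun x)
    rw [HLBn_char n L δ (toNatFun y) hL h1 hf, HLBn_char n L δ (toNatFun x) hL hLt hLf,
      e1, e2]

end FinLevel


lemma sum_div2 (f : ℕ → ℝ) (m : ℕ) :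
    ∑ j ∈ Finset.range (2 * m), f (j / 2) = 2 * ∑ k ∈ Finset.range m, f k := by
  induction m with
  | zero => simp
  | succ m ih =>
    have h2 : 2 * (m + 1) = (2 * m + 1) + 1 := by ring
    rw [h2, Finset.sum_range_succ, Finset.sum_range_succ, ih, Finset.sum_range_succ]
    have e1 : (2 * m + 1) / 2 = m := by omega
    have e2 : (2 * m) / 2 = m := by omega
    rw [e1, e2]; ring

lemma geom_series_k (r : ℝ) (h0 : 0 ≤ r) (h1 : r < 1) (m : ℕ) :
    ∑ j ∈ Finset.range m, (j : ℝ) * r ^ j ≤ r / (1 - r) ^ 2 := by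
  have hn : ‖r‖ < 1 := by rw [Real.norm_eq_abs, abs_of_nonneg h0]; exact h1
  have hs := hasSum_coe_mul_geometric_of_norm_lt_one hn
  rw [← hs.tsum_eq]
  exact hs.summable.sum_le_tsum _ (fun i _ => mul_nonneg (Nat.cast_nonneg i) (pow_nonneg h0 i))

lemma geom_series_0 (r : ℝ) (h0 : 0 ≤ r) (h1 : r < 1) (m : ℕ) :
    ∑ j ∈ Finset.range m, r ^ j ≤ 1 / (1 - r) := by
  have hs := hasSum_geometric_of_lt_one h0 h1
  rw [one_div, ← hs.tsum_eq]
  exact hs.summable.sum_le_tsum _ (fun i _ => pow_nonneg h0 i)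

lemma lemBC {α : ℝ} (hα : 1 < α) (m : ℕ) :
    ∑ k ∈ Finset.range m, (α ^ (2 * k) / α ^ (2 * m)) * (2 * (m : ℝ) - 2 * k)
      ≤ 2 * α ^ 2 / (α ^ 2 - 1) ^ 2 := by
  have hα0 : (0 : ℝ) < α := by linarith
  have hα2 : (1 : ℝ) < α ^ 2 := by nlinarith
  set r : ℝ := (α ^ 2)⁻¹ with hr
  have hr0 : 0 ≤ r := by positivity
  have hr1 : r < 1 := by
    rw [hr]
    rw [inv_lt_one_iff₀]
    right; exact hα2
  have hrefl := Finset.sum_range_reflect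
    (fun k => (α ^ (2 * k) / α ^ (2 * m)) * (2 * (m : ℝ) - 2 * k)) m
  rw [← hrefl]
  have hterm : ∀ j ∈ Finset.range m,
      (α ^ (2 * (m - 1 - j)) / α ^ (2 * m)) * (2 * (m : ℝ) - 2 * ((m - 1 - j : ℕ) : ℝ))
      = 2 * (((j : ℝ) + 1) * r ^ (j + 1)) := by
    intro j hj
    rw [Finset.mem_range] at hj
    have h2 : 2 * (m - 1 - j) + 2 * (j + 1) = 2 * m := by omega
    have hpow : α ^ (2 * m) = α ^ (2 * (m - 1 - j)) * α ^ (2 * (j + 1)) := by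
      rw [← pow_add, h2]
    have hcast : ((m - 1 - j : ℕ) : ℝ) = (m : ℝ) - (j + 1) := by
      have h3 : (m - 1 - j : ℕ) = m - (j + 1) := by omega
      rw [h3, Nat.cast_sub (by omega)]
      push_cast; ring
    have hrpow : r ^ (j + 1) = (α ^ (2 * (j + 1)))⁻¹ := by
      rw [hr, inv_pow, ← pow_mul]
    have hne1 : α ^ (2 * (m - 1 - j)) ≠ 0 := by positivity
    have hne2 : α ^ (2 * (j + 1)) ≠ 0 := by positivity
    rw [hpow, hcast, hrpow]
    field_simp
    ring
  rw [Finset.sum_congr rfl hterm, ← Finset.mul_sum]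
  have hshift : ∑ j ∈ Finset.range m, ((j : ℝ) + 1) * r ^ (j + 1)
      = ∑ k ∈ Finset.range (m + 1), (k : ℝ) * r ^ k := by
    rw [Finset.sum_range_succ']
    push_cast
    simp
  rw [hshift]
  have hbound := geom_series_k r hr0 hr1 (m + 1)
  have hD : α ^ 2 - 1 ≠ 0 := by nlinarith
  have hident : r / (1 - r) ^ 2 = α ^ 2 / (α ^ 2 - 1) ^ 2 := by
    rw [hr]
    have hα2' : (α : ℝ) ^ 2 ≠ 0 := by positivity
    field_simp
  rw [hident] at hbound
  rw [mul_div_assoc]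
  linarith

lemma lemA {α : ℝ} (hα : 1 < α) (δ : ℝ) (hδ0 : 0 ≤ δ) (m : ℕ) :
    ∑ k ∈ Finset.range m, (α ^ (2 * k) / α ^ (2 * m + 1)) * (2 * (m : ℝ) - 2 * k - 2 + δ)
      ≤ 2 / (α * (α ^ 2 - 1) ^ 2) + δ / (α * (α ^ 2 - 1)) := by
  have hα0 : (0 : ℝ) < α := by linarith
  have hα2 : (1 : ℝ) < α ^ 2 := by nlinarith
  set r : ℝ := (α ^ 2)⁻¹ with hr
  have hr0 : 0 ≤ r := by positivity
  have hr1 : r < 1 := by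
    rw [hr, inv_lt_one_iff₀]; right; exact hα2
  have hrefl := Finset.sum_range_reflect
    (fun k => (α ^ (2 * k) / α ^ (2 * m + 1)) * (2 * (m : ℝ) - 2 * k - 2 + δ)) m
  rw [← hrefl]
  have hterm : ∀ j ∈ Finset.range m,
      (α ^ (2 * (m - 1 - j)) / α ^ (2 * m + 1)) * (2 * (m : ℝ) - 2 * ((m - 1 - j : ℕ) : ℝ) - 2 + δ)
      = (2 / α) * ((j : ℝ) * r ^ (j + 1)) + (δ / α) * r ^ (j + 1) := by
    intro j hj
    rw [Finset.mem_range] at hj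
    have h2 : 2 * (m - 1 - j) + (2 * (j + 1)) = 2 * m := by omega
    have hpow : α ^ (2 * m + 1) = α ^ (2 * (m - 1 - j)) * (α ^ (2 * (j + 1)) * α) := by
      rw [← pow_succ, ← pow_add]
      congr 1
      omega
    have hcast : ((m - 1 - j : ℕ) : ℝ) = (m : ℝ) - (j + 1) := by
      have h3 : (m - 1 - j : ℕ) = m - (j + 1) := by omega
      rw [h3, Nat.cast_sub (by omega)]
      push_cast; ring
    have hrpow : r ^ (j + 1) = (α ^ (2 * (j + 1)))⁻¹ := by
      rw [hr, inv_pow, ← pow_mul]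
    have hne1 : α ^ (2 * (m - 1 - j)) ≠ 0 := by positivity
    have hne2 : α ^ (2 * (j + 1)) ≠ 0 := by positivity
    rw [hpow, hcast, hrpow]
    field_simp
    ring
  rw [Finset.sum_congr rfl hterm, Finset.sum_add_distrib, ← Finset.mul_sum, ← Finset.mul_sum]
  have s1 : ∑ j ∈ Finset.range m, (j : ℝ) * r ^ (j + 1) ≤ r * (r / (1 - r) ^ 2) := by
    have : ∀ j ∈ Finset.range m, (j : ℝ) * r ^ (j + 1) = r * ((j : ℝ) * r ^ j) := by
      intro j _; rw [pow_succ]; ring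
    rw [Finset.sum_congr rfl this, ← Finset.mul_sum]
    exact mul_le_mul_of_nonneg_left (geom_series_k r hr0 hr1 m) hr0
  have s2 : ∑ j ∈ Finset.range m, r ^ (j + 1) ≤ r * (1 / (1 - r)) := by
    have : ∀ j ∈ Finset.range m, r ^ (j + 1) = r * r ^ j := by
      intro j _; rw [pow_succ]; ring
    rw [Finset.sum_congr rfl this, ← Finset.mul_sum]
    exact mul_le_mul_of_nonneg_left (geom_series_0 r hr0 hr1 m) hr0
  have hD : α ^ 2 - 1 ≠ 0 := by nlinarith
  have hα2' : (α : ℝ) ^ 2 ≠ 0 := by positivity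
  have hid : (2 / α) * (r * (r / (1 - r) ^ 2)) + (δ / α) * (r * (1 / (1 - r)))
      = 2 / (α * (α ^ 2 - 1) ^ 2) + δ / (α * (α ^ 2 - 1)) := by
    rw [hr]
    field_simp
  have h2a : 0 ≤ 2 / α := by positivity
  have hda : 0 ≤ δ / α := by positivity
  calc (2 / α) * (∑ j ∈ Finset.range m, (j : ℝ) * r ^ (j + 1))
        + (δ / α) * (∑ j ∈ Finset.range m, r ^ (j + 1))
      ≤ (2 / α) * (r * (r / (1 - r) ^ 2)) + (δ / α) * (r * (1 / (1 - r))) := by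
        gcongr
    _ = _ := hid



noncomputable def Ex {S : Type*} [Fintype S] (p : PMF S) (g : S → ℝ) : ℝ :=
  ∑ y, (p y).toReal * g y

lemma Ex_pure {S : Type*} [Fintype S] [DecidableEq S] (x : S) (g : S → ℝ) :
    Ex (PMF.pure x) g = g x := by
  unfold Ex
  rw [Finset.sum_eq_single x]
  · simp [PMF.pure_apply]
  · intro b _ hb
    simp [PMF.pure_apply, hb]
  · intro h
    exact absurd (Finset.mem_univ x) h

lemma Ex_bind {A S : Type*} [Fintype A] [Fintype S] (p : PMF A) (f : A → PMF S)
    (g : S → ℝ) : Ex (p.bind f) g = ∑ a, (p a).toReal * Ex (f a) g := by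
  unfold Ex
  have hb : ∀ y, ((p.bind f) y).toReal = ∑ a, ((p a).toReal * ((f a) y).toReal) := by
    intro y
    rw [PMF.bind_apply, tsum_fintype,
      ENNReal.toReal_sum (fun a _ => ENNReal.mul_ne_top (PMF.apply_ne_top p a)
        (PMF.apply_ne_top (f a) y))]
    simp [ENNReal.toReal_mul]
  simp_rw [hb, Finset.sum_mul]
  rw [Finset.sum_comm]
  refine Finset.sum_congr rfl fun a _ => ?_
  rw [Finset.mul_sum]
  exact Finset.sum_congr rfl fun y _ => by ring

lemma Ex_bern {S : Type*} [Fintype S] [DecidableEq S] (r : ℝ) (hr0 : 0 ≤ r)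
    (h : Real.toNNReal r ≤ 1) (a c : S) (g : S → ℝ) :
    Ex ((PMF.bernoulli (Real.toNNReal r) h).bind
        (fun b => PMF.pure (if b then a else c))) g
      = r * g a + (1 - r) * g c := by
  have hr1 : r ≤ 1 := by
    by_contra hcon
    push_neg at hcon
    rw [Real.toNNReal_le_one] at h
    linarith
  rw [Ex_bind, Fintype.sum_bool]
  simp only [if_true, if_false, Ex_pure]
  rw [PMF.bernoulli_apply, PMF.bernoulli_apply]
  simp only [cond]
  have h1 : ((Real.toNNReal r : NNReal) : ENNReal).toReal = r := by
    rw [ENNReal.coe_toReal, Real.coe_toNNReal _ hr0]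
  have h2 : (((1 : NNReal) - Real.toNNReal r : NNReal) : ENNReal).toReal = 1 - r := by
    rw [ENNReal.coe_toReal, NNReal.coe_sub h, Real.coe_toNNReal _ hr0, NNReal.coe_one]
  rw [h1, h2]
  simp

lemma Ex_metroStep (n : ℕ) [NeZero n] (α : ℝ) (hα0 : 0 < α) (x : Fin n → Bool)
    (g : (Fin n → Bool) → ℝ) :
    Ex (metroStep n α x) g = g x + (1 / n) * ∑ i : Fin n,
      (min 1 (α ^ ((DLB (Function.update x i (!(x i))) : ℤ) - (DLB x : ℤ)))) *
        (g (Function.update x i (!(x i))) - g x) := by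
  classical
  unfold metroStep
  rw [Ex_bind]
  have hterm : ∀ i : Fin n,
      ((PMF.uniformOfFintype (Fin n)) i).toReal *
        Ex ((PMF.bernoulli
            (Real.toNNReal (min 1
              (α ^ ((DLB (Function.update x i (!(x i))) : ℤ) - (DLB x : ℤ)))))
            (Real.toNNReal_le_one.mpr (min_le_left _ _))).bind
          (fun b => PMF.pure (if b then Function.update x i (!(x i)) else x))) g
      = (1 / n) * (g x +
          (min 1 (α ^ ((DLB (Function.update x i (!(x i))) : ℤ) - (DLB x : ℤ)))) *
            (g (Function.update x i (!(x i))) - g x)) := by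
    intro i
    have huni : ((PMF.uniformOfFintype (Fin n)) i).toReal = 1 / n := by
      rw [PMF.uniformOfFintype_apply, Fintype.card_fin]
      simp
    have hmin0 : 0 ≤ min 1 (α ^ ((DLB (Function.update x i (!(x i))) : ℤ) - (DLB x : ℤ))) :=
      le_min zero_le_one (le_of_lt (zpow_pos hα0 _))
    rw [huni, Ex_bern _ hmin0]
    ring
  rw [Finset.sum_congr rfl (fun i _ => hterm i), ← Finset.mul_sum, Finset.sum_add_distrib,
    Finset.sum_const, Finset.card_univ, Fintype.card_fin]
  have hn : (n : ℝ) ≠ 0 := Nat.cast_ne_zero.mpr (NeZero.ne n)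
  rw [mul_add]
  congr 1
  · rw [nsmul_eq_mul]
    field_simp

end MetroDLB

namespace MetroDLB

lemma min_one_zpow_neg {α : ℝ} (hα : 1 < α) {a b : ℕ} (hab : a < b) :
    min 1 (α ^ ((a : ℤ) - (b : ℤ))) = α ^ a / α ^ b := by
  have h0 : (0 : ℝ) < α := by linarith
  rw [zpow_sub₀ (ne_of_gt h0), zpow_natCast, zpow_natCast]
  exact min_eq_right (by
    rw [div_le_one (pow_pos h0 b)]
    exact pow_le_pow_right₀ (le_of_lt hα) (le_of_lt hab))

lemma min_one_zpow_pos {α : ℝ} (hα : 1 < α) {a b : ℕ} (hab : b ≤ a) :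
    min 1 (α ^ ((a : ℤ) - (b : ℤ))) = 1 := by
  have h0 : (0 : ℝ) < α := by linarith
  refine min_eq_left ?_
  rw [zpow_sub₀ (ne_of_gt h0), zpow_natCast, zpow_natCast, le_div_iff₀ (pow_pos h0 b),
    one_mul]
  exact pow_le_pow_right₀ (le_of_lt hα) hab

lemma sum_ge (n : ℕ) [NeZero n] {α δ : ℝ} (hα : 1 < α) (x : Fin n → Bool)
    {L : ℕ} (hL : L < n) (hLt : ∀ s, s < L → toNatFun x s = true)
    (hLf : toNatFun x L = false) (hn2 : 2 * (L / 2) + 2 ≤ n)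
    (hge : 2 * (L / 2) ≤ DLB x)
    (i0 i1 : Fin n) (hi0 : (i0 : ℕ) = 2 * (L / 2)) (hi1 : (i1 : ℕ) = 2 * (L / 2) + 1)
    (t0 t1 : ℝ)
    (h0 : t0 ≤ min 1 (α ^ ((DLB (Function.update x i0 (!(x i0))) : ℤ) - (DLB x : ℤ))) *
        (HLB δ (Function.update x i0 (!(x i0))) - HLB δ x))
    (h1 : t1 ≤ min 1 (α ^ ((DLB (Function.update x i1 (!(x i1))) : ℤ) - (DLB x : ℤ))) *
        (HLB δ (Function.update x i1 (!(x i1))) - HLB δ x)) :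
    2 * (∑ k ∈ Finset.range (L / 2),
        (α ^ (2 * k) / α ^ (DLB x)) * (2 * (k : ℝ) + 2 - δ - HLB δ x)) + t0 + t1
      ≤ ∑ i : Fin n,
        min 1 (α ^ ((DLB (Function.update x i (!(x i))) : ℤ) - (DLB x : ℤ))) *
          (HLB δ (Function.update x i (!(x i))) - HLB δ x) := by
  classical
  set m := L / 2 with hm
  set F : ℕ → ℝ := fun j => if h : j < n then
      min 1 (α ^ ((DLB (Function.update x ⟨j, h⟩ (!(x ⟨j, h⟩))) : ℤ) - (DLB x : ℤ))) *
        (HLB δ (Function.update x ⟨j, h⟩ (!(x ⟨j, h⟩))) - HLB δ x) else 0 with hF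
  have hconv : ∑ i : Fin n,
      min 1 (α ^ ((DLB (Function.update x i (!(x i))) : ℤ) - (DLB x : ℤ))) *
        (HLB δ (Function.update x i (!(x i))) - HLB δ x) = ∑ j ∈ Finset.range n, F j := by
    rw [← Fin.sum_univ_eq_sum_range F n]
    refine Finset.sum_congr rfl fun i _ => ?_
    rw [hF]
    simp only [i.isLt, dif_pos, Fin.eta]
  rw [hconv]
  have hsplit : ∑ j ∈ Finset.range n, F j
      = (∑ j ∈ Finset.range (2 * m + 2), F j) + ∑ j ∈ Finset.Ico (2 * m + 2) n, F j := by
    rw [Finset.range_eq_Ico, Finset.range_eq_Ico]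
    exact (Finset.sum_Ico_consecutive F (Nat.zero_le _) hn2).symm
  have hhigh : ∑ j ∈ Finset.Ico (2 * m + 2) n, F j = 0 := by
    refine Finset.sum_eq_zero fun j hj => ?_
    rw [Finset.mem_Ico] at hj
    rw [hF]
    simp only [hj.2, dif_pos]
    have hfh := flip_high δ x hL hLt hLf ⟨j, hj.2⟩ (by simpa using hj.1)
    rw [hfh.2]
    ring
  have hstep : ∑ j ∈ Finset.range (2 * m + 2), F j
      = ∑ j ∈ Finset.range (2 * m), F j + F (2 * m) + F (2 * m + 1) := by
    have e : 2 * m + 2 = (2 * m + 1) + 1 := by omega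
    rw [e, Finset.sum_range_succ, Finset.sum_range_succ]
  have hlead : ∀ j ∈ Finset.range (2 * m), F j =
      (fun k : ℕ => (α ^ (2 * k) / α ^ (DLB x)) * (2 * (k : ℝ) + 2 - δ - HLB δ x)) (j / 2) := by
    intro j hj
    rw [Finset.mem_range] at hj
    have hjn : j < n := by omega
    rw [hF]
    simp only [hjn, dif_pos]
    have hfl := flip_lead δ x hL hLt ⟨j, hjn⟩ (by simpa using hj)
    simp only [Fin.val_mk] at hfl
    rw [hfl.1, hfl.2, min_one_zpow_neg hα (show 2 * (j / 2) < DLB x by omega)]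
    push_cast
    ring
  have hF0 : t0 ≤ F (2 * m) := by
    rw [hF]
    have h2mn : 2 * m < n := by omega
    simp only [h2mn, dif_pos]
    have : i0 = ⟨2 * m, h2mn⟩ := Fin.ext (by rw [hi0])
    rw [← this]
    exact h0
  have hF1 : t1 ≤ F (2 * m + 1) := by
    rw [hF]
    have h2mn : 2 * m + 1 < n := by omega
    simp only [h2mn, dif_pos]
    have : i1 = ⟨2 * m + 1, h2mn⟩ := Fin.ext (by rw [hi1])
    rw [← this]
    exact h1
  have hlead2 : ∑ j ∈ Finset.range (2 * m), F j
      = 2 * ∑ k ∈ Finset.range m,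
          (α ^ (2 * k) / α ^ (DLB x)) * (2 * (k : ℝ) + 2 - δ - HLB δ x) := by
    rw [Finset.sum_congr rfl hlead]
    exact sum_div2 (fun k : ℕ => (α ^ (2 * k) / α ^ (DLB x)) * (2 * (k : ℝ) + 2 - δ - HLB δ x)) m
  rw [hsplit, hhigh, hstep, hlead2]
  linarith

end MetroDLB

namespace MetroDLB

lemma core_drift (n : ℕ) [NeZero n] (he : Even n) {α δ C : ℝ} (hα : 1 < α)
    (hδ0 : 0 ≤ δ) (hδ2 : δ ≤ 2)
    (hBC : C = 2 * δ - 2 - 2 * (2 * α ^ 2 / (α ^ 2 - 1) ^ 2))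
    (hA : C ≤ 2 * (2 - δ) / α - 2 * (2 / (α * (α ^ 2 - 1) ^ 2) + δ / (α * (α ^ 2 - 1))))
    (x : Fin n → Bool) (hx : x ≠ fun _ => true) :
    C ≤ ∑ i : Fin n,
      min 1 (α ^ ((DLB (Function.update x i (!(x i))) : ℤ) - (DLB x : ℤ))) *
        (HLB δ (Function.update x i (!(x i))) - HLB δ x) := by
  classical
  have hα0 : (0 : ℝ) < α := by linarith
  obtain ⟨L, hL, hLt, hLf⟩ := ne_opt_exists x hx
  obtain ⟨c, hc⟩ := he
  have hn2 : 2 * (L / 2) + 2 ≤ n := by omega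
  set m := L / 2 with hm
  have h2mn : 2 * m < n := by omega
  have h2m1n : 2 * m + 1 < n := by omega
  rcases Nat.even_or_odd L with hLe | hLo
  · -- L = 2m : critical block starts with a 0
    have hL2m : L = 2 * m := by obtain ⟨d, hd⟩ := hLe; omega
    have hLt' : ∀ s, s < 2 * m → toNatFun x s = true := by rw [← hL2m]; exact hLt
    have hxa : toNatFun x (2 * m) = false := by rw [← hL2m]; exact hLf
    have hxi0 : x ⟨2 * m, h2mn⟩ = false := by
      rw [← tnf_eq_true x ⟨2 * m, h2mn⟩]; exact hxa
    cases hxb : toNatFun x (2 * m + 1) with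
    | false =>
      -- Case A : 00 block, DLB x = 2m+1
      have hxi1 : x ⟨2 * m + 1, h2m1n⟩ = false := by
        rw [← tnf_eq_true x ⟨2 * m + 1, h2m1n⟩]; exact hxb
      have hev := eval_00 n m δ (toNatFun x) h2m1n hLt' hxa hxb
      have hdlb : DLB x = 2 * m + 1 := hev.1
      have hhlb : HLB δ x = ((2 * m : ℕ) : ℝ) := hev.2
      -- flip at 2m : gives 10 block
      have hf0 : DLB (Function.update x ⟨2 * m, h2mn⟩ (!(x ⟨2 * m, h2mn⟩))) = 2 * m ∧
          HLB δ (Function.update x ⟨2 * m, h2mn⟩ (!(x ⟨2 * m, h2mn⟩)))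
            = ((2 * m : ℕ) : ℝ) + 2 - δ := by
        apply eval_10 n m δ _ h2m1n
        · intro s hs
          rw [tnf_update_ne x _ _ (show s ≠ ((⟨2 * m, h2mn⟩ : Fin n) : ℕ) by
            simp only [Fin.val_mk]; omega)]
          exact hLt' s hs
        · have h := tnf_update_self x ⟨2 * m, h2mn⟩ (!(x ⟨2 * m, h2mn⟩))
          simp only [Fin.val_mk] at h
          rw [h, hxi0]
          rfl
        · rw [tnf_update_ne x _ _ (show (2 * m + 1 : ℕ) ≠ ((⟨2 * m, h2mn⟩ : Fin n) : ℕ) by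
            simp only [Fin.val_mk]; omega)]
          exact hxb
      -- flip at 2m+1 : gives 00 -> 01 block (block becomes 0,1)
      have hf1 : DLB (Function.update x ⟨2 * m + 1, h2m1n⟩ (!(x ⟨2 * m + 1, h2m1n⟩))) = 2 * m ∧
          HLB δ (Function.update x ⟨2 * m + 1, h2m1n⟩ (!(x ⟨2 * m + 1, h2m1n⟩)))
            = ((2 * m : ℕ) : ℝ) + 2 - δ := by
        apply eval_01 n m δ _ h2m1n
        · intro s hs
          rw [tnf_update_ne x _ _ (show s ≠ ((⟨2 * m + 1, h2m1n⟩ : Fin n) : ℕ) by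
            simp only [Fin.val_mk]; omega)]
          exact hLt' s hs
        · rw [tnf_update_ne x _ _ (show (2 * m : ℕ) ≠ ((⟨2 * m + 1, h2m1n⟩ : Fin n) : ℕ) by
            simp only [Fin.val_mk]; omega)]
          exact hxa
        · have h := tnf_update_self x ⟨2 * m + 1, h2m1n⟩ (!(x ⟨2 * m + 1, h2m1n⟩))
          simp only [Fin.val_mk] at h
          rw [h, hxi1]
          rfl
      have hne : α ^ (2 * m) ≠ 0 := by positivity
      have h0 : (2 - δ) / α ≤
          min 1 (α ^ ((DLB (Function.update x ⟨2 * m, h2mn⟩ (!(x ⟨2 * m, h2mn⟩))) : ℤ)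
            - (DLB x : ℤ))) *
          (HLB δ (Function.update x ⟨2 * m, h2mn⟩ (!(x ⟨2 * m, h2mn⟩))) - HLB δ x) := by
        rw [hf0.1, hf0.2, hdlb, hhlb, min_one_zpow_neg hα (by omega : 2 * m < 2 * m + 1)]
        have heq : α ^ (2 * m) / α ^ (2 * m + 1) * (((2 * m : ℕ) : ℝ) + 2 - δ - ((2 * m : ℕ) : ℝ))
            = (2 - δ) / α := by
          rw [pow_succ]
          field_simp
          ring
        rw [heq]
      have h1 : (2 - δ) / α ≤
          min 1 (α ^ ((DLB (Function.update x ⟨2 * m + 1, h2m1n⟩ (!(x ⟨2 * m + 1, h2m1n⟩))) : ℤ)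
            - (DLB x : ℤ))) *
          (HLB δ (Function.update x ⟨2 * m + 1, h2m1n⟩ (!(x ⟨2 * m + 1, h2m1n⟩))) - HLB δ x) := by
        rw [hf1.1, hf1.2, hdlb, hhlb, min_one_zpow_neg hα (by omega : 2 * m < 2 * m + 1)]
        have heq : α ^ (2 * m) / α ^ (2 * m + 1) * (((2 * m : ℕ) : ℝ) + 2 - δ - ((2 * m : ℕ) : ℝ))
            = (2 - δ) / α := by
          rw [pow_succ]
          field_simp
          ring
        rw [heq]
      refine le_trans ?_ (sum_ge n hα x hL hLt hLf hn2 (by rw [hdlb]; omega)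
        ⟨2 * m, h2mn⟩ ⟨2 * m + 1, h2m1n⟩ rfl rfl _ _ h0 h1)
      rw [hdlb, hhlb]
      have hS := lemA hα δ hδ0 m
      have hneg : ∑ k ∈ Finset.range m,
          (α ^ (2 * k) / α ^ (2 * m + 1)) * (2 * (k : ℝ) + 2 - δ - ((2 * m : ℕ) : ℝ))
          = -∑ k ∈ Finset.range m,
            (α ^ (2 * k) / α ^ (2 * m + 1)) * (2 * (m : ℝ) - 2 * k - 2 + δ) := by
        rw [← Finset.sum_neg_distrib]
        refine Finset.sum_congr rfl fun k _ => ?_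
        push_cast
        ring
      rw [hneg]
      have h2d : 2 * (2 - δ) / α = (2 - δ) / α + (2 - δ) / α := by ring
      linarith
    | true =>
      -- Case B : 01 block, DLB x = 2m
      have hxi1 : x ⟨2 * m + 1, h2m1n⟩ = true := by
        rw [← tnf_eq_true x ⟨2 * m + 1, h2m1n⟩]; exact hxb
      have hev := eval_01 n m δ (toNatFun x) h2m1n hLt' hxa hxb
      have hdlb : DLB x = 2 * m := hev.1
      have hhlb : HLB δ x = ((2 * m : ℕ) : ℝ) + 2 - δ := hev.2
      -- flip at 2m : block becomes 11, gain
      have hf0 : 2 * m + 2 ≤ DLB (Function.update x ⟨2 * m, h2mn⟩ (!(x ⟨2 * m, h2mn⟩))) ∧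
          ((2 * m : ℝ) + 2) ≤
            HLB δ (Function.update x ⟨2 * m, h2mn⟩ (!(x ⟨2 * m, h2mn⟩))) := by
        apply eval_ge n m δ _ hn2 hδ2
        intro s hs
        rcases Nat.lt_or_ge s (2 * m) with h' | h'
        · rw [tnf_update_ne x _ _ (show s ≠ ((⟨2 * m, h2mn⟩ : Fin n) : ℕ) by
            simp only [Fin.val_mk]; omega)]
          exact hLt' s h'
        · rcases Nat.lt_or_ge s (2 * m + 1) with h'' | h''
          · have hs2m : s = 2 * m := by omega
            rw [hs2m]
            have h := tnf_update_self x ⟨2 * m, h2mn⟩ (!(x ⟨2 * m, h2mn⟩))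
            simp only [Fin.val_mk] at h
            rw [h, hxi0]
            rfl
          · have hs2m1 : s = 2 * m + 1 := by omega
            rw [tnf_update_ne x _ _ (show s ≠ ((⟨2 * m, h2mn⟩ : Fin n) : ℕ) by
              simp only [Fin.val_mk]; omega), hs2m1]
            exact hxb
      -- flip at 2m+1 : block becomes 00, deceiving accepted move
      have hf1 : DLB (Function.update x ⟨2 * m + 1, h2m1n⟩ (!(x ⟨2 * m + 1, h2m1n⟩))) = 2 * m + 1 ∧
          HLB δ (Function.update x ⟨2 * m + 1, h2m1n⟩ (!(x ⟨2 * m + 1, h2m1n⟩)))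
            = ((2 * m : ℕ) : ℝ) := by
        apply eval_00 n m δ _ h2m1n
        · intro s hs
          rw [tnf_update_ne x _ _ (show s ≠ ((⟨2 * m + 1, h2m1n⟩ : Fin n) : ℕ) by
            simp only [Fin.val_mk]; omega)]
          exact hLt' s hs
        · rw [tnf_update_ne x _ _ (show (2 * m : ℕ) ≠ ((⟨2 * m + 1, h2m1n⟩ : Fin n) : ℕ) by
            simp only [Fin.val_mk]; omega)]
          exact hxa
        · have h := tnf_update_self x ⟨2 * m + 1, h2m1n⟩ (!(x ⟨2 * m + 1, h2m1n⟩))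
          simp only [Fin.val_mk] at h
          rw [h, hxi1]
          rfl
      have h0 : δ ≤
          min 1 (α ^ ((DLB (Function.update x ⟨2 * m, h2mn⟩ (!(x ⟨2 * m, h2mn⟩))) : ℤ)
            - (DLB x : ℤ))) *
          (HLB δ (Function.update x ⟨2 * m, h2mn⟩ (!(x ⟨2 * m, h2mn⟩))) - HLB δ x) := by
        rw [hdlb, hhlb, min_one_zpow_pos hα (by omega : 2 * m ≤
          DLB (Function.update x ⟨2 * m, h2mn⟩ (!(x ⟨2 * m, h2mn⟩)))), one_mul]
        have := hf0.2
        push_cast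
        push_cast at this
        linarith
      have h1 : δ - 2 ≤
          min 1 (α ^ ((DLB (Function.update x ⟨2 * m + 1, h2m1n⟩ (!(x ⟨2 * m + 1, h2m1n⟩))) : ℤ)
            - (DLB x : ℤ))) *
          (HLB δ (Function.update x ⟨2 * m + 1, h2m1n⟩ (!(x ⟨2 * m + 1, h2m1n⟩))) - HLB δ x) := by
        rw [hf1.1, hf1.2, hdlb, hhlb, min_one_zpow_pos hα (by omega : 2 * m ≤ 2 * m + 1),
          one_mul]
        linarith
      refine le_trans ?_ (sum_ge n hα x hL hLt hLf hn2 (by rw [hdlb]) ⟨2 * m, h2mn⟩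
        ⟨2 * m + 1, h2m1n⟩ rfl rfl _ _ h0 h1)
      rw [hdlb, hhlb]
      have hS := lemBC hα m
      have hneg : ∑ k ∈ Finset.range m,
          (α ^ (2 * k) / α ^ (2 * m)) * (2 * (k : ℝ) + 2 - δ - (((2 * m : ℕ) : ℝ) + 2 - δ))
          = -∑ k ∈ Finset.range m,
            (α ^ (2 * k) / α ^ (2 * m)) * (2 * (m : ℝ) - 2 * k) := by
        rw [← Finset.sum_neg_distrib]
        refine Finset.sum_congr rfl fun k _ => ?_
        push_cast
        ring
      rw [hneg]
      linarith
  · -- L = 2m+1 : critical block is 10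
    have hL2m : L = 2 * m + 1 := by obtain ⟨d, hd⟩ := hLo; omega
    have hLt' : ∀ s, s < 2 * m → toNatFun x s = true := fun s hs => hLt s (by omega)
    have hxa : toNatFun x (2 * m) = true := hLt (2 * m) (by omega)
    have hxb : toNatFun x (2 * m + 1) = false := by rw [← hL2m]; exact hLf
    have hxi0 : x ⟨2 * m, h2mn⟩ = true := by
      rw [← tnf_eq_true x ⟨2 * m, h2mn⟩]; exact hxa
    have hxi1 : x ⟨2 * m + 1, h2m1n⟩ = false := by
      rw [← tnf_eq_true x ⟨2 * m + 1, h2m1n⟩]; exact hxb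
    have hev := eval_10 n m δ (toNatFun x) h2m1n hLt' hxa hxb
    have hdlb : DLB x = 2 * m := hev.1
    have hhlb : HLB δ x = ((2 * m : ℕ) : ℝ) + 2 - δ := hev.2
    -- flip at 2m : block becomes 00
    have hf0 : DLB (Function.update x ⟨2 * m, h2mn⟩ (!(x ⟨2 * m, h2mn⟩))) = 2 * m + 1 ∧
        HLB δ (Function.update x ⟨2 * m, h2mn⟩ (!(x ⟨2 * m, h2mn⟩)))
          = ((2 * m : ℕ) : ℝ) := by
      apply eval_00 n m δ _ h2m1n
      · intro s hs
        rw [tnf_update_ne x _ _ (show s ≠ ((⟨2 * m, h2mn⟩ : Fin n) : ℕ) by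
          simp only [Fin.val_mk]; omega)]
        exact hLt' s hs
      · have h := tnf_update_self x ⟨2 * m, h2mn⟩ (!(x ⟨2 * m, h2mn⟩))
        simp only [Fin.val_mk] at h
        rw [h, hxi0]
        rfl
      · rw [tnf_update_ne x _ _ (show (2 * m + 1 : ℕ) ≠ ((⟨2 * m, h2mn⟩ : Fin n) : ℕ) by
          simp only [Fin.val_mk]; omega)]
        exact hxb
    -- flip at 2m+1 : block becomes 11, gain
    have hf1 : 2 * m + 2 ≤ DLB (Function.update x ⟨2 * m + 1, h2m1n⟩ (!(x ⟨2 * m + 1, h2m1n⟩))) ∧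
        ((2 * m : ℝ) + 2) ≤
          HLB δ (Function.update x ⟨2 * m + 1, h2m1n⟩ (!(x ⟨2 * m + 1, h2m1n⟩))) := by
      apply eval_ge n m δ _ hn2 hδ2
      intro s hs
      rcases Nat.lt_or_ge s (2 * m + 1) with h' | h'
      · rw [tnf_update_ne x _ _ (show s ≠ ((⟨2 * m + 1, h2m1n⟩ : Fin n) : ℕ) by
          simp only [Fin.val_mk]; omega)]
        exact hLt s (by omega)
      · have hs2m1 : s = 2 * m + 1 := by omega
        rw [hs2m1]
        have h := tnf_update_self x ⟨2 * m + 1, h2m1n⟩ (!(x ⟨2 * m + 1, h2m1n⟩))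
        simp only [Fin.val_mk] at h
        rw [h, hxi1]
        rfl
    have h0 : δ - 2 ≤
        min 1 (α ^ ((DLB (Function.update x ⟨2 * m, h2mn⟩ (!(x ⟨2 * m, h2mn⟩))) : ℤ)
          - (DLB x : ℤ))) *
        (HLB δ (Function.update x ⟨2 * m, h2mn⟩ (!(x ⟨2 * m, h2mn⟩))) - HLB δ x) := by
      rw [hf0.1, hf0.2, hdlb, hhlb, min_one_zpow_pos hα (by omega : 2 * m ≤ 2 * m + 1),
        one_mul]
      linarith
    have h1 : δ ≤
        min 1 (α ^ ((DLB (Function.update x ⟨2 * m + 1, h2m1n⟩ (!(x ⟨2 * m + 1, h2m1n⟩))) : ℤ)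
          - (DLB x : ℤ))) *
        (HLB δ (Function.update x ⟨2 * m + 1, h2m1n⟩ (!(x ⟨2 * m + 1, h2m1n⟩))) - HLB δ x) := by
      rw [hdlb, hhlb, min_one_zpow_pos hα (by omega : 2 * m ≤
        DLB (Function.update x ⟨2 * m + 1, h2m1n⟩ (!(x ⟨2 * m + 1, h2m1n⟩)))), one_mul]
      have := hf1.2
      push_cast
      push_cast at this
      linarith
    refine le_trans ?_ (sum_ge n hα x hL hLt hLf hn2 (by rw [hdlb]) ⟨2 * m, h2mn⟩
      ⟨2 * m + 1, h2m1n⟩ rfl rfl _ _ h0 h1)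
    rw [hdlb, hhlb]
    have hS := lemBC hα m
    have hneg : ∑ k ∈ Finset.range m,
        (α ^ (2 * k) / α ^ (2 * m)) * (2 * (k : ℝ) + 2 - δ - (((2 * m : ℕ) : ℝ) + 2 - δ))
        = -∑ k ∈ Finset.range m,
          (α ^ (2 * k) / α ^ (2 * m)) * (2 * (m : ℝ) - 2 * k) := by
      rw [← Finset.sum_neg_distrib]
      refine Finset.sum_congr rfl fun k _ => ?_
      push_cast
      ring
    rw [hneg]
    linarith

end MetroDLB

namespace MetroDLB

lemma numeric {α : ℝ} (hα : Real.sqrt 2 + 1 < α) :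
    ∃ δ : ℝ, 0 ≤ δ ∧ δ ≤ 2 ∧ 0 < (α ^ 4 - 6 * α ^ 2 + 1) / (α * (α ^ 2 - 1) ^ 2) ∧
      (α ^ 4 - 6 * α ^ 2 + 1) / (α * (α ^ 2 - 1) ^ 2)
        = 2 * δ - 2 - 2 * (2 * α ^ 2 / (α ^ 2 - 1) ^ 2) ∧
      (α ^ 4 - 6 * α ^ 2 + 1) / (α * (α ^ 2 - 1) ^ 2)
        ≤ 2 * (2 - δ) / α - 2 * (2 / (α * (α ^ 2 - 1) ^ 2) + δ / (α * (α ^ 2 - 1))) := by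
  have hs : Real.sqrt 2 ^ 2 = 2 := Real.sq_sqrt (by norm_num)
  have hs0 : 0 ≤ Real.sqrt 2 := Real.sqrt_nonneg 2
  have hs14 : (1.4 : ℝ) < Real.sqrt 2 := by nlinarith
  have hα2 : 2 < α := by linarith
  have hα1 : 1 < α := by linarith
  have hα0 : (0 : ℝ) < α := by linarith
  have hq : 0 < α ^ 2 - 2 * α - 1 := by nlinarith
  have hD : 0 < α ^ 2 - 1 := by nlinarith
  have hN : 0 < α ^ 4 - 6 * α ^ 2 + 1 := by
    nlinarith [mul_pos hq (show 0 < α ^ 2 + 2 * α - 1 by nlinarith)]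
  have hC : 0 < (α ^ 4 - 6 * α ^ 2 + 1) / (α * (α ^ 2 - 1) ^ 2) :=
    div_pos hN (by positivity)
  refine ⟨1 + 2 * α ^ 2 / (α ^ 2 - 1) ^ 2
      + (α ^ 4 - 6 * α ^ 2 + 1) / (α * (α ^ 2 - 1) ^ 2) / 2, ?_, ?_, hC, by ring, ?_⟩
  · have h1 : 0 ≤ 2 * α ^ 2 / (α ^ 2 - 1) ^ 2 := by positivity
    linarith
  case _ =>
    -- the polynomial inequality : δ + (α²-1)/(2α²) ≤ 2
    have hP : 0 ≤ α ^ 6 - α ^ 5 - 5 * α ^ 4 + 6 * α ^ 3 - α ^ 2 - α + 1 := by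
      nlinarith [mul_nonneg hq.le (show 0 ≤ α ^ 4 + α ^ 3 - 2 * α ^ 2 + 3 * α + 3 by
        nlinarith)]
    have hid : 2 - (1 + 2 * α ^ 2 / (α ^ 2 - 1) ^ 2
        + (α ^ 4 - 6 * α ^ 2 + 1) / (α * (α ^ 2 - 1) ^ 2) / 2) - (α ^ 2 - 1) / (2 * α ^ 2)
        = (α ^ 6 - α ^ 5 - 5 * α ^ 4 + 6 * α ^ 3 - α ^ 2 - α + 1)
            / (2 * α ^ 2 * (α ^ 2 - 1) ^ 2) := by
      have hDne : α ^ 2 - 1 ≠ 0 := ne_of_gt hD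
      have hαne : α ≠ 0 := ne_of_gt hα0
      field_simp
      ring
    have hd2 : 0 ≤ (α ^ 6 - α ^ 5 - 5 * α ^ 4 + 6 * α ^ 3 - α ^ 2 - α + 1)
        / (2 * α ^ 2 * (α ^ 2 - 1) ^ 2) := div_nonneg hP (by positivity)
    have hd3 : 0 < (α ^ 2 - 1) / (2 * α ^ 2) := by positivity
    linarith
  case _ =>
    have hP : 0 ≤ α ^ 6 - α ^ 5 - 5 * α ^ 4 + 6 * α ^ 3 - α ^ 2 - α + 1 := by
      nlinarith [mul_nonneg hq.le (show 0 ≤ α ^ 4 + α ^ 3 - 2 * α ^ 2 + 3 * α + 3 by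
        nlinarith)]
    have hDne : α ^ 2 - 1 ≠ 0 := ne_of_gt hD
    have hαne : α ≠ 0 := ne_of_gt hα0
    have hid : 2 - (1 + 2 * α ^ 2 / (α ^ 2 - 1) ^ 2
        + (α ^ 4 - 6 * α ^ 2 + 1) / (α * (α ^ 2 - 1) ^ 2) / 2) - (α ^ 2 - 1) / (2 * α ^ 2)
        = (α ^ 6 - α ^ 5 - 5 * α ^ 4 + 6 * α ^ 3 - α ^ 2 - α + 1)
            / (2 * α ^ 2 * (α ^ 2 - 1) ^ 2) := by
      field_simp
      ring
    have h4 : (α ^ 2 - 1) / (2 * α ^ 2) ≤ 2 - (1 + 2 * α ^ 2 / (α ^ 2 - 1) ^ 2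
        + (α ^ 4 - 6 * α ^ 2 + 1) / (α * (α ^ 2 - 1) ^ 2) / 2) := by
      have hd2 : 0 ≤ (α ^ 6 - α ^ 5 - 5 * α ^ 4 + 6 * α ^ 3 - α ^ 2 - α + 1)
          / (2 * α ^ 2 * (α ^ 2 - 1) ^ 2) := div_nonneg hP (by positivity)
      linarith
    -- identity : RHS - C = (2α/D) * ((2 - δ) - D/(2α²))
    set δ : ℝ := 1 + 2 * α ^ 2 / (α ^ 2 - 1) ^ 2
        + (α ^ 4 - 6 * α ^ 2 + 1) / (α * (α ^ 2 - 1) ^ 2) / 2 with hδdef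
    have hid2 : 2 * (2 - δ) / α - 2 * (2 / (α * (α ^ 2 - 1) ^ 2) + δ / (α * (α ^ 2 - 1)))
        - (α ^ 4 - 6 * α ^ 2 + 1) / (α * (α ^ 2 - 1) ^ 2)
        = (2 * α / (α ^ 2 - 1)) * ((2 - δ) - (α ^ 2 - 1) / (2 * α ^ 2)) := by
      rw [hδdef]
      field_simp
      ring
    have hpos : 0 ≤ (2 * α / (α ^ 2 - 1)) * ((2 - δ) - (α ^ 2 - 1) / (2 * α ^ 2)) :=
      mul_nonneg (by positivity) (by linarith)
    linarith

end MetroDLB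

namespace MetroDLB

lemma drift_step (n : ℕ) [NeZero n] (he : Even n) {α δ C : ℝ} (hα : 1 < α)
    (hδ0 : 0 ≤ δ) (hδ2 : δ ≤ 2)
    (hBC : C = 2 * δ - 2 - 2 * (2 * α ^ 2 / (α ^ 2 - 1) ^ 2))
    (hA : C ≤ 2 * (2 - δ) / α - 2 * (2 / (α * (α ^ 2 - 1) ^ 2) + δ / (α * (α ^ 2 - 1))))
    (y : Fin n → Bool) :
    Ex (if y = (fun _ => true) then PMF.pure y else metroStep n α y)
        (fun z => (n : ℝ) - HLB δ z)
      ≤ ((n : ℝ) - HLB δ y) - (C / n) * (if y = (fun _ => true) then 0 else 1) := by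
  classical
  have hα0 : (0 : ℝ) < α := by linarith
  by_cases hy : y = (fun _ => true)
  · rw [if_pos hy, if_pos hy, Ex_pure]
    simp
  · rw [if_neg hy, if_neg hy]
    have hEx := Ex_metroStep n α hα0 y (fun z => (n : ℝ) - HLB δ z)
    have hcore := core_drift n he hα hδ0 hδ2 hBC hA y hy
    have hsum : ∑ i : Fin n,
        min 1 (α ^ ((DLB (Function.update y i (!(y i))) : ℤ) - (DLB y : ℤ))) *
          (((n : ℝ) - HLB δ (Function.update y i (!(y i)))) - ((n : ℝ) - HLB δ y))
        = -∑ i : Fin n,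
          min 1 (α ^ ((DLB (Function.update y i (!(y i))) : ℤ) - (DLB y : ℤ))) *
            (HLB δ (Function.update y i (!(y i))) - HLB δ y) := by
      rw [← Finset.sum_neg_distrib]
      exact Finset.sum_congr rfl fun i _ => by ring
    rw [hEx, hsum]
    have hn0 : (0 : ℝ) < n := by
      have := NeZero.pos n
      exact_mod_cast this
    have hmul := mul_le_mul_of_nonneg_left hcore (le_of_lt (one_div_pos.mpr hn0))
    have heq : C / (n : ℝ) = (1 / n) * C := by ring
    linarith

end MetroDLB


open MetroDLB

/-- **Runtime of the Metropolis algorithm on DLB.** Let `n` be an even positive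
integer and `α > √2 + 1`. Consider the Metropolis Markov chain on `{0,1}^n`
maximizing `DLB`. From any initial state, the expected number of steps until the
chain first reaches the optimum `(1,…,1)` is at most `n²/C(α)`, where
`C(α) = (α⁴ - 6α² + 1)/(α(α² - 1)²) > 0`. The expected hitting time is expressed
as `Σ_{t≥0} Pr[T > t]`, using the chain absorbed at the optimum (which has the
same first hitting time): `Pr[T > t]` is the probability that the absorbed chain
is not at the optimum at time `t`. -/
theorem metropolis_runtime_on_DLB (n : ℕ) [NeZero n] (he : Even n)
    (α : ℝ) (hα : Real.sqrt 2 + 1 < α) (x0 : Fin n → Bool) :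
    0 < (α ^ 4 - 6 * α ^ 2 + 1) / (α * (α ^ 2 - 1) ^ 2) ∧
    ∑' t : ℕ,
        (1 - iterStep
          (fun x => if x = (fun _ => true) then PMF.pure x else metroStep n α x)
          t x0 (fun _ => true))
      ≤ ENNReal.ofReal
          ((n : ℝ) ^ 2 / ((α ^ 4 - 6 * α ^ 2 + 1) / (α * (α ^ 2 - 1) ^ 2))) := by
  classical
  obtain ⟨δ, hδ0, hδ2, hC, hBC, hA⟩ := numeric hα
  have hs0 : 0 ≤ Real.sqrt 2 := Real.sqrt_nonneg 2
  have hα1 : 1 < α := by linarith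
  refine ⟨hC, ?_⟩
  set C : ℝ := (α ^ 4 - 6 * α ^ 2 + 1) / (α * (α ^ 2 - 1) ^ 2) with hCdef
  set opt : Fin n → Bool := fun _ => true with hopt
  set step' : (Fin n → Bool) → PMF (Fin n → Bool) :=
    fun x => if x = opt then PMF.pure x else metroStep n α x with hstep'
  set q : ℕ → PMF (Fin n → Bool) := fun t => iterStep step' t x0 with hq
  set g : (Fin n → Bool) → ℝ := fun z => (n : ℝ) - HLB δ z with hg
  set r : ℕ → ℝ := fun t => 1 - ((q t) opt).toReal with hr
  have hn0 : (0 : ℝ) < n := by exact_mod_cast NeZero.pos n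
  -- bounds on g
  have hgb : ∀ z, 0 ≤ g z ∧ g z ≤ n := by
    intro z
    have := HLBn_bounds n δ (toNatFun z) hδ0 hδ2 he
    constructor
    · simp only [hg]
      have h2 := this.2
      unfold HLB
      linarith
    · simp only [hg]
      have h1 := this.1
      unfold HLB
      linarith
  -- potential
  set Φ : ℕ → ℝ := fun t => Ex (q t) g with hΦ
  have hΦ0 : Φ 0 = g x0 := by
    simp only [hΦ, hq]
    show Ex (PMF.pure x0) g = g x0
    exact Ex_pure x0 g
  have hΦnonneg : ∀ t, 0 ≤ Φ t := by
    intro t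
    refine Finset.sum_nonneg fun z _ => ?_
    exact mul_nonneg ENNReal.toReal_nonneg (hgb z).1
  have hsum1 : ∀ t, ∑ z, ((q t) z).toReal = 1 := by
    intro t
    have h1 := (q t).tsum_coe
    rw [tsum_fintype] at h1
    have h2 := congrArg ENNReal.toReal h1
    rw [ENNReal.toReal_sum (fun z _ => PMF.apply_ne_top _ z)] at h2
    simpa using h2
  have hstep : ∀ t, Φ (t + 1) ≤ Φ t - (C / n) * r t := by
    intro t
    have hq1 : q (t + 1) = (q t).bind step' := rfl
    have hb : Φ (t + 1) = ∑ z, ((q t) z).toReal * Ex (step' z) g := by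
      show Ex ((q t).bind step') g = _
      exact Ex_bind _ _ _
    rw [hb]
    have hle : ∑ z, ((q t) z).toReal * Ex (step' z) g
        ≤ ∑ z, ((q t) z).toReal * (g z - (C / n) * (if z = opt then 0 else 1)) := by
      refine Finset.sum_le_sum fun z _ => ?_
      refine mul_le_mul_of_nonneg_left ?_ ENNReal.toReal_nonneg
      exact drift_step n he hα1 hδ0 hδ2 hBC hA z
    refine le_trans hle ?_
    have hexp : ∑ z, ((q t) z).toReal * (g z - (C / n) * (if z = opt then 0 else 1))
        = (∑ z, ((q t) z).toReal * g z)
          - (C / n) * ∑ z, ((q t) z).toReal * (if z = opt then 0 else 1) := by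
      rw [Finset.mul_sum, ← Finset.sum_sub_distrib]
      exact Finset.sum_congr rfl fun z _ => by ring
    rw [hexp]
    have hesum : ∑ z, ((q t) z).toReal * (if z = opt then 0 else 1) = r t := by
      have hterm : ∀ z, ((q t) z).toReal * (if z = opt then 0 else 1)
          = ((q t) z).toReal - (if z = opt then ((q t) z).toReal else 0) := by
        intro z
        by_cases hz : z = opt <;> simp [hz]
      rw [Finset.sum_congr rfl fun z _ => hterm z, Finset.sum_sub_distrib, hsum1 t,
        Finset.sum_ite_eq' Finset.univ opt (fun z => ((q t) z).toReal),
        if_pos (Finset.mem_univ opt)]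
    rw [hesum]
    exact le_refl _
  have hind : ∀ T, Φ T + (C / n) * ∑ t ∈ Finset.range T, r t ≤ Φ 0 := by
    intro T
    induction T with
    | zero => simp
    | succ T ih =>
      rw [Finset.sum_range_succ, mul_add]
      have := hstep T
      linarith
  have hRbound : ∀ T, ∑ t ∈ Finset.range T, r t ≤ (n : ℝ) ^ 2 / C := by
    intro T
    have h1 := hind T
    have h2 := hΦnonneg T
    have h3 : Φ 0 ≤ n := by rw [hΦ0]; exact (hgb x0).2
    have h4 : (C / n) * ∑ t ∈ Finset.range T, r t ≤ n := by linarith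
    rw [le_div_iff₀ hC]
    have h5 : (∑ t ∈ Finset.range T, r t) * C = (n : ℝ) * ((C / n) * ∑ t ∈ Finset.range T, r t) := by
      field_simp
    rw [h5]
    calc (n : ℝ) * ((C / n) * ∑ t ∈ Finset.range T, r t) ≤ (n : ℝ) * n :=
          mul_le_mul_of_nonneg_left h4 (le_of_lt hn0)
      _ = (n : ℝ) ^ 2 := by ring
  have hrn : ∀ t, 0 ≤ r t := by
    intro t
    have h1 : ((q t) opt) ≤ 1 := PMF.coe_le_one _ _
    have h2 : ((q t) opt).toReal ≤ 1 := by
      have := ENNReal.toReal_mono (by norm_num : (1 : ENNReal) ≠ ⊤) h1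
      simpa using this
    simp only [hr]
    linarith
  have hterm : ∀ t, (1 : ENNReal) - (q t) opt = ENNReal.ofReal (r t) := by
    intro t
    have hne : (q t) opt ≠ ⊤ := PMF.apply_ne_top _ _
    conv_lhs => rw [← ENNReal.ofReal_toReal hne, ← ENNReal.ofReal_one]
    rw [← ENNReal.ofReal_sub _ ENNReal.toReal_nonneg]
  calc ∑' t : ℕ, ((1 : ENNReal) - (q t) opt)
      = ∑' t : ℕ, ENNReal.ofReal (r t) := tsum_congr hterm
    _ ≤ ENNReal.ofReal ((n : ℝ) ^ 2 / C) := by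
        rw [ENNReal.tsum_eq_iSup_sum]
        refine iSup_le fun F => ?_
        have hsub : F ⊆ Finset.range (F.sup id + 1) := by
          intro t ht
          rw [Finset.mem_range]
          exact Nat.lt_succ_of_le (Finset.le_sup (f := id) ht)
        calc ∑ t ∈ F, ENNReal.ofReal (r t)
            ≤ ∑ t ∈ Finset.range (F.sup id + 1), ENNReal.ofReal (r t) :=
              Finset.sum_le_sum_of_subset hsub
          _ = ENNReal.ofReal (∑ t ∈ Finset.range (F.sup id + 1), r t) :=
              (ENNReal.ofReal_sum_of_nonneg fun t _ => hrn t).symm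
          _ ≤ ENNReal.ofReal ((n : ℝ) ^ 2 / C) :=
              ENNReal.ofReal_le_ofReal (hRbound _)
end
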